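/- arXiv:1904.03637 — 11 statements merged into one kernel-verified Lean document; each statement's English description precedes it below -/
import Mathlib

section
/- Let A be a countable well-ordered set with finite big Ramsey degrees, and fix integers n ≥ 1, m ≥ 1. For every subset τ ⊆ m with |τ| ≤ n, every k ≥ 2 and every coloring χ of the embeddings f : n ↪ A + m whose additive type is τ, there is a subset U ⊆ A order-isomorphic to A such that χ attains at most T(n − |τ|, A) colors on embeddings n ↪ U + m of additive type τ (with T(0, A) = 1 by convention). -/
open Set

/-- The big Ramsey degree of the `n`-element chain in the chain `C` is at most `t`:
for every `k ≥ 2` and every `k`-coloring of the `n`-element subchains of `C`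
(identified with order-embeddings `Fin n ↪o C`) there is a subset `U ⊆ C`
order-isomorphic to `C` on which the coloring attains at most `t` values. -/
def brdLE (C : Type*) [LinearOrder C] (n t : ℕ) : Prop :=
  ∀ k : ℕ, 2 ≤ k → ∀ χ : (Fin n ↪o C) → Fin k,
    ∃ U : Set C, Nonempty (U ≃o C) ∧ (χ '' {f | ∀ i, f i ∈ U}).ncard ≤ t

/-- `T(n, C) = t`: `t` is the least natural number with `brdLE C n t`. -/
def hasBRD (C : Type*) [LinearOrder C] (n t : ℕ) : Prop :=
  brdLE C n t ∧ ∀ s : ℕ, brdLE C n s → t ≤ s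

/-- `C` has finite big Ramsey degrees: `T(n, C) < ∞` for every `n ≥ 1`. -/
def finiteBRD (C : Type*) [LinearOrder C] : Prop :=
  ∀ n : ℕ, 1 ≤ n → ∃ t : ℕ, brdLE C n t


/-- The additive type of an embedding `f : n ↪ A + m` (with `A + m` realized as `A ⊕ₗ Fin m`):
the set of positions in the appended `m`-part hit by `f`. -/
def addTp {A : Type*} [LinearOrder A] {n m : ℕ} (f : Fin n ↪o (A ⊕ₗ Fin m)) : Set (Fin m) :=
  {j | ∃ i, f i = toLex (Sum.inr j)}

section Aux

variable {A : Type*} [LinearOrder A] {m s r n : ℕ}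

/-- Extend an embedding `Fin s ↪o A` to an embedding `Fin n ↪o A ⊕ₗ Fin m` (`n = s + r`)
by appending the embedding `σ : Fin r ↪o Fin m` on the top part. -/
def extFun (σ : Fin r ↪o Fin m) (g : Fin s ↪o A) (hn : n = s + r) (i : Fin n) : A ⊕ₗ Fin m :=
  if h : (i : ℕ) < s then toLex (Sum.inl (g ⟨i, h⟩))
  else toLex (Sum.inr (σ ⟨(i : ℕ) - s, by omega⟩))

lemma extFun_strictMono (σ : Fin r ↪o Fin m) (g : Fin s ↪o A) (hn : n = s + r) :
    StrictMono (extFun σ g hn) := by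
  intro i i' h
  have hii : (i : ℕ) < (i' : ℕ) := h
  unfold extFun
  split_ifs with h1 h2 h2
  · exact Sum.Lex.inl_lt_inl_iff.2 (g.strictMono (show ((⟨i, h1⟩ : Fin s)) < ⟨i', h2⟩ from hii))
  · exact Sum.Lex.inl_lt_inr _ _
  · exact absurd hii (by omega)
  · exact Sum.Lex.inr_lt_inr_iff.2 (σ.strictMono (show (⟨(i : ℕ) - s, _⟩ : Fin r) < ⟨(i' : ℕ) - s, _⟩ by
      simp only [Fin.mk_lt_mk]; omega))

/-- The extended embedding. -/
def extEmb (σ : Fin r ↪o Fin m) (g : Fin s ↪o A) (hn : n = s + r) : Fin n ↪o (A ⊕ₗ Fin m) :=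
  OrderEmbedding.ofStrictMono _ (extFun_strictMono σ g hn)

lemma addTp_extEmb (σ : Fin r ↪o Fin m) (g : Fin s ↪o A) (hn : n = s + r) :
    addTp (extEmb σ g hn) = Set.range σ := by
  ext j
  constructor
  · rintro ⟨i, hi⟩
    have hi' : extFun σ g hn i = toLex (Sum.inr j) := hi
    unfold extFun at hi'
    split_ifs at hi' with h1
    · exact absurd (toLex.injective hi') (by simp)
    · exact ⟨_, Sum.inr.inj (toLex.injective hi')⟩
  · rintro ⟨t, rfl⟩
    refine ⟨⟨s + t, by omega⟩, ?_⟩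
    show extFun σ g hn _ = _
    unfold extFun
    rw [dif_neg (by simp)]
    congr 2
    ext
    simp

lemma exists_extEmb (hm : 1 ≤ m) (hn : n = s + r) (σ : Fin r ↪o Fin m)
    (f : Fin n ↪o (A ⊕ₗ Fin m)) (hf : addTp f = Set.range σ) :
    ∃ g : Fin s ↪o A, extEmb σ g hn = f := by
  classical
  -- the set of positions hitting the appended part
  set Sf : Finset (Fin n) := Finset.univ.filter (fun i => ∃ j, f i = toLex (Sum.inr j)) with hSf
  have hmemSf : ∀ i, i ∈ Sf ↔ ∃ j, f i = toLex (Sum.inr j) := by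
    intro i; simp [hSf]
  -- a total function reading off the `Fin m`-value
  set p : Fin n → Fin m := fun i => Sum.elim (fun _ => (⟨0, hm⟩ : Fin m)) id (ofLex (f i)) with hp
  have hpv : ∀ i j, f i = toLex (Sum.inr j) → p i = j := by
    intro i j h
    simp [hp, h]
  -- `Sf` is upward closed
  have hup : ∀ i i' : Fin n, i ∈ Sf → i ≤ i' → i' ∈ Sf := by
    intro i i' hi hle
    obtain ⟨j, hj⟩ := (hmemSf i).1 hi
    rw [hmemSf]
    have hle' : f i ≤ f i' := f.monotone hle
    rw [hj] at hle'
    cases h' : ofLex (f i') with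
    | inl a =>
        exfalso
        rw [show f i' = toLex (ofLex (f i')) from rfl, h'] at hle'
        exact Sum.Lex.not_inr_le_inl hle'
    | inr j' =>
        exact ⟨j', by rw [show f i' = toLex (ofLex (f i')) from rfl, h']⟩
  -- `Sf` has exactly `r` elements
  have hcardSf : Sf.card = r := by
    have := Finset.card_bij (fun (i : Fin n) (_ : i ∈ Sf) => p i)
      (t := Finset.univ.image σ)
      (by
        intro i hi
        obtain ⟨j, hj⟩ := (hmemSf i).1 hi
        show p i ∈ _
        rw [hpv i j hj]
        have : j ∈ addTp f := ⟨i, hj⟩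
        rw [hf] at this
        obtain ⟨t, ht⟩ := this
        exact Finset.mem_image.2 ⟨t, Finset.mem_univ _, ht⟩)
      (by
        intro i hi i' hi' h
        obtain ⟨j, hj⟩ := (hmemSf i).1 hi
        obtain ⟨j', hj'⟩ := (hmemSf i').1 hi'
        have h' : p i = p i' := h
        rw [hpv i j hj, hpv i' j' hj'] at h'
        subst h'
        exact f.injective (hj.trans hj'.symm))
      (by
        intro j hj
        obtain ⟨t, _, rfl⟩ := Finset.mem_image.1 hj
        have : σ t ∈ addTp f := hf ▸ ⟨t, rfl⟩
        obtain ⟨i, hi⟩ := this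
        exact ⟨i, (hmemSf i).2 ⟨_, hi⟩, hpv i _ hi⟩)
    rw [this, Finset.card_image_of_injective _ σ.injective, Finset.card_univ, Fintype.card_fin]
  -- characterization of membership in `Sf`
  have hiff : ∀ i : Fin n, i ∈ Sf ↔ s ≤ (i : ℕ) := by
    intro i
    constructor
    · intro hi
      by_contra hlt
      push_neg at hlt
      have hsub : Finset.Ici i ⊆ Sf := fun i' hi' => hup i i' hi (Finset.mem_Ici.1 hi')
      have := Finset.card_le_card hsub
      rw [Fin.card_Ici, hcardSf] at this
      omega
    · intro hsi
      by_contra hni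
      have hsub : Sf ⊆ Finset.Ioi i := by
        intro i' hi'
        rw [Finset.mem_Ioi]
        by_contra hle
        push_neg at hle
        exact hni (hup i' i hi' hle)
      have := Finset.card_le_card hsub
      rw [Fin.card_Ioi, hcardSf] at this
      have := i.isLt
      omega
  -- the top part of `f` coincides with `σ`
  set ψ : Fin r → Fin m := fun t => p ⟨s + t, by omega⟩ with hψ
  have hψf : ∀ t : Fin r, f ⟨s + t, by omega⟩ = toLex (Sum.inr (ψ t)) := by
    intro t
    have hmem : (⟨s + t, by omega⟩ : Fin n) ∈ Sf := (hiff _).2 (by simp)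
    obtain ⟨j, hj⟩ := (hmemSf _).1 hmem
    have hpj : ψ t = j := hpv _ j hj
    rw [hpj, hj]
  have hψmono : StrictMono ψ := by
    intro t t' h
    have : f ⟨s + t, by omega⟩ < f ⟨s + t', by omega⟩ :=
      f.strictMono (show ((⟨s + t, _⟩ : Fin n)) < ⟨s + t', _⟩ by
        simp only [Fin.mk_lt_mk]; omega)
    rw [hψf t, hψf t'] at this
    exact Sum.Lex.inr_lt_inr_iff.1 this
  have hψrange : Set.range ψ = Set.range σ := by
    apply Set.Subset.antisymm
    · rintro j ⟨t, rfl⟩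
      rw [← hf]
      exact ⟨_, hψf t⟩
    · rintro j hj
      rw [← hf] at hj
      obtain ⟨i, hi⟩ := hj
      have hmem : i ∈ Sf := (hmemSf i).2 ⟨_, hi⟩
      have hsi := (hiff i).1 hmem
      refine ⟨⟨(i : ℕ) - s, by have := i.isLt; omega⟩, ?_⟩
      show p ⟨s + ((i : ℕ) - s), by have := i.isLt; omega⟩ = j
      rw [show (⟨s + ((i : ℕ) - s), by have := i.isLt; omega⟩ : Fin n) = i from by
        ext; simp; omega]
      exact hpv i j hi
  have hψσ : ψ = σ := by
    have : WellFoundedLT (Fin r) := inferInstance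
    exact (StrictMono.range_inj hψmono σ.strictMono).1 hψrange
  -- the bottom part of `f` lands in `A`
  have hbot : ∀ i : Fin s, ∃ a : A, f ⟨i, by omega⟩ = toLex (Sum.inl a) := by
    intro i
    have hni : (⟨i, by omega⟩ : Fin n) ∉ Sf := by
      rw [hiff]; simp
    rw [hmemSf] at hni
    push_neg at hni
    cases h' : ofLex (f ⟨i, by omega⟩) with
    | inl a => exact ⟨a, by rw [show f ⟨i, by omega⟩ = toLex (ofLex (f ⟨i, by omega⟩)) from rfl, h']⟩
    | inr j =>
        exact absurd (show f ⟨i, by omega⟩ = toLex (Sum.inr j) by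
          rw [show f ⟨i, by omega⟩ = toLex (ofLex (f ⟨i, by omega⟩)) from rfl, h']) (hni j)
  have hgmono : StrictMono (fun i : Fin s => (hbot i).choose) := by
    intro i i' h
    have : f ⟨i, by omega⟩ < f ⟨i', by omega⟩ :=
      f.strictMono (show ((⟨(i : ℕ), _⟩ : Fin n)) < ⟨(i' : ℕ), _⟩ from h)
    rw [(hbot i).choose_spec, (hbot i').choose_spec] at this
    exact Sum.Lex.inl_lt_inl_iff.1 this
  refine ⟨OrderEmbedding.ofStrictMono _ hgmono, ?_⟩
  apply RelEmbedding.ext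
  intro i
  show extFun σ _ hn i = f i
  unfold extFun
  split_ifs with h1
  · exact ((hbot ⟨i, h1⟩).choose_spec.trans (by congr)).symm
  · rw [← hψσ]
    have := hψf ⟨(i : ℕ) - s, by have := i.isLt; omega⟩
    rw [show (⟨s + ((i : ℕ) - s), by omega⟩ : Fin n) = i by ext; simp; omega] at this
    exact this.symm

end Aux

/-- Lemma on one additive type: for a countable well-ordered `A` with finite big Ramsey
degrees (with `T j = T(j, A)` for `j ≥ 1` and `T 0 = 1` by convention), any finite coloring of
the embeddings `n ↪ A + m` of additive type `τ` admits a `U ⊆ A` order-isomorphic to `A`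
such that at most `T (n - |τ|)` colors occur on embeddings `n ↪ U + m` of type `τ`. -/
theorem stmt3 {A : Type*} [LinearOrder A] [WellFoundedLT A] [Countable A]
    (T : ℕ → ℕ) (hT0 : T 0 = 1) (hT : ∀ j : ℕ, 1 ≤ j → hasBRD A j (T j))
    (n m : ℕ) (hn : 1 ≤ n) (hm : 1 ≤ m)
    (τ : Set (Fin m)) (hτ : τ.ncard ≤ n)
    (k : ℕ) (hk : 2 ≤ k)
    (χ : {f : Fin n ↪o (A ⊕ₗ Fin m) // addTp f = τ} → Fin k) :
    ∃ U : Set A, Nonempty (U ≃o A) ∧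
      (χ '' {f | ∀ i : Fin n, ∀ a : A, f.1 i = toLex (Sum.inl a) → a ∈ U}).ncard ≤
        T (n - τ.ncard) := by
  classical
  set r := τ.ncard with hr
  set s := n - r with hs
  have hsr : n = s + r := by omega
  have hcard : τ.toFinset.card = r := (Set.ncard_eq_toFinset_card' τ).symm
  set σ : Fin r ↪o Fin m := τ.toFinset.orderEmbOfFin hcard with hσ
  have hrange : Set.range σ = τ := by
    rw [hσ, Finset.range_orderEmbOfFin, Set.coe_toFinset]
  -- the map from embeddings `Fin s ↪o A` to typed embeddings
  set Φ : (Fin s ↪o A) → {f : Fin n ↪o (A ⊕ₗ Fin m) // addTp f = τ} :=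
    fun g => ⟨extEmb σ g hsr, by rw [addTp_extEmb, hrange]⟩ with hΦ
  -- `A` has big Ramsey degree at most `T s` for `s`-chains (including `s = 0`)
  have hbrd : brdLE A s (T s) := by
    rcases Nat.eq_zero_or_pos s with h0 | hpos
    · rw [h0, hT0]
      intro k' hk' χ'
      refine ⟨Set.univ, ⟨OrderIso.Set.univ⟩, ?_⟩
      rw [Set.ncard_le_one (Set.toFinite _)]
      rintro x ⟨f, _, rfl⟩ y ⟨g, _, rfl⟩
      have : f = g := by
        apply RelEmbedding.ext
        intro i
        exact absurd i.isLt (by omega)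
      rw [this]
    · exact (hT s hpos).1
  obtain ⟨U, hU, hUcard⟩ := hbrd k hk (fun g => χ (Φ g))
  refine ⟨U, hU, ?_⟩
  have hsub : χ '' {f | ∀ i : Fin n, ∀ a : A, f.1 i = toLex (Sum.inl a) → a ∈ U} ⊆
      (fun g => χ (Φ g)) '' {g : Fin s ↪o A | ∀ i, g i ∈ U} := by
    rintro x ⟨f, hfU, rfl⟩
    obtain ⟨g, hg⟩ := exists_extEmb hm hsr σ f.1 (by rw [f.2, hrange])
    refine ⟨g, ?_, ?_⟩
    · intro i
      have hval : f.1 ⟨(i : ℕ), by omega⟩ = toLex (Sum.inl (g i)) := by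
        rw [← hg]
        show extFun σ g hsr _ = _
        unfold extFun
        rw [dif_pos i.isLt]
      exact hfU ⟨(i : ℕ), by omega⟩ (g i) hval
    · have : Φ g = f := Subtype.ext hg
      show χ (Φ g) = χ f
      rw [this]
  exact le_trans (Set.ncard_le_ncard hsub (Set.toFinite _)) hUcard
end

section
/- Let α be a countable ordinal with finite big Ramsey degrees and m ≥ 1 an integer. Then α + m has finite big Ramsey degrees; more precisely, T(n, α + m) ≤ Σ_{j=0}^{n} C(m, j) · T(n − j, α), where T(0, α) = 1 and C(m, j) = 0 for m < j. -/
open Set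

open scoped Classical

/-! Auxiliary lemmas -/

lemma brdLE_zero (A : Type*) [LinearOrder A] : brdLE A 0 1 := by
  intro k hk χ
  refine ⟨Set.univ, ⟨OrderIso.Set.univ⟩, ?_⟩
  rw [Set.ncard_le_one_iff (Set.toFinite _)]
  rintro a b ⟨f, -, rfl⟩ ⟨g, -, rfl⟩
  congr 1
  ext i
  exact i.elim0

/-- simultaneous version of brdLE for finitely many colourings -/
lemma brd_simul {A : Type*} [LinearOrder A] {I : Type*} (k : ℕ) (hk : 2 ≤ k)
    (nn tt : I → ℕ) (hbrd : ∀ i, brdLE A (nn i) (tt i)) (F : Finset I) :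
    ∀ χ : (∀ i : I, (Fin (nn i) ↪o A) → Fin k),
    ∃ U : Set A, Nonempty (↥U ≃o A) ∧
      ∀ i ∈ F, ((χ i) '' {f | ∀ x, f x ∈ U}).ncard ≤ tt i := by
  induction F using Finset.cons_induction with
  | empty => exact fun χ => ⟨Set.univ, ⟨OrderIso.Set.univ⟩, by simp⟩
  | cons i₀ F hi IH =>
    intro χ
    obtain ⟨U₁, ⟨φ⟩, hU₁⟩ := hbrd i₀ k hk (χ i₀)
    set emb : A ↪o A :=
      (φ.symm.toOrderEmbedding).trans (OrderEmbedding.subtype (· ∈ U₁)) with hemb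
    obtain ⟨U₂, ⟨φ₂⟩, hU₂⟩ := IH (fun i g => χ i (g.trans emb))
    refine ⟨emb '' U₂, ?_, ?_⟩
    · -- the image is order isomorphic to A
      have hsm : StrictMono (fun a : ↥U₂ => (⟨emb a, Set.mem_image_of_mem _ a.2⟩ : ↥(emb '' U₂))) := by
        intro a b hab
        exact emb.strictMono (Subtype.coe_lt_coe.2 hab)
      have hsurj : Function.Surjective
          (fun a : ↥U₂ => (⟨emb a, Set.mem_image_of_mem _ a.2⟩ : ↥(emb '' U₂))) := by
        rintro ⟨x, a, ha, rfl⟩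
        exact ⟨⟨a, ha⟩, rfl⟩
      exact ⟨((hsm.orderIsoOfSurjective _ hsurj).symm).trans φ₂⟩
    · intro i himem
      have hUsub : emb '' U₂ ⊆ U₁ := by
        rintro x ⟨a, _, rfl⟩
        exact (φ.symm a).2
      rcases Finset.mem_cons.1 himem with rfl | hiF
      · refine le_trans (Set.ncard_le_ncard ?_ (Set.toFinite _)) hU₁
        exact Set.image_mono (fun f hf x => hUsub (hf x))
      · refine le_trans (Set.ncard_le_ncard ?_ (Set.toFinite _)) (hU₂ i hiF)
        rintro c ⟨f, hf, rfl⟩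
        have hmem : ∀ x, f x ∈ U₁ := fun x => hUsub (hf x)
        set g : Fin (nn i) ↪o A :=
          OrderEmbedding.ofStrictMono (fun x => φ ⟨f x, hmem x⟩)
            (fun x y hxy => φ.strictMono (Subtype.mk_lt_mk.2 (f.strictMono hxy))) with hg
        have hgx : ∀ x, g x ∈ U₂ := by
          intro x
          obtain ⟨a, ha, hax⟩ := hf x
          have : (⟨f x, hmem x⟩ : ↥U₁) = φ.symm a := by
            apply Subtype.ext
            exact hax.symm
          have : g x = a := by
            show φ ⟨f x, hmem x⟩ = a
            rw [this, OrderIso.apply_symm_apply]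
          rwa [this]
        refine ⟨g, hgx, ?_⟩
        have heq : g.trans emb = f := by
          ext x
          show ((φ.symm (φ ⟨f x, hmem x⟩) : ↥U₁) : A) = f x
          rw [OrderIso.symm_apply_apply]
        show χ i (g.trans emb) = χ i f
        rw [heq]

/-! Ordinal-specific constructions -/

section OrdinalAux

variable (α : Ordinal) (m : ℕ)

/-- inclusion of `Iio α` into `Iio (α + m)` -/
noncomputable def inclAB : ↥(Set.Iio α) ↪o ↥(Set.Iio (α + (m : Ordinal))) :=
  OrderEmbedding.ofStrictMono
    (fun a => ⟨a.1, lt_of_lt_of_le a.2 (le_self_add : α ≤ α + (m : Ordinal))⟩)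
    (fun a b hab => Subtype.mk_lt_mk.2 (Subtype.coe_lt_coe.2 hab))

lemma inclAB_val (a : ↥(Set.Iio α)) : (inclAB α m a).1 = a.1 := rfl

/-- the `p`-th element of the top block -/
noncomputable def topElF (p : Fin m) : ↥(Set.Iio (α + (m : Ordinal))) :=
  ⟨α + p, by
    have hp : ((p : ℕ) : Ordinal) < (m : Ordinal) := by exact_mod_cast p.2
    exact (add_lt_add_iff_left α).2 hp⟩

lemma topElF_strictMono : StrictMono (topElF α m) := by
  intro p q hpq
  apply Subtype.mk_lt_mk.2
  exact (add_lt_add_iff_left α).2 (by exact_mod_cast hpq)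

lemma le_topElF (p : Fin m) : α ≤ (topElF α m p).1 := le_self_add

lemma exists_top (x : ↥(Set.Iio (α + (m : Ordinal)))) (hx : α ≤ x.1) :
    ∃ p : Fin m, x = topElF α m p := by
  have h1 : α + (x.1 - α) = x.1 := Ordinal.add_sub_cancel_of_le hx
  have h2 : (x.1 - α) < (m : Ordinal) := by
    have hxm : x.1 < α + (m : Ordinal) := x.2
    rw [← h1] at hxm
    exact (add_lt_add_iff_left α).1 hxm
  obtain ⟨p, hp⟩ := Ordinal.lt_omega0.1 (h2.trans (Ordinal.nat_lt_omega0 m))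
  have hpm : p < m := by rw [hp] at h2; exact_mod_cast h2
  refine ⟨⟨p, hpm⟩, ?_⟩
  apply Subtype.ext
  show x.1 = α + _
  rw [← h1, hp]

/-- glue an embedding into `Iio α` with a finite set of top elements -/
noncomputable def combineF (n : ℕ) (s : Finset (Fin m)) (g : Fin (n - s.card) ↪o ↥(Set.Iio α)) :
    Fin n ↪o ↥(Set.Iio (α + (m : Ordinal))) :=
  OrderEmbedding.ofStrictMono
    (fun i => if h : (i : ℕ) < n - s.card then inclAB α m (g ⟨i, h⟩)
      else topElF α m (s.orderEmbOfFin rfl ⟨(i : ℕ) - (n - s.card), by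
        have := i.isLt; omega⟩))
    (by
      intro a b hab
      have hab' : (a : ℕ) < b := hab
      dsimp only
      by_cases ha : (a : ℕ) < n - s.card
      · by_cases hb : (b : ℕ) < n - s.card
        · rw [dif_pos ha, dif_pos hb]
          exact (inclAB α m).strictMono (g.strictMono (show ((⟨a, ha⟩ : Fin _)) < ⟨b, hb⟩ from hab'))
        · rw [dif_pos ha, dif_neg hb]
          apply Subtype.coe_lt_coe.1
          calc ((inclAB α m (g ⟨a, ha⟩) : ↥(Set.Iio (α + (m : Ordinal)))) : Ordinal)
              = (g ⟨a, ha⟩ : Ordinal) := rfl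
            _ < α := (g ⟨a, ha⟩).2
            _ ≤ _ := le_topElF α m _
      · by_cases hb : (b : ℕ) < n - s.card
        · exact absurd hab' (by omega)
        · rw [dif_neg ha, dif_neg hb]
          apply topElF_strictMono
          apply (s.orderEmbOfFin rfl).strictMono
          show ((⟨(a : ℕ) - (n - s.card), _⟩ : Fin s.card)) < ⟨(b : ℕ) - (n - s.card), _⟩
          rw [Fin.mk_lt_mk]
          omega)

lemma combineF_apply_pos (n : ℕ) (s : Finset (Fin m)) (g : Fin (n - s.card) ↪o ↥(Set.Iio α))
    (i : Fin n) (h : (i : ℕ) < n - s.card) : combineF α m n s g i = inclAB α m (g ⟨i, h⟩) := by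
  show dite _ _ _ = _
  rw [dif_pos h]

lemma combineF_apply_neg (n : ℕ) (s : Finset (Fin m)) (g : Fin (n - s.card) ↪o ↥(Set.Iio α))
    (i : Fin n) (h : ¬ (i : ℕ) < n - s.card) :
    combineF α m n s g i =
      topElF α m (s.orderEmbOfFin rfl ⟨(i : ℕ) - (n - s.card), by have := i.isLt; omega⟩) := by
  show dite _ _ _ = _
  rw [dif_neg h]

/-- a good copy of `Iio α` together with the whole top block is a copy of `Iio (α + m)` -/
lemma copy_iso (U'' : Set ↥(Set.Iio α)) (ψ : ↥U'' ≃o ↥(Set.Iio α)) :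
    Nonempty (↥((inclAB α m) '' U'' ∪ Set.range (topElF α m)) ≃o ↥(Set.Iio (α + (m : Ordinal)))) := by
  set U : Set ↥(Set.Iio (α + (m : Ordinal))) :=
    (inclAB α m) '' U'' ∪ Set.range (topElF α m) with hU
  let h : ↥(Set.Iio (α + (m : Ordinal))) → ↥U := fun x =>
    if hx : x.1 < α then
      ⟨inclAB α m ((ψ.symm ⟨x.1, hx⟩ : ↥U'') : ↥(Set.Iio α)),
        Or.inl ⟨_, (ψ.symm ⟨x.1, hx⟩).2, rfl⟩⟩
    else
      ⟨x, Or.inr (by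
        obtain ⟨p, hp⟩ := exists_top α m x (not_lt.1 hx)
        exact ⟨p, hp.symm⟩)⟩
  have hsm : StrictMono h := by
    intro x y hxy
    have hxy' : x.1 < y.1 := hxy
    show h x < h y
    by_cases hx : x.1 < α
    · by_cases hy : y.1 < α
      · simp only [h, dif_pos hx, dif_pos hy]
        apply Subtype.mk_lt_mk.2
        exact (inclAB α m).strictMono
          (Subtype.coe_lt_coe.2 (ψ.symm.strictMono (Subtype.mk_lt_mk.2 hxy')))
      · simp only [h, dif_pos hx, dif_neg hy]
        apply Subtype.mk_lt_mk.2
        apply Subtype.coe_lt_coe.1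
        calc ((inclAB α m ((ψ.symm ⟨x.1, hx⟩ : ↥U'') : ↥(Set.Iio α)) :
              ↥(Set.Iio (α + (m : Ordinal)))) : Ordinal)
            = ((ψ.symm ⟨x.1, hx⟩ : ↥U'') : ↥(Set.Iio α)) := rfl
          _ < α := ((ψ.symm ⟨x.1, hx⟩ : ↥U'') : ↥(Set.Iio α)).2
          _ ≤ y.1 := not_lt.1 hy
    · by_cases hy : y.1 < α
      · exact absurd (lt_trans hxy' hy) hx
      · simp only [h, dif_neg hx, dif_neg hy]
        exact Subtype.mk_lt_mk.2 hxy
  have hsurj : Function.Surjective h := by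
    rintro ⟨u, hu⟩
    rcases hu with ⟨a, ha, rfl⟩ | ⟨p, rfl⟩
    · refine ⟨inclAB α m (ψ ⟨a, ha⟩), ?_⟩
      have hxlt : (inclAB α m (ψ ⟨a, ha⟩)).1 < α := (ψ ⟨a, ha⟩).2
      apply Subtype.ext
      show (h _ : ↥(Set.Iio (α + (m : Ordinal)))) = inclAB α m a
      simp only [h, dif_pos hxlt]
      congr 1
      have : (⟨(inclAB α m (ψ ⟨a, ha⟩)).1, hxlt⟩ : ↥(Set.Iio α)) = ψ ⟨a, ha⟩ :=
        Subtype.ext rfl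
      rw [this, OrderIso.symm_apply_apply]
    · refine ⟨topElF α m p, ?_⟩
      have hxlt : ¬ (topElF α m p).1 < α := not_lt.2 (le_topElF α m p)
      apply Subtype.ext
      show (h _ : ↥(Set.Iio (α + (m : Ordinal)))) = topElF α m p
      simp only [h, dif_neg hxlt]
  exact ⟨(hsm.orderIsoOfSurjective h hsurj).symm⟩

end OrdinalAux

lemma ncard_biUnion_le' {β γ : Type*} (S : Finset β) (E : β → Set γ) :
    (⋃ b ∈ S, E b).ncard ≤ ∑ b ∈ S, (E b).ncard := by
  induction S using Finset.cons_induction with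
  | empty => simp
  | cons b S hb IH =>
    rw [Finset.cons_eq_insert, Finset.set_biUnion_insert, Finset.sum_insert hb]
    exact le_trans (Set.ncard_union_le _ _) (Nat.add_le_add le_rfl IH)

lemma sum_card_filter (m n : ℕ) (T : ℕ → ℕ) :
    ∑ s ∈ Finset.univ.filter (fun s : Finset (Fin m) => s.card ≤ n), T (n - s.card)
      = ∑ j ∈ Finset.range (n + 1), m.choose j * T (n - j) := by
  classical
  rw [← Finset.sum_fiberwise_of_maps_to (g := Finset.card) (t := Finset.range (n + 1))
    (fun s hs => Finset.mem_range.2 (by have := (Finset.mem_filter.1 hs).2; omega))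
    (fun s => T (n - s.card))]
  apply Finset.sum_congr rfl
  intro j hj
  rw [Finset.mem_range] at hj
  have hfil : ((Finset.univ.filter (fun s : Finset (Fin m) => s.card ≤ n)).filter
      (fun s => s.card = j)) = Finset.powersetCard j Finset.univ := by
    rw [Finset.powersetCard_eq_filter, Finset.powerset_univ]
    ext s
    simp only [Finset.mem_filter, Finset.mem_univ, true_and]
    constructor
    · rintro ⟨-, h⟩; exact h
    · intro h; exact ⟨by omega, h⟩
  rw [hfil]
  have hcong : ∑ s ∈ Finset.powersetCard j (Finset.univ : Finset (Fin m)), T (n - s.card)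
      = ∑ _s ∈ Finset.powersetCard j (Finset.univ : Finset (Fin m)), T (n - j) :=
    Finset.sum_congr rfl (fun s hs => by rw [(Finset.mem_powersetCard.1 hs).2])
  rw [hcong, Finset.sum_const, Finset.card_powersetCard, Finset.card_univ, Fintype.card_fin,
    smul_eq_mul]

/-- If a countable ordinal `α` has finite big Ramsey degrees (with `T j = T(j, α)` for
`j ≥ 1`, `T 0 = 1`), then `α + m` has finite big Ramsey degrees, and moreover
`T(n, α + m) ≤ ∑_{j=0}^n C(m,j) · T(n-j)` for every `n ≥ 1`. -/
theorem stmt4 (α : Ordinal) (hcnt : α.card ≤ Cardinal.aleph0)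
    (T : ℕ → ℕ) (hT0 : T 0 = 1) (hT : ∀ j : ℕ, 1 ≤ j → hasBRD ↥(Set.Iio α) j (T j))
    (m : ℕ) (hm : 1 ≤ m) :
    finiteBRD ↥(Set.Iio (α + m)) ∧
    ∀ n : ℕ, 1 ≤ n →
      brdLE ↥(Set.Iio (α + m)) n (∑ j ∈ Finset.range (n + 1), m.choose j * T (n - j)) := by
  classical
  have key : ∀ n : ℕ,
      brdLE ↥(Set.Iio (α + m)) n (∑ j ∈ Finset.range (n + 1), m.choose j * T (n - j)) := by
    intro n k hk χ
    set χI : ∀ s : Finset (Fin m), (Fin (n - s.card) ↪o ↥(Set.Iio α)) → Fin k :=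
      fun s g => χ (combineF α m n s g) with hχI
    have hbrd : ∀ s : Finset (Fin m), brdLE ↥(Set.Iio α) (n - s.card) (T (n - s.card)) := by
      intro s
      rcases Nat.eq_zero_or_pos (n - s.card) with h | h
      · rw [h, hT0]; exact brdLE_zero _
      · exact (hT _ h).1
    obtain ⟨U'', ⟨ψ⟩, hU⟩ := brd_simul k hk (fun s : Finset (Fin m) => n - s.card)
      (fun s => T (n - s.card)) hbrd Finset.univ χI
    refine ⟨(inclAB α m) '' U'' ∪ Set.range (topElF α m), copy_iso α m U'' ψ, ?_⟩
    set U : Set ↥(Set.Iio (α + (m : Ordinal))) :=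
      (inclAB α m) '' U'' ∪ Set.range (topElF α m) with hUdef
    have hsub : χ '' {f | ∀ i, f i ∈ U} ⊆
        ⋃ s ∈ Finset.univ.filter (fun s : Finset (Fin m) => s.card ≤ n),
          χI s '' {g | ∀ x, g x ∈ U''} := by
      rintro c ⟨f, hf, rfl⟩
      simp only [Set.mem_setOf_eq] at hf
      have hex : ∀ i : Fin n, α ≤ (f i).1 → ∃ p : Fin m, f i = topElF α m p :=
        fun i hi => exists_top α m (f i) hi
      set s : Finset (Fin m) :=
        Finset.univ.filter (fun p => ∃ i, f i = topElF α m p) with hs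
      set Dtop : Finset (Fin n) := Finset.univ.filter (fun i => α ≤ (f i).1) with hD
      have hDmem : ∀ i, i ∈ Dtop ↔ α ≤ (f i).1 := by
        intro i; rw [hD, Finset.mem_filter]; simp
      have hcard : Dtop.card = s.card := by
        refine Finset.card_bij (fun i hi => (hex i ((hDmem i).1 hi)).choose) ?_ ?_ ?_
        · intro i hi
          rw [hs, Finset.mem_filter]
          exact ⟨Finset.mem_univ _, ⟨i, (hex i ((hDmem i).1 hi)).choose_spec⟩⟩
        · intro i₁ h₁ i₂ h₂ heq
          apply f.injective
          rw [(hex i₁ ((hDmem i₁).1 h₁)).choose_spec, (hex i₂ ((hDmem i₂).1 h₂)).choose_spec, heq]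
        · intro p hp
          rw [hs, Finset.mem_filter] at hp
          obtain ⟨i, hi⟩ := hp.2
          have hiD : i ∈ Dtop := (hDmem i).2 (by rw [hi]; exact le_topElF α m p)
          refine ⟨i, hiD, ?_⟩
          apply (topElF_strictMono α m).injective
          rw [← (hex i ((hDmem i).1 hiD)).choose_spec, hi]
      have hjn : s.card ≤ n := by
        rw [← hcard]
        exact le_trans (Finset.card_le_univ _) (by simp)
      have hbotcard : (Finset.univ.filter (fun i : Fin n => (f i).1 < α)).card = n - s.card := by
        have hsum := Finset.card_filter_add_card_filter_not
          (s := (Finset.univ : Finset (Fin n))) (p := fun i => α ≤ (f i).1)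
        have hnegeq : Finset.univ.filter (fun i : Fin n => ¬ α ≤ (f i).1)
            = Finset.univ.filter (fun i : Fin n => (f i).1 < α) := by
          apply Finset.filter_congr; intro i _; rw [not_le]
        rw [hnegeq] at hsum
        have hcu : (Finset.univ : Finset (Fin n)).card = n := by simp
        rw [hcu] at hsum
        rw [hD] at hcard
        omega
      have hpref : ∀ i : Fin n, ((f i).1 < α ↔ (i : ℕ) < n - s.card) := by
        intro i
        constructor
        · intro hib
          by_contra hni
          have hsubI : Finset.Iic i ⊆ Finset.univ.filter (fun i' : Fin n => (f i').1 < α) := by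
            intro i' hi'
            rw [Finset.mem_Iic] at hi'
            refine Finset.mem_filter.2 ⟨Finset.mem_univ _, lt_of_le_of_lt ?_ hib⟩
            exact Subtype.coe_le_coe.2 (f.monotone hi')
          have hle := Finset.card_le_card hsubI
          rw [Fin.card_Iic, hbotcard] at hle
          omega
        · intro hlt
          by_contra hge
          rw [not_lt] at hge
          have hsubI : Finset.Ici i ⊆ Dtop := by
            intro i' hi'
            refine (hDmem i').2 (le_trans hge ?_)
            exact Subtype.coe_le_coe.2 (f.monotone (Finset.mem_Ici.1 hi'))
          have hle := Finset.card_le_card hsubI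
          rw [Fin.card_Ici, hcard] at hle
          have hin := i.isLt
          omega
      have hjle : n - s.card ≤ n := Nat.sub_le _ _
      have hcastlt : ∀ x : Fin (n - s.card), ((Fin.castLE hjle x : Fin n) : ℕ) < n - s.card := by
        intro x; simpa using x.isLt
      set g : Fin (n - s.card) ↪o ↥(Set.Iio α) :=
        OrderEmbedding.ofStrictMono
          (fun x => ⟨(f (Fin.castLE hjle x)).1, (hpref _).2 (hcastlt x)⟩)
          (fun x y hxy => Subtype.mk_lt_mk.2
            (Subtype.coe_lt_coe.2 (f.strictMono (by
              show Fin.castLE hjle x < Fin.castLE hjle y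
              simpa using hxy)))) with hgdef
      -- the increasing enumeration of the top part of f
      have hidx : ∀ x : Fin s.card, n - s.card + (x : ℕ) < n := by
        intro x; have := x.isLt; omega
      have htopidx : ∀ x : Fin s.card, α ≤ (f ⟨n - s.card + x, hidx x⟩).1 := by
        intro x
        by_contra hc
        rw [not_le] at hc
        have := (hpref _).1 hc
        simp only at this
        omega
      set σ : Fin s.card → Fin m := fun x => (hex _ (htopidx x)).choose with hσdef
      have hσspec : ∀ x : Fin s.card, f ⟨n - s.card + (x : ℕ), hidx x⟩ = topElF α m (σ x) :=
        fun x => (hex _ (htopidx x)).choose_spec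
      have hσmem : ∀ x, σ x ∈ s := by
        intro x
        rw [hs, Finset.mem_filter]
        exact ⟨Finset.mem_univ _, ⟨_, hσspec x⟩⟩
      have hσmono : StrictMono σ := by
        intro x y hxy
        have hlt : f ⟨n - s.card + x, hidx x⟩ < f ⟨n - s.card + y, hidx y⟩ := by
          apply f.strictMono
          rw [Fin.mk_lt_mk]
          have : (x : ℕ) < y := hxy
          omega
        rw [hσspec x, hσspec y] at hlt
        exact (topElF_strictMono α m).lt_iff_lt.1 hlt
      have hσeq : σ = ⇑(s.orderEmbOfFin rfl) :=
        Finset.orderEmbOfFin_unique rfl hσmem hσmono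
      have hfeq : combineF α m n s g = f := by
        apply DFunLike.ext
        intro i
        by_cases hib : (i : ℕ) < n - s.card
        · rw [combineF_apply_pos α m n s g i hib]
          apply Subtype.ext
          show (f (Fin.castLE hjle ⟨(i : ℕ), hib⟩)).1 = (f i).1
          rfl
        · rw [combineF_apply_neg α m n s g i hib]
          rw [← hσeq]
          rw [← hσspec ⟨(i : ℕ) - (n - s.card), by have := i.isLt; omega⟩]
          congr 1
          apply Fin.ext
          show n - s.card + ((i : ℕ) - (n - s.card)) = (i : ℕ)
          omega
      have hgU : ∀ x, g x ∈ U'' := by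
        intro x
        have hfx := hf (Fin.castLE hjle x)
        rcases hfx with ⟨a, ha, hax⟩ | ⟨p, hp⟩
        · have : g x = a := by
            apply Subtype.ext
            show (f (Fin.castLE hjle x)).1 = a.1
            rw [← hax]
            rfl
          rwa [this]
        · exfalso
          have h1 : (f (Fin.castLE hjle x)).1 < α := (hpref _).2 (hcastlt x)
          rw [← hp] at h1
          exact absurd h1 (not_lt.2 (le_topElF α m p))
      refine Set.mem_biUnion (Finset.mem_filter.2 ⟨Finset.mem_univ _, hjn⟩) ⟨g, hgU, ?_⟩
      show χ (combineF α m n s g) = χ f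
      rw [hfeq]
    calc (χ '' {f | ∀ i, f i ∈ U}).ncard
        ≤ (⋃ s ∈ Finset.univ.filter (fun s : Finset (Fin m) => s.card ≤ n),
            χI s '' {g | ∀ x, g x ∈ U''}).ncard :=
          Set.ncard_le_ncard hsub (Set.toFinite _)
      _ ≤ ∑ s ∈ Finset.univ.filter (fun s : Finset (Fin m) => s.card ≤ n),
            (χI s '' {g | ∀ x, g x ∈ U''}).ncard := ncard_biUnion_le' _ _
      _ ≤ ∑ s ∈ Finset.univ.filter (fun s : Finset (Fin m) => s.card ≤ n),
            T (n - s.card) :=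
          Finset.sum_le_sum (fun s _ => hU s (Finset.mem_univ _))
      _ = ∑ j ∈ Finset.range (n + 1), m.choose j * T (n - j) := sum_card_filter m n T
  exact ⟨fun n _ => ⟨_, key n⟩, fun n _ => key n⟩
end

section
/- For all integers m ≥ 1 and n ≥ 1, T(n, ω + m) = Σ_{j=0}^{n} C(m, j), where C(m, j) = 0 for m < j. In particular, if n ≥ m then T(n, ω + m) = 2^m. -/
open Set

open Ordinal

theorem ramseyN : ∀ (n : ℕ) {k : ℕ} (χ : Finset ℕ → Fin k) (A : Set ℕ), A.Infinite →
    ∃ H, H ⊆ A ∧ H.Infinite ∧ ∃ c, ∀ s : Finset ℕ, ↑s ⊆ H → s.card = n → χ s = c := by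
  intro n
  induction n with
  | zero =>
    intro k χ A hA
    exact ⟨A, subset_rfl, hA, χ ∅, fun s _ h0 => by rw [Finset.card_eq_zero.mp h0]⟩
  | succ n ih =>
    intro k χ A hA
    have key : ∀ B : {B : Set ℕ // B.Infinite}, ∃ H : {B : Set ℕ // B.Infinite},
        H.1 ⊆ B.1 \ {sInf B.1} ∧ ∃ c, ∀ s : Finset ℕ, ↑s ⊆ H.1 → s.card = n →
          χ (insert (sInf B.1) s) = c := by
      rintro ⟨B, hB⟩
      obtain ⟨H, hHsub, hHinf, c, hc⟩ :=
        ih (fun s => χ (insert (sInf B) s)) (B \ {sInf B}) (hB.diff (finite_singleton _))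
      exact ⟨⟨H, hHinf⟩, hHsub, c, hc⟩
    choose F hF1 c hc using key
    let g : ℕ → {B : Set ℕ // B.Infinite} := fun i => Nat.rec ⟨A, hA⟩ (fun _ B => F B) i
    have hgsucc : ∀ i, g (i + 1) = F (g i) := fun i => rfl
    set a : ℕ → ℕ := fun i => sInf (g i).1 with ha
    have hmem : ∀ i, a i ∈ (g i).1 := fun i => Nat.sInf_mem ((g i).2.nonempty)
    have hsub : ∀ i, (g (i + 1)).1 ⊆ (g i).1 \ {a i} := fun i => hF1 (g i)
    have hchain : ∀ i j, i ≤ j → (g j).1 ⊆ (g i).1 := by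
      intro i j hij
      induction j with
      | zero => simp_all
      | succ j ihj =>
        rcases Nat.lt_or_ge i (j+1) with h | h
        · exact ((hsub j).trans diff_subset).trans (ihj (Nat.lt_succ_iff.mp h))
        · have : i = j + 1 := le_antisymm hij h
          subst this; exact subset_rfl
    have hlt : ∀ i, a i < a (i + 1) := by
      intro i
      have h1 := hsub i (hmem (i + 1))
      exact lt_of_le_of_ne (Nat.sInf_le h1.1) (fun h => h1.2 h.symm)
    have hmono : StrictMono a := strictMono_nat_of_lt_succ hlt
    obtain ⟨v, hv⟩ := Finite.exists_infinite_fiber (fun i => c (g i))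
    set I : Set ℕ := (fun i => c (g i)) ⁻¹' {v} with hI
    have hIinf : I.Infinite := Set.infinite_coe_iff.mp hv
    refine ⟨a '' I, ?_, hIinf.image (hmono.injective.injOn), v, ?_⟩
    · rintro x ⟨i, _, rfl⟩
      exact hchain 0 i (Nat.zero_le i) (hmem i)
    · intro s hs hcard
      have hne : s.Nonempty := Finset.card_pos.mp (by omega)
      obtain ⟨i, hiI, hix⟩ := hs (s.min'_mem hne)
      set x := s.min' hne with hx
      set t := s.erase x with ht
      have htsub : ∀ y ∈ t, ∃ j ∈ I, i < j ∧ a j = y := by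
        intro y hy
        have hys : y ∈ s := Finset.mem_of_mem_erase hy
        have hyx : x < y := lt_of_le_of_ne (s.min'_le y hys)
          (fun h => (Finset.ne_of_mem_erase hy) h.symm)
        obtain ⟨j, hjI, hjy⟩ := hs hys
        refine ⟨j, hjI, ?_, hjy⟩
        by_contra h
        have := hmono.monotone (Nat.le_of_not_lt h)
        omega
      have htg : ↑t ⊆ (g (i + 1)).1 := by
        intro y hy
        obtain ⟨j, _, hij, rfl⟩ := htsub y hy
        exact hchain (i + 1) j hij (hmem j)
      have htcard : t.card = n := by
        rw [ht, Finset.card_erase_of_mem (s.min'_mem hne)]; omega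
      have := hc (g i) t (by rw [hgsucc i] at htg; exact htg) htcard
      have hins : insert (sInf (g i).1) t = s := by
        show insert (a i) t = s
        rw [hix, ht, Finset.insert_erase (s.min'_mem hne)]
      rw [hins] at this
      rw [this]
      exact hiI

theorem multiRamseyN {k : ℕ} (L : List (ℕ × (Finset ℕ → Fin k))) :
    ∀ (A : Set ℕ), A.Infinite →
    ∃ H, H ⊆ A ∧ H.Infinite ∧ ∀ p ∈ L, ∃ c, ∀ s : Finset ℕ, ↑s ⊆ H → s.card = p.1 → p.2 s = c := by
  induction L with
  | nil => exact fun A hA => ⟨A, subset_rfl, hA, by simp⟩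
  | cons p L ihL =>
    intro A hA
    obtain ⟨H1, hH1A, hH1inf, c, hc⟩ := ramseyN p.1 p.2 A hA
    obtain ⟨H, hHH1, hHinf, hhom⟩ := ihL H1 hH1inf
    refine ⟨H, hHH1.trans hH1A, hHinf, ?_⟩
    intro q hq
    rcases List.mem_cons.mp hq with rfl | hq
    · exact ⟨c, fun s hs => hc s (hs.trans hHH1)⟩
    · exact hhom q hq


variable (m : ℕ)

/-- Embedding of ℕ into `Iio (ω + m)`. -/
def psiC (p : ℕ) : ↥(Set.Iio (Ordinal.omega0 + (m : Ordinal))) :=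
  ⟨(p : Ordinal), lt_of_lt_of_le (Ordinal.nat_lt_omega0 p) le_self_add⟩

theorem psiC_strictMono : StrictMono (psiC m) := by
  intro p q h
  exact Subtype.mk_lt_mk.mpr (by exact_mod_cast h)

theorem psiC_injective : Function.Injective (psiC m) := (psiC_strictMono m).injective

/-- The `m` top points of `Iio (ω + m)`. -/
def phiC (i : Fin m) : ↥(Set.Iio (Ordinal.omega0 + (m : Ordinal))) :=
  ⟨Ordinal.omega0 + (i : ℕ), by
    simp only [Set.mem_Iio]
    exact (add_lt_add_iff_left _).mpr (by exact_mod_cast i.isLt)⟩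

theorem phiC_strictMono : StrictMono (phiC m) := by
  intro p q h
  exact Subtype.mk_lt_mk.mpr ((add_lt_add_iff_left _).mpr (by exact_mod_cast h))

theorem psiC_lt_phiC (p : ℕ) (i : Fin m) : psiC m p < phiC m i :=
  Subtype.mk_lt_mk.mpr (lt_of_lt_of_le (Ordinal.nat_lt_omega0 p) le_self_add)

/-- The finset of top points. -/
noncomputable def Ftail : Finset ↥(Set.Iio (Ordinal.omega0 + (m : Ordinal))) :=
  Finset.univ.map ⟨phiC m, (phiC_strictMono m).injective⟩

theorem card_Ftail : (Ftail m).card = m := by simp [Ftail]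

theorem mem_Ftail_iff (x : ↥(Set.Iio (Ordinal.omega0 + (m : Ordinal)))) :
    x ∈ Ftail m ↔ Ordinal.omega0 ≤ x.1 := by
  constructor
  · intro hx
    simp only [Ftail, Finset.mem_map, Finset.mem_univ, Function.Embedding.coeFn_mk,
      true_and] at hx
    obtain ⟨i, rfl⟩ := hx
    exact le_self_add
  · intro hx
    obtain ⟨c, hc⟩ := exists_add_of_le hx
    have hcm : c < (m : Ordinal) := by
      have := x.2
      simp only [Set.mem_Iio, hc] at this
      exact (add_lt_add_iff_left _).mp this
    have hcw : c < Ordinal.omega0 :=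
      hcm.trans_le (Ordinal.nat_lt_omega0 m).le
    obtain ⟨j, rfl⟩ := Ordinal.lt_omega0.mp hcw
    have hjm : j < m := by exact_mod_cast hcm
    simp only [Ftail, Finset.mem_map, Finset.mem_univ, Function.Embedding.coeFn_mk, true_and]
    exact ⟨⟨j, hjm⟩, by apply Subtype.ext; simp [phiC, hc]⟩

theorem psiC_not_mem_Ftail (p : ℕ) : psiC m p ∉ Ftail m := by
  rw [mem_Ftail_iff]
  exact not_le.mpr (Ordinal.nat_lt_omega0 p)

theorem eq_psiC_of_not_mem (x : ↥(Set.Iio (Ordinal.omega0 + (m : Ordinal))))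
    (hx : x ∉ Ftail m) : ∃ p, psiC m p = x := by
  rw [mem_Ftail_iff, not_le] at hx
  obtain ⟨p, hp⟩ := Ordinal.lt_omega0.mp hx
  exact ⟨p, Subtype.ext hp.symm⟩

instance : Infinite ↥(Set.Iio (Ordinal.omega0 + (m : Ordinal))) :=
  Infinite.of_injective (psiC m) (psiC_injective m)

/-- Any subset containing the tail and infinitely much of the ω-part is isomorphic
to `ℕ ⊕ₗ Fin m`. -/
theorem iso_lex (V : Set ↥(Set.Iio (Ordinal.omega0 + (m : Ordinal))))
    (hF : ∀ i, phiC m i ∈ V) (hinf : {p : ℕ | psiC m p ∈ V}.Infinite) :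
    Nonempty ((ℕ ⊕ₗ Fin m) ≃o V) := by
  classical
  set W := {p : ℕ | psiC m p ∈ V} with hW
  haveI : Infinite W := hinf.to_subtype
  let e0 : ℕ ≃o W := Nat.Subtype.orderIsoOfNat W
  let g : (ℕ ⊕ₗ Fin m) → V := fun x =>
    Sum.elim (fun p => ⟨psiC m (e0 p).1, (e0 p).2⟩) (fun i => ⟨phiC m i, hF i⟩) (ofLex x)
  have hmono : StrictMono g := by
    rintro (p | i) (q | j) hxy
    · have : p < q := Sum.Lex.inl_lt_inl_iff.mp hxy
      exact Subtype.mk_lt_mk.mpr ((psiC_strictMono m) (Subtype.coe_lt_coe.mpr (e0.strictMono this)))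
    · exact Subtype.mk_lt_mk.mpr (psiC_lt_phiC m _ _)
    · exact absurd hxy (Sum.Lex.not_inr_lt_inl)
    · have : i < j := Sum.Lex.inr_lt_inr_iff.mp hxy
      exact Subtype.mk_lt_mk.mpr (phiC_strictMono m this)
  have hsurj : Function.Surjective g := by
    rintro ⟨x, hxV⟩
    by_cases hx : x ∈ Ftail m
    · rw [mem_Ftail_iff] at hx
      obtain ⟨c, hc⟩ := exists_add_of_le hx
      have hx' : x ∈ Ftail m := (mem_Ftail_iff m x).mpr hx
      simp only [Ftail, Finset.mem_map, Finset.mem_univ, Function.Embedding.coeFn_mk,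
        true_and] at hx'
      obtain ⟨i, hi⟩ := hx'
      exact ⟨toLex (Sum.inr i), Subtype.ext hi⟩
    · obtain ⟨p, hp⟩ := eq_psiC_of_not_mem m x hx
      have hpW : p ∈ W := by rw [hW]; simp only [Set.mem_setOf_eq, hp]; exact hxV
      obtain ⟨q, hq⟩ := e0.surjective ⟨p, hpW⟩
      refine ⟨toLex (Sum.inl q), ?_⟩
      apply Subtype.ext
      show psiC m (e0 q).1 = x
      rw [hq]
      exact hp
  exact ⟨StrictMono.orderIsoOfSurjective g hmono hsurj⟩

theorem iso_of_good (U : Set ↥(Set.Iio (Ordinal.omega0 + (m : Ordinal))))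
    (hF : ∀ i, phiC m i ∈ U) (hinf : {p : ℕ | psiC m p ∈ U}.Infinite) :
    Nonempty (U ≃o ↥(Set.Iio (Ordinal.omega0 + (m : Ordinal)))) := by
  obtain ⟨e1⟩ := iso_lex m U hF hinf
  obtain ⟨e2⟩ := iso_lex m Set.univ (fun _ => Set.mem_univ _)
    (by simpa using Set.infinite_univ)
  exact ⟨e1.symm.trans (e2.trans OrderIso.Set.univ)⟩

theorem preds_infinite_iff (x : ↥(Set.Iio (Ordinal.omega0 + (m : Ordinal)))) :
    {y : ↥(Set.Iio (Ordinal.omega0 + (m : Ordinal))) | y < x}.Infinite ↔ x ∈ Ftail m := by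
  rw [mem_Ftail_iff]
  constructor
  · intro h
    by_contra hx
    rw [not_le] at hx
    obtain ⟨p, hp⟩ := Ordinal.lt_omega0.mp hx
    apply h
    apply Set.Finite.subset ((Set.finite_Iio p).image (psiC m))
    intro y hy
    have hyp : y.1 < (p : Ordinal) := by
      have hy' : y < x := hy
      have := Subtype.coe_lt_coe.mpr hy'
      rwa [hp] at this
    obtain ⟨q, hq⟩ := Ordinal.lt_omega0.mp (hyp.trans (Ordinal.nat_lt_omega0 p))
    have hqp : q < p := by rw [hq] at hyp; exact_mod_cast hyp
    exact ⟨q, hqp, Subtype.ext hq.symm⟩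
  · intro hx
    apply Set.Infinite.mono (s := Set.range (psiC m))
    · rintro y ⟨p, rfl⟩
      have : ((psiC m p : ↥(Set.Iio (Ordinal.omega0 + (m : Ordinal)))) : Ordinal) < (x : Ordinal) :=
        lt_of_lt_of_le (Ordinal.nat_lt_omega0 p) hx
      exact Subtype.coe_lt_coe.mp this
    · exact Set.infinite_range_of_injective (psiC_injective m)

/-- Any copy of the whole order inside itself contains the whole tail and
infinitely much of the ω-part. -/
theorem good_of_iso (U : Set ↥(Set.Iio (Ordinal.omega0 + (m : Ordinal))))
    (e : U ≃o ↥(Set.Iio (Ordinal.omega0 + (m : Ordinal)))) :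
    (∀ i, phiC m i ∈ U) ∧ {p : ℕ | psiC m p ∈ U}.Infinite := by
  constructor
  · -- the tail is contained in U
    set A : Set U := {x : U | {y : U | y < x}.Infinite} with hA
    have hiff : ∀ x : U, x ∈ A ↔ e x ∈ Ftail m := by
      intro x
      rw [hA, Set.mem_setOf_eq, ← preds_infinite_iff m (e x)]
      have himg : (⇑e) '' {y : U | y < x} = {z | z < e x} := by
        ext z
        constructor
        · rintro ⟨y, hy, rfl⟩
          exact e.strictMono hy
        · intro hz
          exact ⟨e.symm z, by simpa using e.symm.strictMono hz, by simp⟩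
      rw [← himg, Set.infinite_image_iff (e.injective.injOn)]
    have hAeq : A = (⇑e) ⁻¹' ↑(Ftail m) := by
      ext x; rw [hiff]; rfl
    have himg2 : (⇑e) ⁻¹' ↑(Ftail m) = (⇑e.symm) '' ↑(Ftail m) := by
      ext x
      simp only [Set.mem_preimage, Set.mem_image]
      constructor
      · intro h; exact ⟨e x, h, by simp⟩
      · rintro ⟨z, hz, rfl⟩; simpa using hz
    have hAn : A.ncard = m := by
      rw [hAeq, himg2, Set.ncard_image_of_injective _ e.symm.injective,
        Set.ncard_coe_finset, card_Ftail]
    have hBsub : Subtype.val '' A ⊆ ↑(Ftail m) := by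
      rintro _ ⟨x, hx, rfl⟩
      rw [Finset.mem_coe, ← preds_infinite_iff m]
      have hx' : {y : U | y < x}.Infinite := hx
      apply Set.Infinite.mono (s := Subtype.val '' {y : U | y < x})
      · rintro _ ⟨y, hy, rfl⟩
        have hy' : y < x := hy
        exact Subtype.coe_lt_coe.mpr hy'
      · exact hx'.image (Subtype.val_injective.injOn)
    have hBn : (Subtype.val '' A).ncard = m := by
      rw [Set.ncard_image_of_injective _ Subtype.val_injective, hAn]
    have hBeq : Subtype.val '' A = ↑(Ftail m) := by
      exact Set.eq_of_subset_of_ncard_le hBsub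
        (by rw [hBn, Set.ncard_coe_finset, card_Ftail]) (Ftail m).finite_toSet
    intro i
    have hmem : (phiC m i : ↥(Set.Iio (Ordinal.omega0 + (m : Ordinal)))) ∈ Subtype.val '' A := by
      rw [hBeq]
      simp only [Finset.coe_sort_coe, Finset.mem_coe, Ftail, Finset.mem_map, Finset.mem_univ,
        Function.Embedding.coeFn_mk, true_and]
      exact ⟨i, rfl⟩
    obtain ⟨x, _, hx⟩ := hmem
    rw [← hx]
    exact x.2
  · -- infinitely many ω-part points
    have hUinf : U.Infinite := by
      rw [← Set.infinite_coe_iff]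
      exact Infinite.of_surjective (⇑e) e.surjective
    have hsub : U \ ↑(Ftail m) ⊆ psiC m '' {p : ℕ | psiC m p ∈ U} := by
      rintro x ⟨hxU, hxF⟩
      obtain ⟨p, rfl⟩ := eq_psiC_of_not_mem m x hxF
      exact ⟨p, hxU, rfl⟩
    have hdiff : (U \ ↑(Ftail m)).Infinite := hUinf.diff (Finset.finite_toSet _)
    exact ((hdiff.mono hsub).of_image _)


noncomputable def Ttypes (m n : ℕ) : Finset (Finset ↥(Set.Iio (Ordinal.omega0 + (m : Ordinal)))) :=
  (Ftail m).powerset.filter (fun S => S.card ≤ n)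

theorem card_Ttypes (m n : ℕ) :
    (Ttypes m n).card = ∑ j ∈ Finset.range (n + 1), m.choose j := by
  classical
  have heq : Ttypes m n = (Finset.range (n + 1)).biUnion (fun j => (Ftail m).powersetCard j) := by
    ext S
    simp only [Ttypes, Finset.mem_filter, Finset.mem_powerset, Finset.mem_biUnion,
      Finset.mem_range, Finset.mem_powersetCard, Nat.lt_succ_iff]
    constructor
    · rintro ⟨h1, h2⟩; exact ⟨S.card, h2, h1, rfl⟩
    · rintro ⟨j, hj, h1, rfl⟩; exact ⟨h1, hj⟩
  rw [heq, Finset.card_biUnion]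
  · refine Finset.sum_congr rfl (fun j _ => ?_)
    rw [Finset.card_powersetCard, card_Ftail]
  · intro a _ b _ hab
    rw [Function.onFun, Finset.disjoint_left]
    intro S hSa hSb
    rw [Finset.mem_powersetCard] at hSa hSb
    exact hab (hSa.2 ▸ hSb.2)

theorem mem_Ttypes (m n : ℕ) {S : Finset ↥(Set.Iio (Ordinal.omega0 + (m : Ordinal)))} :
    S ∈ Ttypes m n ↔ S ⊆ Ftail m ∧ S.card ≤ n := by
  simp [Ttypes]

noncomputable def psiEmb (m : ℕ) : ℕ ↪ ↥(Set.Iio (Ordinal.omega0 + (m : Ordinal))) :=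
  ⟨psiC m, psiC_injective m⟩

theorem upperBound (m n : ℕ) :
    brdLE ↥(Set.Iio (Ordinal.omega0 + (m : Ordinal))) n
      (∑ j ∈ Finset.range (n + 1), m.choose j) := by
  classical
  intro k hk χ
  let d : Fin k := ⟨0, by omega⟩
  let χS : Finset ↥(Set.Iio (Ordinal.omega0 + (m : Ordinal))) → Finset ℕ → Fin k := fun S t =>
    if h : (S ∪ t.map (psiEmb m)).card = n then χ ((S ∪ t.map (psiEmb m)).orderEmbOfFin h) else d
  obtain ⟨H, -, hHinf, hhom⟩ := multiRamseyN
    ((Ttypes m n).toList.map fun S => (n - S.card, χS S)) Set.univ Set.infinite_univ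
  have hcol : ∀ S ∈ Ttypes m n, ∃ c, ∀ t : Finset ℕ, ↑t ⊆ H → t.card = n - S.card →
      χS S t = c := fun S hS => hhom _ (List.mem_map_of_mem (Finset.mem_toList.mpr hS))
  haveI : Nonempty (Fin k) := ⟨d⟩
  choose! col hcol using hcol
  set U : Set ↥(Set.Iio (Ordinal.omega0 + (m : Ordinal))) := psiC m '' H ∪ ↑(Ftail m) with hU
  have hFU : ∀ i, phiC m i ∈ U := fun i => Or.inr (by
    simp only [Finset.mem_coe, Ftail, Finset.mem_map, Finset.mem_univ,
      Function.Embedding.coeFn_mk, true_and]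
    exact ⟨i, rfl⟩)
  have hWU : {p : ℕ | psiC m p ∈ U}.Infinite := hHinf.mono (fun p hp => Or.inl ⟨p, hp, rfl⟩)
  refine ⟨U, iso_of_good m U hFU hWU, ?_⟩
  have hsub : χ '' {f : Fin n ↪o ↥(Set.Iio (Ordinal.omega0 + (m : Ordinal))) | ∀ i, f i ∈ U} ⊆
      ↑((Ttypes m n).attach.image fun S => col S.1) := by
    rintro _ ⟨f, hf, rfl⟩
    set R : Finset ↥(Set.Iio (Ordinal.omega0 + (m : Ordinal))) := Finset.univ.image ⇑f with hR
    have hfR : ∀ x, x ∈ R ↔ ∃ i, f i = x := by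
      intro x; simp [hR]
    have hRcard : R.card = n := by
      rw [hR, Finset.card_image_of_injective _ f.injective, Finset.card_univ, Fintype.card_fin]
    set S := R ∩ Ftail m with hS
    have hSmem : S ∈ Ttypes m n := (mem_Ttypes m n).mpr
      ⟨Finset.inter_subset_right,
        le_trans (Finset.card_le_card Finset.inter_subset_left) hRcard.le⟩
    have hdiff_sub : ∀ x ∈ R \ Ftail m, ∃ p ∈ H, psiC m p = x := by
      intro x hx
      obtain ⟨hxR, hxF⟩ := Finset.mem_sdiff.mp hx
      obtain ⟨i, rfl⟩ := (hfR x).mp hxR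
      rcases hf i with ⟨p, hp, hpx⟩ | hxF'
      · exact ⟨p, hp, hpx⟩
      · exact absurd hxF' hxF
    set t : Finset ℕ := (R \ Ftail m).preimage (psiC m) ((psiC_injective m).injOn) with ht
    have htmem : ∀ p, p ∈ t ↔ psiC m p ∈ R \ Ftail m := by
      intro p; rw [ht, Finset.mem_preimage]
    have htmap : t.map (psiEmb m) = R \ Ftail m := by
      ext x
      simp only [Finset.mem_map, psiEmb, Function.Embedding.coeFn_mk]
      constructor
      · rintro ⟨p, hp, rfl⟩
        exact (htmem p).mp hp
      · intro hx
        obtain ⟨p, _, rfl⟩ := hdiff_sub x hx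
        exact ⟨p, (htmem p).mpr hx, rfl⟩
    have hunion : S ∪ t.map (psiEmb m) = R := by
      rw [htmap, hS, Finset.union_comm, Finset.sdiff_union_inter]
    have hft : ↑t ⊆ H := by
      intro p hp
      obtain ⟨q, hq, hqp⟩ := hdiff_sub (psiC m p) ((htmem p).mp hp)
      rwa [← psiC_injective m hqp]
    have htcard : t.card = n - S.card := by
      have h1 : (t.map (psiEmb m)).card = t.card := Finset.card_map _
      rw [htmap] at h1
      have h2 := Finset.card_inter_add_card_sdiff R (Ftail m)
      rw [← hS] at h2
      omega
    have hfeq : f = R.orderEmbOfFin hRcard :=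
      Finset.orderEmbOfFin_unique' hRcard (fun i => (hfR (f i)).mpr ⟨i, rfl⟩)
    have hkey : χ f = χS S t := by
      have hcond : (S ∪ t.map (psiEmb m)).card = n := by rw [hunion]; exact hRcard
      have hoe : R.orderEmbOfFin hRcard = (S ∪ t.map (psiEmb m)).orderEmbOfFin hcond :=
        Finset.orderEmbOfFin_unique' hcond
          (fun i => by rw [hunion]; exact Finset.orderEmbOfFin_mem R hRcard i)
      simp only [χS]
      rw [dif_pos hcond, hfeq, hoe]
    rw [hkey, hcol S hSmem t hft htcard]
    exact Finset.mem_coe.mpr (Finset.mem_image.mpr ⟨⟨S, hSmem⟩, Finset.mem_attach _ _, rfl⟩)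
  refine le_trans (Set.ncard_le_ncard hsub (Finset.finite_toSet _)) ?_
  rw [Set.ncard_coe_finset]
  refine le_trans Finset.card_image_le ?_
  rw [Finset.card_attach, card_Ttypes]

theorem lowerBound (m n : ℕ) (hm : 1 ≤ m) (hn : 1 ≤ n) (s : ℕ)
    (hs : brdLE ↥(Set.Iio (Ordinal.omega0 + (m : Ordinal))) n s) :
    (∑ j ∈ Finset.range (n + 1), m.choose j) ≤ s := by
  classical
  set Sig := ∑ j ∈ Finset.range (n + 1), m.choose j with hSig
  have hk2 : 2 ≤ Sig := by
    have h01 : ({0, 1} : Finset ℕ) ⊆ Finset.range (n + 1) := by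
      intro x hx
      simp only [Finset.mem_insert, Finset.mem_singleton] at hx
      rcases hx with rfl | rfl <;> simp [Finset.mem_range] <;> omega
    have hle := Finset.sum_le_sum_of_subset (f := fun j => m.choose j) h01
    rw [Finset.sum_pair (by norm_num : (0 : ℕ) ≠ 1)] at hle
    simp only [Nat.choose_zero_right, Nat.choose_one_right] at hle
    omega
  have hT : (Ttypes m n).card = Sig := card_Ttypes m n
  let d : Fin Sig := ⟨0, by omega⟩
  let enc : Finset ↥(Set.Iio (Ordinal.omega0 + (m : Ordinal))) → Fin Sig := fun S =>
    if h : S ∈ Ttypes m n then Fin.cast hT ((Ttypes m n).equivFin ⟨S, h⟩) else d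
  have hencinj : ∀ S ∈ Ttypes m n, ∀ S' ∈ Ttypes m n, enc S = enc S' → S = S' := by
    intro S hS S' hS' h
    simp only [enc, dif_pos hS, dif_pos hS'] at h
    have hval : (((Ttypes m n).equivFin ⟨S, hS⟩ : Fin _) : ℕ) =
        (((Ttypes m n).equivFin ⟨S', hS'⟩ : Fin _) : ℕ) := by
      have := congrArg Fin.val h
      simpa using this
    have := (Ttypes m n).equivFin.injective (Fin.ext hval)
    exact congrArg Subtype.val this
  let χ : (Fin n ↪o ↥(Set.Iio (Ordinal.omega0 + (m : Ordinal)))) → Fin Sig := fun f =>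
    enc ((Finset.univ.image ⇑f) ∩ Ftail m)
  obtain ⟨U, ⟨e⟩, hcard⟩ := hs Sig hk2 χ
  obtain ⟨hFU, hWU⟩ := good_of_iso m U e
  have hFsubU : ↑(Ftail m) ⊆ U := by
    intro x hx
    simp only [Finset.mem_coe, Ftail, Finset.mem_map, Finset.mem_univ,
      Function.Embedding.coeFn_mk, true_and] at hx
    obtain ⟨i, rfl⟩ := hx
    exact hFU i
  have hmain : ∀ S ∈ Ttypes m n, enc S ∈ χ ''
      {f : Fin n ↪o ↥(Set.Iio (Ordinal.omega0 + (m : Ordinal))) | ∀ i, f i ∈ U} := by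
    intro S hS
    obtain ⟨hSF, hScard⟩ := (mem_Ttypes m n).mp hS
    obtain ⟨t0, ht0sub, ht0fin, ht0card⟩ := hWU.exists_subset_ncard_eq (n - S.card)
    set t : Finset ℕ := ht0fin.toFinset with htdef
    have htsub : ∀ p ∈ t, psiC m p ∈ U := fun p hp => ht0sub (ht0fin.mem_toFinset.mp hp)
    have htcard : t.card = n - S.card := by
      rw [← Set.ncard_coe_finset, htdef, Set.Finite.coe_toFinset]
      exact ht0card
    set B := S ∪ t.map (psiEmb m) with hB
    have hdisj : Disjoint S (t.map (psiEmb m)) := by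
      rw [Finset.disjoint_left]
      intro x hxS hxt
      obtain ⟨p, hp, rfl⟩ := Finset.mem_map.mp hxt
      exact psiC_not_mem_Ftail m p (hSF hxS)
    have hBcard : B.card = n := by
      rw [hB, Finset.card_union_of_disjoint hdisj, Finset.card_map]
      omega
    have hBU : ∀ x ∈ B, x ∈ U := by
      intro x hx
      rcases Finset.mem_union.mp hx with h | h
      · exact hFsubU (hSF h)
      · obtain ⟨p, hp, rfl⟩ := Finset.mem_map.mp h
        exact htsub p hp
    refine ⟨B.orderEmbOfFin hBcard, fun i => hBU _ (Finset.orderEmbOfFin_mem B hBcard i), ?_⟩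
    have himg : Finset.univ.image ⇑(B.orderEmbOfFin hBcard) = B := by
      ext x
      simp only [Finset.mem_image, Finset.mem_univ, true_and]
      constructor
      · rintro ⟨i, rfl⟩; exact Finset.orderEmbOfFin_mem B hBcard i
      · intro hx
        have hx' : x ∈ Set.range ⇑(B.orderEmbOfFin hBcard) := by
          rw [Finset.range_orderEmbOfFin]; exact hx
        obtain ⟨i, rfl⟩ := hx'
        exact ⟨i, rfl⟩
    have hBS : B ∩ Ftail m = S := by
      ext x
      simp only [Finset.mem_inter, hB, Finset.mem_union]
      constructor
      · rintro ⟨h1 | h1, h2⟩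
        · exact h1
        · obtain ⟨p, hp, rfl⟩ := Finset.mem_map.mp h1
          exact absurd h2 (psiC_not_mem_Ftail m p)
      · intro h; exact ⟨Or.inl h, hSF h⟩
    simp only [χ, himg, hBS]
  have himgsub : enc '' ↑(Ttypes m n) ⊆ χ ''
      {f : Fin n ↪o ↥(Set.Iio (Ordinal.omega0 + (m : Ordinal))) | ∀ i, f i ∈ U} := by
    rintro _ ⟨S, hS, rfl⟩
    exact hmain S (Finset.mem_coe.mp hS)
  have h1 : (enc '' ↑(Ttypes m n)).ncard = Sig := by
    rw [Set.ncard_image_of_injOn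
      (fun S hS S' hS' => hencinj S (Finset.mem_coe.mp hS) S' (Finset.mem_coe.mp hS')),
      Set.ncard_coe_finset, hT]
  calc Sig = (enc '' ↑(Ttypes m n)).ncard := h1.symm
    _ ≤ (χ '' {f : Fin n ↪o ↥(Set.Iio (Ordinal.omega0 + (m : Ordinal))) | ∀ i, f i ∈ U}).ncard :=
        Set.ncard_le_ncard himgsub (Set.toFinite _)
    _ ≤ s := hcard

/-- `T(n, ω + m) = ∑_{j=0}^n C(m, j)`; in particular if `n ≥ m` this equals `2 ^ m`. -/
theorem stmt5 (m n : ℕ) (hm : 1 ≤ m) (hn : 1 ≤ n) :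
    hasBRD ↥(Set.Iio (Ordinal.omega0 + m)) n (∑ j ∈ Finset.range (n + 1), m.choose j) ∧
    (m ≤ n → ∑ j ∈ Finset.range (n + 1), m.choose j = 2 ^ m) := by
  refine ⟨⟨upperBound m n, fun s hs => lowerBound m n hm hn s hs⟩, ?_⟩
  intro hmn
  have hsub : Finset.range (m + 1) ⊆ Finset.range (n + 1) :=
    Finset.range_subset_range.mpr (by omega)
  have hz : ∀ x ∈ Finset.range (n + 1), x ∉ Finset.range (m + 1) → m.choose x = 0 := by
    intro x _ hx
    exact Nat.choose_eq_zero_of_lt (by simpa [Nat.lt_succ_iff, not_le] using hx)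
  rw [← Finset.sum_subset hsub hz, Nat.sum_range_choose]
end

section
/- Let A be a countable well-ordered set with finite big Ramsey degrees and fix integers n, m ≥ 1. For every (n, m)-multiplicative type τ, every k ≥ 2 and every coloring χ of the embeddings n ↪ A·m with multiplicative type τ, there is a subset U ⊆ A order-isomorphic to A such that χ attains at most T(r(τ), A) colors on embeddings n ↪ U·m of type τ. -/
open Set

/-- The level of `f i` for an embedding `f : n ↪ A·m` (with `A·m` realized
antilexicographically as `Fin m ×ₗ A`). -/
def lvls {A : Type*} [LinearOrder A] {n m : ℕ} (f : Fin n ↪o (Fin m ×ₗ A)) (i : Fin n) :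
    Fin m := (ofLex (f i)).1

/-- The value of `f i` for an embedding `f : n ↪ A·m`. -/
def vals {A : Type*} [LinearOrder A] {n m : ℕ} (f : Fin n ↪o (Fin m ×ₗ A)) (i : Fin n) :
    A := (ofLex (f i)).2

/-- The multiplicative type of an embedding `f : n ↪ A·m`: the level of each point
(which also records the number `p_ℓ` of points on each level, since levels are monotone)
together with the total quasiorder on `Fin n` comparing values. -/
def mulTp {A : Type*} [LinearOrder A] {n m : ℕ} (f : Fin n ↪o (Fin m ×ₗ A)) :
    (Fin n → Fin m) × (Fin n → Fin n → Bool) :=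
  (lvls f, fun i j => decide (vals f i ≤ vals f j))

/-- The rank of a multiplicative type: the number of equivalence classes of the
total quasiorder `σ`. -/
noncomputable def rankTp {n : ℕ} (σ : Fin n → Fin n → Bool) : ℕ :=
  Nat.card (Quot fun i j => σ i j = true ∧ σ j i = true)


lemma aux_card {A : Type*} [DecidableEq A] {n : ℕ} (v : Fin n → A) :
    Nat.card (Quot fun i j => v i = v j) = (Finset.image v Finset.univ).card := by
  have e : (Quot fun i j => v i = v j) ≃ Set.range v := Setoid.quotientKerEquivRange v
  rw [Nat.card_congr e]
  have : Set.range v = ↑(Finset.image v Finset.univ) := by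
    simp
  rw [this, Nat.card_coe_set_eq, Set.ncard_coe_finset]

lemma index_unique {n r : ℕ} {c d : Fin n → Fin r} (hc : Function.Surjective c)
    (hd : Function.Surjective d) (h : ∀ i j, c i ≤ c j ↔ d i ≤ d j) : c = d := by
  have hlt : ∀ i j, c i < c j ↔ d i < d j := by
    intro i j
    simp only [lt_iff_le_not_ge, h]
  have hcd : ∀ i j, c i = c j → d i = d j := fun i j hij =>
    le_antisymm ((h i j).1 hij.le) ((h j i).1 hij.ge)
  set φ : Fin r → Fin r := fun a => d (Function.surjInv hc a) with hφ
  have hφc : ∀ i, φ (c i) = d i := fun i =>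
    hcd _ _ (Function.surjInv_eq hc (c i))
  have hmono : StrictMono φ := by
    intro a b hab
    apply (hlt _ _).1
    rwa [Function.surjInv_eq hc, Function.surjInv_eq hc]
  have hsurj : Set.range φ = Set.range (id : Fin r → Fin r) := by
    rw [Set.range_id, Set.eq_univ_iff_forall]
    intro b
    obtain ⟨i, rfl⟩ := hd b
    exact ⟨c i, hφc i⟩
  have : φ = id := (@StrictMono.range_inj (Fin r) (Fin r) _ _ (Finite.to_wellFoundedLT) _ _ hmono strictMono_id).1 hsurj
  funext i
  rw [← hφc i, this, id]

noncomputable def gEmb {A : Type*} [LinearOrder A] [DecidableEq A] {n r : ℕ} (w : Fin n → A)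
    (hc : (Finset.image w Finset.univ).card = r) : Fin r ↪o A :=
  ((Finset.image w Finset.univ).orderIsoOfFin hc).toOrderEmbedding.trans
    (OrderEmbedding.subtype _)

noncomputable def cIdx {A : Type*} [LinearOrder A] [DecidableEq A] {n r : ℕ} (w : Fin n → A)
    (hc : (Finset.image w Finset.univ).card = r) (i : Fin n) : Fin r :=
  ((Finset.image w Finset.univ).orderIsoOfFin hc).symm
    ⟨w i, Finset.mem_image_of_mem w (Finset.mem_univ i)⟩

lemma gEmb_cIdx {A : Type*} [LinearOrder A] [DecidableEq A] {n r : ℕ} (w : Fin n → A)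
    (hc : (Finset.image w Finset.univ).card = r) (i : Fin n) :
    gEmb w hc (cIdx w hc i) = w i := by
  simp [gEmb, cIdx]

lemma cIdx_le {A : Type*} [LinearOrder A] [DecidableEq A] {n r : ℕ} (w : Fin n → A)
    (hc : (Finset.image w Finset.univ).card = r) (i j : Fin n) :
    cIdx w hc i ≤ cIdx w hc j ↔ w i ≤ w j := by
  rw [cIdx, cIdx, OrderIso.le_iff_le]
  rfl

lemma cIdx_surj {A : Type*} [LinearOrder A] [DecidableEq A] {n r : ℕ} (w : Fin n → A)
    (hc : (Finset.image w Finset.univ).card = r) : Function.Surjective (cIdx w hc) := by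
  intro a
  have hmem : (((Finset.image w Finset.univ).orderIsoOfFin hc) a : A) ∈
      Finset.image w Finset.univ := (((Finset.image w Finset.univ).orderIsoOfFin hc) a).2
  obtain ⟨i, -, hi⟩ := Finset.mem_image.1 hmem
  refine ⟨i, ?_⟩
  rw [cIdx]
  have : (⟨w i, Finset.mem_image_of_mem w (Finset.mem_univ i)⟩ :
      (Finset.image w Finset.univ : Finset A)) =
      ((Finset.image w Finset.univ).orderIsoOfFin hc) a := Subtype.ext hi
  rw [this, OrderIso.symm_apply_apply]


/-- Lemma on one multiplicative type: for a countable well-ordered `A` with finite big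
Ramsey degrees (`T j = T(j, A)` for `j ≥ 1`), any finite coloring of the embeddings
`n ↪ A·m` of multiplicative type `τ` admits a `U ⊆ A` order-isomorphic to `A` such that
at most `T (r(τ))` colors occur on embeddings `n ↪ U·m` of type `τ`. -/
theorem stmt6 {A : Type*} [LinearOrder A] [WellFoundedLT A] [Countable A]
    (T : ℕ → ℕ) (hT : ∀ j : ℕ, 1 ≤ j → hasBRD A j (T j))
    (n m : ℕ) (hn : 1 ≤ n) (hm : 1 ≤ m)
    (τ : (Fin n → Fin m) × (Fin n → Fin n → Bool))
    (hτ : ∃ f : Fin n ↪o (Fin m ×ₗ A), mulTp f = τ)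
    (k : ℕ) (hk : 2 ≤ k)
    (χ : {f : Fin n ↪o (Fin m ×ₗ A) // mulTp f = τ} → Fin k) :
    ∃ U : Set A, Nonempty (U ≃o A) ∧
      (χ '' {f | ∀ i : Fin n, vals f.1 i ∈ U}).ncard ≤ T (rankTp τ.2) := by
  classical
  obtain ⟨f₀, hf₀⟩ := hτ
  set v : Fin n → A := vals f₀ with hv
  have hτ1 : ∀ i, τ.1 i = lvls f₀ i := by
    intro i; rw [← hf₀]; rfl
  have hτ2 : ∀ i j, τ.2 i j = decide (v i ≤ v j) := by
    intro i j; rw [← hf₀]; rfl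
  set r : ℕ := rankTp τ.2 with hr
  have hrel : ∀ w : Fin n → A, (∀ i j, w i ≤ w j ↔ v i ≤ v j) →
      (Finset.image w Finset.univ).card = r := by
    intro w hw
    rw [← aux_card w, hr, rankTp]
    apply Nat.card_congr
    apply Quot.congrRight
    intro i j
    rw [hτ2, hτ2]
    simp only [decide_eq_true_eq]
    rw [← hw i j, ← hw j i]
    exact le_antisymm_iff
  have hcv : (Finset.image v Finset.univ).card = r := hrel v (fun i j => Iff.rfl)
  have hr1 : 1 ≤ r := by
    rw [← hcv]
    exact Finset.card_pos.2
      ⟨v ⟨0, hn⟩, Finset.mem_image_of_mem _ (Finset.mem_univ _)⟩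
  have clt : ∀ i j, cIdx v hcv i < cIdx v hcv j ↔ v i < v j := by
    intro i j
    simp only [lt_iff_le_not_ge, cIdx_le]
  have hFmono : ∀ g : Fin r ↪o A,
      StrictMono (fun i => toLex ((τ.1 i, g (cIdx v hcv i)) : Fin m × A)) := by
    intro g i j hij
    have h0 : f₀ i < f₀ j := f₀.lt_iff_lt.2 hij
    have h1 : ∀ i, f₀ i = toLex ((τ.1 i, v i) : Fin m × A) := by
      intro i; rw [hτ1 i]; rfl
    rw [h1 i, h1 j, Prod.Lex.lt_iff] at h0
    show toLex ((τ.1 i, g (cIdx v hcv i)) : Fin m × A) <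
      toLex ((τ.1 j, g (cIdx v hcv j)) : Fin m × A)
    rw [Prod.Lex.lt_iff]
    rcases h0 with h0 | ⟨he, hlt⟩
    · exact Or.inl h0
    · exact Or.inr ⟨he, g.lt_iff_lt.2 ((clt i j).2 hlt)⟩
  let F : (Fin r ↪o A) → (Fin n ↪o (Fin m ×ₗ A)) := fun g =>
    OrderEmbedding.ofStrictMono _ (hFmono g)
  have hmul : ∀ g : Fin r ↪o A, mulTp (F g) = τ := by
    intro g
    show (lvls (F g), fun i j => decide (vals (F g) i ≤ vals (F g) j)) = (τ.1, τ.2)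
    refine Prod.ext ?_ ?_
    · funext i; rfl
    · funext i j
      show decide (g (cIdx v hcv i) ≤ g (cIdx v hcv j)) = τ.2 i j
      rw [hτ2 i j]
      exact decide_eq_decide.2 (g.le_iff_le.trans (cIdx_le v hcv i j))
  obtain ⟨U, hUiso, hUcard⟩ := (hT r hr1).1 k hk (fun g => χ ⟨F g, hmul g⟩)
  refine ⟨U, hUiso, le_trans (Set.ncard_le_ncard ?_ (Set.toFinite _)) hUcard⟩
  rintro x ⟨f, hf, rfl⟩
  set w : Fin n → A := vals f.1 with hwdef
  have hw : ∀ i j, w i ≤ w j ↔ v i ≤ v j := by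
    intro i j
    have h2 : decide (w i ≤ w j) = decide (v i ≤ v j) := by
      rw [← hτ2 i j, ← f.2]; rfl
    exact decide_eq_decide.1 h2
  have hcw : (Finset.image w Finset.univ).card = r := hrel w hw
  have hceq : cIdx w hcw = cIdx v hcv :=
    index_unique (cIdx_surj w hcw) (cIdx_surj v hcv)
      (fun i j => by rw [cIdx_le, cIdx_le, hw])
  refine ⟨gEmb w hcw, ?_, ?_⟩
  · intro a
    obtain ⟨i, rfl⟩ := cIdx_surj w hcw a
    rw [gEmb_cIdx]
    exact hf i
  · show χ ⟨F (gEmb w hcw), _⟩ = χ f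
    congr 1
    apply Subtype.ext
    apply DFunLike.ext
    intro i
    show toLex ((τ.1 i, gEmb w hcw (cIdx v hcv i)) : Fin m × A) = f.1 i
    rw [← hceq, gEmb_cIdx]
    have h3 : τ.1 i = lvls f.1 i := (congrFun (congrArg Prod.fst f.2) i).symm
    rw [h3]
    rfl
end

section
/- Let α be a countable ordinal with finite big Ramsey degrees. Then for every integer m ≥ 1 the ordinal α·m has finite big Ramsey degrees; moreover T(n, α·m) ≤ Σ_{τ} T(r(τ), α), the sum over all (n, m)-multiplicative types τ. -/
open Set

section Aux

variable {A : Type*} [LinearOrder A] {n m : ℕ}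

/-- number of equivalence classes equals number of distinct values -/
lemma rank_eq_card (v : Fin n → A) :
    Nat.card (Quot fun i j => (decide (v i ≤ v j)) = true ∧ (decide (v j ≤ v i)) = true)
      = (Finset.image v Finset.univ).card := by
  have e : (Quot fun i j => (decide (v i ≤ v j)) = true ∧ (decide (v j ≤ v i)) = true)
      ≃ ↥(Finset.image v Finset.univ) := by
    refine Equiv.ofBijective
      (Quot.lift (fun i => (⟨v i, Finset.mem_image_of_mem v (Finset.mem_univ i)⟩ :
          ↥(Finset.image v Finset.univ)))
        (fun a b hab => ?_)) ⟨?_, ?_⟩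
    · simp only [decide_eq_true_eq] at hab
      exact Subtype.ext (le_antisymm hab.1 hab.2)
    · refine Quot.ind fun a => Quot.ind fun b h => ?_
      have : v a = v b := Subtype.ext_iff.mp h
      exact Quot.sound (by simp [this])
    · rintro ⟨x, hx⟩
      obtain ⟨i, -, rfl⟩ := Finset.mem_image.mp hx
      exact ⟨Quot.mk _ i, rfl⟩
  rw [Nat.card_congr e, Nat.card_eq_fintype_card, Fintype.card_coe]

lemma rankTp_vals (f : Fin n ↪o (Fin m ×ₗ A)) :
    rankTp (mulTp f).2 = (Finset.image (vals f) Finset.univ).card :=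
  rank_eq_card (vals f)

lemma rankTp_pos (σ : Fin n → Fin n → Bool) (hn : 1 ≤ n) : 1 ≤ rankTp σ := by
  have : Nonempty (Fin n) := ⟨⟨0, hn⟩⟩
  have : Nonempty (Quot fun i j => σ i j = true ∧ σ j i = true) :=
    Nonempty.map (Quot.mk _) this
  exact Nat.card_pos

lemma lvls_eq_of_tp {f g : Fin n ↪o (Fin m ×ₗ A)} (h : mulTp f = mulTp g) :
    lvls f = lvls g := congrArg Prod.fst h

lemma vals_le_iff_of_tp {f g : Fin n ↪o (Fin m ×ₗ A)} (h : mulTp f = mulTp g) (i j : Fin n) :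
    vals f i ≤ vals f j ↔ vals g i ≤ vals g j := by
  have h2 := congrArg Prod.snd h
  have := congrFun (congrFun h2 i) j
  simpa [mulTp] using decide_eq_decide.mp this

lemma vals_eq_of_tp {f g : Fin n ↪o (Fin m ×ₗ A)} (h : mulTp f = mulTp g) {i j : Fin n}
    (hv : vals f i = vals f j) : vals g i = vals g j :=
  le_antisymm ((vals_le_iff_of_tp h i j).mp hv.le) ((vals_le_iff_of_tp h j i).mp hv.ge)

lemma vals_lt_iff_of_tp {f g : Fin n ↪o (Fin m ×ₗ A)} (h : mulTp f = mulTp g) (i j : Fin n) :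
    vals f i < vals f j ↔ vals g i < vals g j := by
  simp only [lt_iff_not_ge]
  exact not_congr (vals_le_iff_of_tp h j i)

/-- the rank of the value of `i` among all values of `f₀` -/
noncomputable def rk (f₀ : Fin n ↪o (Fin m ×ₗ A)) {r : ℕ}
    (hc : (Finset.image (vals f₀) Finset.univ).card = r) (i : Fin n) : Fin r :=
  ((Finset.image (vals f₀) Finset.univ).orderIsoOfFin hc).symm
    ⟨vals f₀ i, Finset.mem_image_of_mem _ (Finset.mem_univ i)⟩

lemma rk_le_rk (f₀ : Fin n ↪o (Fin m ×ₗ A)) {r : ℕ}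
    (hc : (Finset.image (vals f₀) Finset.univ).card = r) (i j : Fin n) :
    rk f₀ hc i ≤ rk f₀ hc j ↔ vals f₀ i ≤ vals f₀ j := by
  rw [rk, rk, OrderIso.le_iff_le]
  exact Subtype.mk_le_mk

lemma rk_lt_rk (f₀ : Fin n ↪o (Fin m ×ₗ A)) {r : ℕ}
    (hc : (Finset.image (vals f₀) Finset.univ).card = r) (i j : Fin n) :
    rk f₀ hc i < rk f₀ hc j ↔ vals f₀ i < vals f₀ j := by
  rw [rk, rk, OrderIso.lt_iff_lt]
  exact Subtype.mk_lt_mk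

lemma vals_eq_of_rk_eq (f₀ : Fin n ↪o (Fin m ×ₗ A)) {r : ℕ}
    (hc : (Finset.image (vals f₀) Finset.univ).card = r) {i j : Fin n}
    (h : rk f₀ hc i = rk f₀ hc j) : vals f₀ i = vals f₀ j :=
  le_antisymm ((rk_le_rk f₀ hc i j).mp h.le) ((rk_le_rk f₀ hc j i).mp h.ge)

lemma rk_surj (f₀ : Fin n ↪o (Fin m ×ₗ A)) {r : ℕ}
    (hc : (Finset.image (vals f₀) Finset.univ).card = r) (a : Fin r) :
    ∃ i, rk f₀ hc i = a := by
  obtain ⟨i, -, hi⟩ := Finset.mem_image.mp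
    (((Finset.image (vals f₀) Finset.univ).orderIsoOfFin hc) a).2
  refine ⟨i, ?_⟩
  rw [rk]
  have : (⟨vals f₀ i, Finset.mem_image_of_mem _ (Finset.mem_univ i)⟩ :
      ↥(Finset.image (vals f₀) Finset.univ))
      = ((Finset.image (vals f₀) Finset.univ).orderIsoOfFin hc) a := Subtype.ext hi
  rw [this, OrderIso.symm_apply_apply]

/-- the embedding of type `mulTp f₀` built from an `r`-embedding `g` into `A`. -/
noncomputable def Ff (f₀ : Fin n ↪o (Fin m ×ₗ A)) {r : ℕ}
    (hc : (Finset.image (vals f₀) Finset.univ).card = r) (g : Fin r ↪o A) :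
    Fin n ↪o (Fin m ×ₗ A) :=
  OrderEmbedding.ofStrictMono (fun i => toLex (lvls f₀ i, g (rk f₀ hc i))) (by
    intro i j hij
    have h := f₀.strictMono hij
    have h' : (ofLex (f₀ i)).1 < (ofLex (f₀ j)).1 ∨
        (ofLex (f₀ i)).1 = (ofLex (f₀ j)).1 ∧ (ofLex (f₀ i)).2 < (ofLex (f₀ j)).2 :=
      (Prod.Lex.lt_iff).mp h
    rcases h' with h' | ⟨h1, h2⟩
    · exact (Prod.Lex.lt_iff).mpr (Or.inl h')
    · refine (Prod.Lex.lt_iff).mpr (Or.inr ⟨h1, ?_⟩)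
      exact g.strictMono ((rk_lt_rk f₀ hc i j).mpr h2))

lemma Ff_apply (f₀ : Fin n ↪o (Fin m ×ₗ A)) {r : ℕ}
    (hc : (Finset.image (vals f₀) Finset.univ).card = r) (g : Fin r ↪o A) (i : Fin n) :
    Ff f₀ hc g i = toLex (lvls f₀ i, g (rk f₀ hc i)) := rfl

/-- reconstruction: any `f` of the same type as `f₀` equals `Ff f₀` applied to the
increasing enumeration of the values of `f`. -/
lemma Ff_reconstruct {f f₀ : Fin n ↪o (Fin m ×ₗ A)} (h : mulTp f = mulTp f₀) {r : ℕ}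
    (hc : (Finset.image (vals f₀) Finset.univ).card = r)
    (hc' : (Finset.image (vals f) Finset.univ).card = r) :
    Ff f₀ hc ((Finset.image (vals f) Finset.univ).orderEmbOfFin hc') = f := by
  -- a section of rk
  choose sec hsec using rk_surj f₀ hc
  have key : ∀ i, (Finset.image (vals f) Finset.univ).orderEmbOfFin hc' (rk f₀ hc i)
      = vals f i := by
    have hmono : StrictMono (fun a => vals f (sec a)) := by
      intro a b hab
      have : rk f₀ hc (sec a) < rk f₀ hc (sec b) := by rw [hsec, hsec]; exact hab
      exact (vals_lt_iff_of_tp h.symm _ _).mp ((rk_lt_rk f₀ hc _ _).mp this)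
    have hmem : ∀ a, vals f (sec a) ∈ Finset.image (vals f) Finset.univ :=
      fun a => Finset.mem_image_of_mem _ (Finset.mem_univ _)
    have := Finset.orderEmbOfFin_unique hc' hmem hmono
    intro i
    rw [← congrFun this (rk f₀ hc i)]
    have : vals f₀ (sec (rk f₀ hc i)) = vals f₀ i :=
      vals_eq_of_rk_eq f₀ hc (by rw [hsec])
    exact vals_eq_of_tp h.symm this
  refine RelEmbedding.ext fun i => ?_
  rw [Ff_apply, key, lvls_eq_of_tp h.symm]
  show toLex ((ofLex (f i)).1, (ofLex (f i)).2) = f i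
  rfl

lemma mulTp_Ff (f₀ : Fin n ↪o (Fin m ×ₗ A)) {r : ℕ}
    (hc : (Finset.image (vals f₀) Finset.univ).card = r) (g : Fin r ↪o A) :
    mulTp (Ff f₀ hc g) = mulTp f₀ := by
  have hl : lvls (Ff f₀ hc g) = lvls f₀ := rfl
  have hv : ∀ i, vals (Ff f₀ hc g) i = g (rk f₀ hc i) := fun _ => rfl
  unfold mulTp
  refine Prod.ext hl (funext fun i => funext fun j => ?_)
  simp only [hv]
  exact decide_eq_decide.mpr (by rw [g.le_iff_le, rk_le_rk])

end Aux

section Transfer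

variable {A : Type*} [LinearOrder A]

/-- transfer `brdLE` into a copy `V` of `A`. -/
lemma brdLE_transfer {r t k : ℕ} (hk : 2 ≤ k) (hb : brdLE A r t)
    {V : Set A} (e : ↥V ≃o A) (χ : (Fin r ↪o A) → Fin k) :
    ∃ U : Set A, U ⊆ V ∧ Nonempty (↥U ≃o A) ∧ (χ '' {g | ∀ a, g a ∈ U}).ncard ≤ t := by
  let ι : A ↪o A := (e.symm.toOrderEmbedding).trans (OrderEmbedding.subtype (· ∈ V))
  have hιV : ∀ a, ι a ∈ V := fun a => (e.symm a).2
  obtain ⟨W, ⟨eW⟩, hW⟩ := hb k hk (fun g => χ (g.trans ι))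
  refine ⟨ι '' W, ?_, ?_, ?_⟩
  · rintro x ⟨w, -, rfl⟩; exact hιV w
  · refine ⟨OrderIso.trans (OrderIso.symm ?_) eW⟩
    exact { toEquiv := Equiv.Set.image ι W ι.injective
            map_rel_iff' := by
              rintro ⟨a, ha⟩ ⟨b, hb⟩
              simp [Equiv.Set.image, Equiv.Set.imageOfInjOn, ι.le_iff_le] }
  · refine le_trans (le_trans (Set.ncard_le_ncard ?_ (Set.toFinite _)) le_rfl) hW
    rintro c ⟨g, hg, rfl⟩
    have hch : ∀ a, ∃ w, w ∈ W ∧ ι w = g a := by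
      intro a; obtain ⟨w, hw, hwa⟩ := hg a; exact ⟨w, hw, hwa⟩
    choose g₀ hg₀W hg₀ using hch
    have hmono : StrictMono g₀ := by
      intro a b hab
      have : ι (g₀ a) < ι (g₀ b) := by rw [hg₀, hg₀]; exact g.strictMono hab
      exact ι.lt_iff_lt.mp this
    refine ⟨OrderEmbedding.ofStrictMono g₀ hmono, fun a => hg₀W a, ?_⟩
    exact congrArg χ (RelEmbedding.ext fun a => hg₀ a)

/-- iterate transfers over a finite family of colorings. -/
lemma brdLE_multi {k : ℕ} (hk : 2 ≤ k) {ι : Type*} [Fintype ι]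
    (r t : ι → ℕ) (hb : ∀ i, brdLE A (r i) (t i)) (χ : ∀ i, (Fin (r i) ↪o A) → Fin k) :
    ∃ U : Set A, Nonempty (↥U ≃o A) ∧ ∀ i, ((χ i) '' {g | ∀ a, g a ∈ U}).ncard ≤ t i := by
  classical
  suffices h : ∀ s : Finset ι, ∃ U : Set A, Nonempty (↥U ≃o A) ∧
      ∀ i ∈ s, ((χ i) '' {g | ∀ a, g a ∈ U}).ncard ≤ t i by
    obtain ⟨U, hiso, hU⟩ := h Finset.univ
    exact ⟨U, hiso, fun i => hU i (Finset.mem_univ i)⟩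
  intro s
  induction s using Finset.induction with
  | empty => exact ⟨Set.univ, ⟨OrderIso.Set.univ⟩, by simp⟩
  | @insert i s hi ih =>
    obtain ⟨U, ⟨e⟩, hU⟩ := ih
    obtain ⟨U', hsub, hiso, hbd⟩ := brdLE_transfer hk (hb i) e (χ i)
    refine ⟨U', hiso, fun j hj => ?_⟩
    rcases Finset.mem_insert.mp hj with rfl | hj
    · exact hbd
    · refine le_trans (Set.ncard_le_ncard (Set.image_mono ?_) (Set.toFinite _)) (hU j hj)
      intro g hg a
      exact hsub (hg a)

lemma ncard_iUnion_le {β : Type*} [Finite β] {ι : Type*} [Fintype ι] (f : ι → Set β) :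
    (⋃ i, f i).ncard ≤ ∑ i, (f i).ncard := by
  classical
  have : ∀ s : Finset ι, (⋃ i ∈ s, f i).ncard ≤ ∑ i ∈ s, (f i).ncard := by
    intro s
    induction s using Finset.induction with
    | empty => simp
    | @insert i s hi ih =>
      rw [Finset.set_biUnion_insert, Finset.sum_insert hi]
      exact le_trans (Set.ncard_union_le _ _) (by omega)
  simpa using this Finset.univ

/-- lift an iso `U ≃o A` to the lex product. -/
noncomputable def lexIso {m : ℕ} {U : Set A} (e : ↥U ≃o A) :
    ↥{p : Fin m ×ₗ A | (ofLex p).2 ∈ U} ≃o Fin m ×ₗ A where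
  toFun p := toLex ((ofLex p.1).1, e ⟨(ofLex p.1).2, p.2⟩)
  invFun q := ⟨toLex ((ofLex q).1, (e.symm (ofLex q).2 : A)), (e.symm (ofLex q).2).2⟩
  left_inv p := by
    ext : 1
    show toLex ((ofLex p.1).1, (e.symm (e ⟨(ofLex p.1).2, p.2⟩) : A)) = p.1
    rw [OrderIso.symm_apply_apply]
    rfl
  right_inv q := by
    show toLex ((ofLex q).1, e (e.symm (ofLex q).2)) = q
    rw [OrderIso.apply_symm_apply]
    rfl
  map_rel_iff' := by
    rintro ⟨p, hp⟩ ⟨q, hq⟩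
    show toLex ((ofLex p).1, (e ⟨(ofLex p).2, hp⟩ : A)) ≤ toLex ((ofLex q).1, _) ↔ p ≤ q
    rw [Prod.Lex.le_iff]
    constructor
    · rintro (h | ⟨h1, h2⟩)
      · exact le_of_lt ((Prod.Lex.lt_iff).mpr (Or.inl h))
      · refine (Prod.Lex.le_iff).mpr (Or.inr ⟨h1, ?_⟩)
        exact Subtype.mk_le_mk.mp (e.le_iff_le.mp h2)
    · intro h
      rcases (Prod.Lex.le_iff).mp h with h | ⟨h1, h2⟩
      · exact Or.inl h
      · exact Or.inr ⟨h1, e.le_iff_le.mpr (Subtype.mk_le_mk.mpr h2)⟩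

end Transfer

open Classical in
/-- If a countable ordinal `α` has finite big Ramsey degrees (`T j = T(j, α)` for `j ≥ 1`),
then `α·m` has finite big Ramsey degrees; moreover
`T(n, α·m) ≤ ∑_τ T(r(τ))`, the sum over all `(n, m)`-multiplicative types `τ`. -/
theorem stmt7 (α : Ordinal) (hcnt : α.card ≤ Cardinal.aleph0)
    (T : ℕ → ℕ) (hT : ∀ j : ℕ, 1 ≤ j → hasBRD ↥(Set.Iio α) j (T j))
    (n m : ℕ) (hn : 1 ≤ n) (hm : 1 ≤ m) :
    brdLE (Fin m ×ₗ ↥(Set.Iio α)) n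
      (∑ τ : (Fin n → Fin m) × (Fin n → Fin n → Bool),
        if ∃ f : Fin n ↪o (Fin m ×ₗ ↥(Set.Iio α)), mulTp f = τ then rankTp τ.2 |> T else 0) := by
  intro k hk χ
  set A := ↥(Set.Iio α) with hA
  set R : (Fin n → Fin m) × (Fin n → Fin n → Bool) → Prop :=
    fun τ => ∃ f : Fin n ↪o (Fin m ×ₗ A), mulTp f = τ with hR
  have hwit : ∀ i : {τ // R τ}, ∃ f : Fin n ↪o (Fin m ×ₗ A), mulTp f = i.1 := fun i => i.2
  choose f₀ hf₀ using hwit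
  have hc : ∀ i : {τ // R τ},
      (Finset.image (vals (f₀ i)) Finset.univ).card = rankTp i.1.2 := by
    intro i
    have := rankTp_vals (f₀ i)
    rw [hf₀ i] at this
    exact this.symm
  set χ' : ∀ i : {τ // R τ}, (Fin (rankTp i.1.2) ↪o A) → Fin k :=
    fun i g => χ (Ff (f₀ i) (hc i) g) with hχ'
  have hb : ∀ i : {τ // R τ}, brdLE A (rankTp i.1.2) (T (rankTp i.1.2)) :=
    fun i => (hT _ (rankTp_pos _ hn)).1
  obtain ⟨U, ⟨e⟩, hU⟩ := brdLE_multi hk _ _ hb χ'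
  refine ⟨{p : Fin m ×ₗ A | (ofLex p).2 ∈ U}, ⟨lexIso e⟩, ?_⟩
  have hsub : χ '' {f | ∀ i, f i ∈ {p : Fin m ×ₗ A | (ofLex p).2 ∈ U}}
      ⊆ ⋃ i : {τ // R τ}, (χ' i) '' {g | ∀ a, g a ∈ U} := by
    rintro c ⟨f, hf, rfl⟩
    have hRf : R (mulTp f) := ⟨f, rfl⟩
    set i : {τ // R τ} := ⟨mulTp f, hRf⟩ with hi
    have htp : mulTp f = mulTp (f₀ i) := (hf₀ i).symm
    have hc' : (Finset.image (vals f) Finset.univ).card = rankTp i.1.2 :=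
      (rankTp_vals f).symm
    refine Set.mem_iUnion.mpr
      ⟨i, ⟨(Finset.image (vals f) Finset.univ).orderEmbOfFin hc', fun a => ?_, ?_⟩⟩
    · obtain ⟨j, -, hj⟩ := Finset.mem_image.mp
        (Finset.orderEmbOfFin_mem (Finset.image (vals f) Finset.univ) hc' a)
      rw [← hj]
      exact hf j
    · show χ (Ff (f₀ i) (hc i) _) = χ f
      exact congrArg χ (Ff_reconstruct htp (hc i) hc')
  refine le_trans (Set.ncard_le_ncard hsub (Set.toFinite _)) ?_
  refine le_trans (ncard_iUnion_le _) ?_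
  refine le_trans (Finset.sum_le_sum fun i _ => hU i) ?_
  have : ∑ τ : (Fin n → Fin m) × (Fin n → Fin n → Bool),
      (if R τ then T (rankTp τ.2) else 0)
      = ∑ i : {τ // R τ}, T (rankTp i.1.2) := by
    rw [← Finset.sum_filter]
    exact Finset.sum_subtype _ (by simp) _
  rw [hR] at this
  rw [← this]
end

section
/- Let α be a countable ordinal with finite big Ramsey degrees. For all integers s ≥ 1 and n₀, …, n_{s−1} ≥ 1 there is an integer t such that for every k ≥ 2 and every coloring χ : Emb(n₀, α) × … × Emb(n_{s−1}, α) → k there is a U ⊆ α order-isomorphic to α with |χ(Emb(n₀, U) × … × Emb(n_{s−1}, U))| ≤ t. -/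
open Set

lemma orderEmb_finite {C : Type*} [LinearOrder C] [Finite C] (n : ℕ) :
    Finite (Fin n ↪o C) :=
  Finite.of_injective (fun f => (f : Fin n → C))
    (fun f g h => by ext x; exact congrFun h x)

/-- The key product Ramsey lemma, for an arbitrary linear order with finite
big Ramsey degrees. -/
lemma key_prod_ramsey {C : Type*} [LinearOrder C] (hfin : finiteBRD C)
    (s : ℕ) (hs : 1 ≤ s) (nn : Fin s → ℕ) (hnn : ∀ i, 1 ≤ nn i) :
    ∃ t : ℕ, ∀ k : ℕ, 2 ≤ k →
      ∀ χ : (∀ i : Fin s, Fin (nn i) ↪o C) → Fin k,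
        ∃ U : Set C, Nonempty (U ≃o C) ∧
          (χ '' {F | ∀ (i : Fin s) (j : Fin (nn i)), F i j ∈ U}).ncard ≤ t := by
  classical
  cases finite_or_infinite C with
  | inl hfinC =>
    -- finite case: bound by the total number of tuples
    haveI : ∀ i, Finite (Fin (nn i) ↪o C) := fun i => orderEmb_finite (nn i)
    refine ⟨Nat.card (∀ i : Fin s, Fin (nn i) ↪o C), fun k hk χ =>
      ⟨Set.univ, ⟨OrderIso.Set.univ⟩, ?_⟩⟩
    calc (χ '' {F | ∀ (i : Fin s) (j : Fin (nn i)), F i j ∈ (Set.univ : Set C)}).ncard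
        ≤ (χ '' Set.univ).ncard :=
          Set.ncard_le_ncard (Set.image_mono (Set.subset_univ _)) (Set.toFinite _)
      _ ≤ (Set.univ : Set (∀ i : Fin s, Fin (nn i) ↪o C)).ncard :=
          Set.ncard_image_le (Set.toFinite _)
      _ = Nat.card (∀ i : Fin s, Fin (nn i) ↪o C) := Set.ncard_univ _
  | inr hinf =>
    set N : ℕ := ∑ i, nn i with hNdef
    have hle : ∀ i, nn i ≤ N := fun i =>
      Finset.single_le_sum (fun j _ => Nat.zero_le _) (Finset.mem_univ i)
    have hN1 : 1 ≤ N := le_trans (hnn ⟨0, hs⟩) (hle ⟨0, hs⟩)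
    obtain ⟨tN, htN⟩ := hfin N hN1
    haveI : ∀ i, Finite (Fin (nn i) ↪o Fin N) := fun i => orderEmb_finite (nn i)
    haveI hPfin : Finite (∀ i : Fin s, Fin (nn i) ↪o Fin N) := Pi.finite
    haveI hPne : Nonempty (∀ i : Fin s, Fin (nn i) ↪o Fin N) :=
      ⟨fun i => Fin.castLEOrderEmb (hle i)⟩
    refine ⟨tN * Nat.card (∀ i : Fin s, Fin (nn i) ↪o Fin N), fun k hk χ => ?_⟩
    haveI := Fintype.ofFinite (∀ i : Fin s, Fin (nn i) ↪o Fin N)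
    set P := ∀ i : Fin s, Fin (nn i) ↪o Fin N with hP
    -- the derived coloring of N-subsets
    set χ₂ : (Fin N ↪o C) → (P → Fin k) :=
      fun g p => χ (fun i => (p i).trans g) with hχ₂
    set K := Fintype.card (P → Fin k) with hKdef
    have hK : 2 ≤ K := by
      have h1 : Fintype.card (Fin k) ≤ Fintype.card (P → Fin k) :=
        Fintype.card_le_of_injective (fun a => Function.const P a)
          (fun a b h => congrFun h (Classical.arbitrary P))
      rw [Fintype.card_fin] at h1
      exact le_trans hk h1
    set e : (P → Fin k) ≃ Fin K := Fintype.equivFin (P → Fin k) with he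
    obtain ⟨U, hU, hcard⟩ := htN K hK (fun g => e (χ₂ g))
    refine ⟨U, hU, ?_⟩
    have hVcard : (χ₂ '' {g : Fin N ↪o C | ∀ j, g j ∈ U}).ncard ≤ tN := by
      have heq : ((fun g => e (χ₂ g)) '' {g : Fin N ↪o C | ∀ j, g j ∈ U})
          = e '' (χ₂ '' {g : Fin N ↪o C | ∀ j, g j ∈ U}) :=
        (Set.image_image e χ₂ _).symm
      rw [heq, Set.ncard_image_of_injective _ e.injective] at hcard
      exact hcard
    -- U is infinite
    have hUinf : U.Infinite := by
      rw [← Set.infinite_coe_iff]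
      obtain ⟨e'⟩ := hU
      exact Infinite.of_surjective (⇑e') e'.surjective
    -- main inclusion
    have hsub : χ '' {F | ∀ (i : Fin s) (j : Fin (nn i)), F i j ∈ U} ⊆
        (fun q : (P → Fin k) × P => q.1 q.2) ''
          ((χ₂ '' {g : Fin N ↪o C | ∀ j, g j ∈ U}) ×ˢ (Set.univ : Set P)) := by
      rintro c ⟨F, hF, rfl⟩
      -- the union of the ranges, as a finset
      set A : Finset C := Finset.univ.biUnion
        (fun i : Fin s => Finset.image (F i) Finset.univ) with hA
      have hmemA : ∀ i j, F i j ∈ A := fun i j =>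
        Finset.mem_biUnion.mpr ⟨i, Finset.mem_univ i,
          Finset.mem_image.mpr ⟨j, Finset.mem_univ j, rfl⟩⟩
      have hAU : (↑A : Set C) ⊆ U := by
        intro x hx
        rw [Finset.mem_coe, hA, Finset.mem_biUnion] at hx
        obtain ⟨i, -, hx⟩ := hx
        obtain ⟨j, -, rfl⟩ := Finset.mem_image.mp hx
        exact hF i j
      have hAcard : (↑A : Set C).ncard ≤ N := by
        rw [Set.ncard_coe_finset]
        calc A.card ≤ ∑ i, (Finset.image (F i) Finset.univ).card :=
              Finset.card_biUnion_le
          _ ≤ ∑ i, nn i := Finset.sum_le_sum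
              (fun i _ => le_trans Finset.card_image_le (by simp))
      obtain ⟨B, hAB, hBU, hBcard⟩ :=
        hUinf.exists_superset_ncard_eq hAU A.finite_toSet hAcard
      have hBfin : B.Finite := by
        apply Set.finite_of_ncard_ne_zero
        omega
      have hBfcard : hBfin.toFinset.card = N := by
        rw [← Set.ncard_eq_toFinset_card _ hBfin, hBcard]
      have hgU : ∀ j, (hBfin.toFinset.orderEmbOfFin hBfcard) j ∈ U := by
        intro j
        apply hBU
        have h1 : (hBfin.toFinset.orderEmbOfFin hBfcard) j
            ∈ Set.range (hBfin.toFinset.orderEmbOfFin hBfcard) := Set.mem_range_self j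
        rwa [Finset.range_orderEmbOfFin, Set.Finite.coe_toFinset] at h1
      have hmemB : ∀ i j, F i j ∈ hBfin.toFinset := by
        intro i j
        rw [Set.Finite.mem_toFinset]
        exact hAB (hmemA i j)
      set g : Fin N ↪o C := hBfin.toFinset.orderEmbOfFin hBfcard with hg
      set p : P := fun i => OrderEmbedding.ofStrictMono
        (fun j => (hBfin.toFinset.orderIsoOfFin hBfcard).symm ⟨F i j, hmemB i j⟩)
        (fun j j' hjj' => (hBfin.toFinset.orderIsoOfFin hBfcard).symm.strictMono
          (Subtype.mk_lt_mk.mpr ((F i).strictMono hjj'))) with hp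
      have hFp : F = fun i => (p i).trans g := by
        funext i
        ext j
        show F i j = g ((hBfin.toFinset.orderIsoOfFin hBfcard).symm ⟨F i j, hmemB i j⟩)
        rw [hg, ← Finset.coe_orderIsoOfFin_apply, OrderIso.apply_symm_apply]
      refine ⟨(χ₂ g, p), Set.mem_prod.mpr ⟨⟨g, hgU, rfl⟩, Set.mem_univ p⟩, ?_⟩
      show χ₂ g p = χ F
      rw [hχ₂]
      exact (congrArg χ hFp).symm
    -- final counting
    have hVfin : (χ₂ '' {g : Fin N ↪o C | ∀ j, g j ∈ U}).Finite := Set.toFinite _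
    calc (χ '' {F | ∀ (i : Fin s) (j : Fin (nn i)), F i j ∈ U}).ncard
        ≤ ((fun q : (P → Fin k) × P => q.1 q.2) ''
            ((χ₂ '' {g : Fin N ↪o C | ∀ j, g j ∈ U}) ×ˢ (Set.univ : Set P))).ncard :=
          Set.ncard_le_ncard hsub (Set.Finite.image _ (hVfin.prod (Set.toFinite _)))
      _ ≤ ((χ₂ '' {g : Fin N ↪o C | ∀ j, g j ∈ U}) ×ˢ (Set.univ : Set P)).ncard :=
          Set.ncard_image_le (hVfin.prod (Set.toFinite _))
      _ = Nat.card (↥(χ₂ '' {g : Fin N ↪o C | ∀ j, g j ∈ U}) × ↥(Set.univ : Set P)) := by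
          rw [← Nat.card_coe_set_eq]
          exact Nat.card_congr (Equiv.Set.prod _ _)
      _ = (χ₂ '' {g : Fin N ↪o C | ∀ j, g j ∈ U}).ncard * Nat.card P := by
          rw [Nat.card_prod, Nat.card_coe_set_eq]
          congr 1
          exact Nat.card_congr (Equiv.Set.univ P)
      _ ≤ tN * Nat.card P := Nat.mul_le_mul_right _ hVcard

/-- Product Ramsey theorem for a countable ordinal `α` with finite big Ramsey degrees:
there is a `t` such that every finite coloring of `Emb(n₀, α) × … × Emb(n_{s-1}, α)`
admits a `U ⊆ α` order-isomorphic to `α` on which at most `t` colors occur. -/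
theorem stmt8 (α : Ordinal) (hcnt : α.card ≤ Cardinal.aleph0)
    (hfin : finiteBRD ↥(Set.Iio α))
    (s : ℕ) (hs : 1 ≤ s) (nn : Fin s → ℕ) (hnn : ∀ i, 1 ≤ nn i) :
    ∃ t : ℕ, ∀ k : ℕ, 2 ≤ k →
      ∀ χ : (∀ i : Fin s, Fin (nn i) ↪o ↥(Set.Iio α)) → Fin k,
        ∃ U : Set ↥(Set.Iio α), Nonempty (U ≃o ↥(Set.Iio α)) ∧
          (χ '' {F | ∀ (i : Fin s) (j : Fin (nn i)), F i j ∈ U}).ncard ≤ t := by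
  exact key_prod_ramsey hfin s hs nn hnn
end

section
/- Fix integers n ≥ 1 and m ≥ 1. For every (n, m)-multiplicative type τ, every k ≥ 2, and every coloring χ of the embeddings n ↪ ω·m of type τ, there is an infinite U ⊆ ω such that χ is constant on the embeddings n ↪ U·m of type τ. -/
open Set

lemma cardImageEq {α β γ : Type*} [DecidableEq β] [DecidableEq γ] (s : Finset α)
    (g : α → β) (h : α → γ) (H : ∀ i ∈ s, ∀ j ∈ s, (g i = g j ↔ h i = h j)) :
    (s.image g).card = (s.image h).card := by
  classical
  have hinj1 : Set.InjOn Prod.fst (↑(s.image fun a => (g a, h a)) : Set (β × γ)) := by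
    rintro p hp q hq hpq
    simp only [Finset.coe_image, Set.mem_image, Finset.mem_coe] at hp hq
    obtain ⟨a, ha, rfl⟩ := hp
    obtain ⟨b, hb, rfl⟩ := hq
    simp only at hpq
    exact Prod.ext hpq (((H a ha b hb).mp hpq))
  have hinj2 : Set.InjOn Prod.snd (↑(s.image fun a => (g a, h a)) : Set (β × γ)) := by
    rintro p hp q hq hpq
    simp only [Finset.coe_image, Set.mem_image, Finset.mem_coe] at hp hq
    obtain ⟨a, ha, rfl⟩ := hp
    obtain ⟨b, hb, rfl⟩ := hq
    simp only at hpq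
    exact Prod.ext (((H a ha b hb).mpr hpq)) hpq
  have e1 : ((s.image fun a => (g a, h a)).image Prod.fst) = s.image g := by
    rw [Finset.image_image]; rfl
  have e2 : ((s.image fun a => (g a, h a)).image Prod.snd) = s.image h := by
    rw [Finset.image_image]; rfl
  rw [← e1, ← e2, Finset.card_image_of_injOn hinj1, Finset.card_image_of_injOn hinj2]

lemma valsEq {n : ℕ} (u v : Fin n → ℕ) (H : ∀ i j, u i ≤ u j ↔ v i ≤ v j)
    (Himg : Finset.univ.image u = Finset.univ.image v) : u = v := by
  classical
  have Heq : ∀ i j, u i = u j ↔ v i = v j := by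
    intro i j
    rw [le_antisymm_iff, le_antisymm_iff, H i j, H j i]
  set W := Finset.univ.image u with hW
  have rank_inj : ∀ a ∈ W, ∀ b ∈ W,
      (W.filter (· ≤ a)).card = (W.filter (· ≤ b)).card → a = b := by
    intro a ha b hb hcard
    rcases le_total a b with hab | hab
    · have hsub : W.filter (· ≤ a) ⊆ W.filter (· ≤ b) :=
        by
        intro x hx
        rw [Finset.mem_filter] at *
        exact ⟨hx.1, hx.2.trans hab⟩
      have := Finset.eq_of_subset_of_card_le hsub (le_of_eq hcard.symm)
      have hbmem : b ∈ W.filter (· ≤ a) := by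
        rw [this]; exact Finset.mem_filter.mpr ⟨hb, le_refl _⟩
      exact le_antisymm hab (Finset.mem_filter.mp hbmem).2
    · have hsub : W.filter (· ≤ b) ⊆ W.filter (· ≤ a) :=
        by
        intro x hx
        rw [Finset.mem_filter] at *
        exact ⟨hx.1, hx.2.trans hab⟩
      have := Finset.eq_of_subset_of_card_le hsub (le_of_eq hcard)
      have hamem : a ∈ W.filter (· ≤ b) := by
        rw [this]; exact Finset.mem_filter.mpr ⟨ha, le_refl _⟩
      exact ((Finset.mem_filter.mp hamem).2).antisymm hab
  funext i
  have hu : u i ∈ W := Finset.mem_image_of_mem u (Finset.mem_univ i)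
  have hv : v i ∈ W := by
    rw [Himg]; exact Finset.mem_image_of_mem v (Finset.mem_univ i)
  refine rank_inj _ hu _ hv ?_
  have h1 : W.filter (· ≤ u i) = (Finset.univ.filter fun j => u j ≤ u i).image u := by
    ext b
    simp only [Finset.mem_filter, Finset.mem_image, hW, Finset.mem_univ, true_and]
    constructor
    · rintro ⟨⟨j, rfl⟩, hle⟩; exact ⟨j, hle, rfl⟩
    · rintro ⟨j, hle, rfl⟩; exact ⟨⟨j, rfl⟩, hle⟩
  have h2 : W.filter (· ≤ v i) = (Finset.univ.filter fun j => u j ≤ u i).image v := by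
    rw [Himg]
    ext b
    simp only [Finset.mem_filter, Finset.mem_image, Finset.mem_univ, true_and]
    constructor
    · rintro ⟨⟨j, rfl⟩, hle⟩; exact ⟨j, (H j i).mpr hle, rfl⟩
    · rintro ⟨j, hle, rfl⟩; exact ⟨⟨j, rfl⟩, (H j i).mp hle⟩
  rw [h1, h2]
  exact cardImageEq _ u v (fun a _ b _ => Heq a b)

lemma ramseyNat (k : ℕ) (r : ℕ) : ∀ (S : Set ℕ), S.Infinite → ∀ C : Finset ℕ → Fin k,
    ∃ U ⊆ S, U.Infinite ∧ ∃ c, ∀ s : Finset ℕ, ↑s ⊆ U → s.card = r → C s = c := by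
  induction r with
  | zero =>
      intro S hS C
      refine ⟨S, subset_rfl, hS, C ∅, fun s hs hc => ?_⟩
      rw [Finset.card_eq_zero.mp hc]
  | succ r ih =>
      intro S hS C
      have key : ∀ T : Set ℕ, T.Infinite →
          ∃ V : Set ℕ, V.Infinite ∧ V ⊆ T ∧ (∀ x ∈ V, sInf T < x) ∧
            ∃ c : Fin k, ∀ s : Finset ℕ, ↑s ⊆ V → s.card = r → C (insert (sInf T) s) = c := by
        intro T hT
        have h1 : (T ∩ Set.Ioi (sInf T)).Infinite := by
          have he : T \ Set.Iic (sInf T) = T ∩ Set.Ioi (sInf T) := by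
            ext x; simp [Set.mem_diff, not_le]
          rw [← he]
          exact hT.diff (Set.finite_Iic _)
        obtain ⟨V, hVsub, hVinf, c, hc⟩ := ih _ h1 (fun s => C (insert (sInf T) s))
        exact ⟨V, hVinf, fun x hx => (hVsub hx).1, fun x hx => (hVsub hx).2, c, hc⟩
      choose V hVinf hVsub hVgt c hc using key
      let seq : ℕ → {T : Set ℕ // T.Infinite} := fun i =>
        Nat.rec ⟨S, hS⟩ (fun _ p => ⟨V p.1 p.2, hVinf p.1 p.2⟩) i
      have hseq : ∀ i, (seq (i+1)).1 = V (seq i).1 (seq i).2 := fun i => rfl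
      have step : ∀ i, (seq (i+1)).1 ⊆ (seq i).1 := fun i => hVsub _ _
      have anti : ∀ i j, i ≤ j → (seq j).1 ⊆ (seq i).1 := by
        intro i j hij
        induction hij with
        | refl => exact subset_rfl
        | step h ih2 => exact (step _).trans ih2
      set a : ℕ → ℕ := fun i => sInf (seq i).1 with ha
      have amem : ∀ i, a i ∈ (seq i).1 := fun i => Nat.sInf_mem (seq i).2.nonempty
      have alt : StrictMono a := by
        have h1 : ∀ i j, i < j → a i < a j := by
          intro i j hij
          have : a j ∈ (seq (i+1)).1 := anti (i+1) j hij (amem j)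
          exact hVgt (seq i).1 (seq i).2 (a j) this
        exact strictMono_nat_of_lt_succ (fun i => h1 i (i+1) (Nat.lt_succ_self i))
      set col : ℕ → Fin k := fun i => c (seq i).1 (seq i).2 with hcol
      obtain ⟨c0, hc0⟩ := Finite.exists_infinite_fiber col
      have hI : (col ⁻¹' {c0}).Infinite := Set.infinite_coe_iff.mp hc0
      refine ⟨a '' (col ⁻¹' {c0}), ?_, hI.image (alt.injective.injOn), c0, ?_⟩
      · rintro _ ⟨i, _, rfl⟩
        exact anti 0 i (Nat.zero_le i) (amem i)
      · intro s hs hcard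
        have hne : s.Nonempty := Finset.card_pos.mp (by omega)
        obtain ⟨i, hiI, hix⟩ := hs (Finset.mem_coe.mpr (s.min'_mem hne))
        have hrest : ↑(s.erase (s.min' hne)) ⊆ (seq (i+1)).1 := by
          intro y hy
          simp only [Finset.coe_erase, Set.mem_diff, Finset.mem_coe, Set.mem_singleton_iff] at hy
          obtain ⟨hy1, hy2⟩ := hy
          obtain ⟨j, hjI, hjy⟩ := hs (Finset.mem_coe.mpr hy1)
          have hylt : s.min' hne < y :=
            lt_of_le_of_ne (s.min'_le y hy1) (Ne.symm hy2)
          have hij : i < j := by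
            have : a i < a j := by rw [hix, hjy]; exact hylt
            exact alt.lt_iff_lt.mp this
          exact anti (i+1) j hij (hjy ▸ amem j)
        have hcr : (s.erase (s.min' hne)).card = r := by
          rw [Finset.card_erase_of_mem (s.min'_mem hne), hcard]
          omega
        have hmono := hc (seq i).1 (seq i).2 _ hrest hcr
        have hins : insert (sInf (seq i).1) (s.erase (s.min' hne)) = s := by
          rw [show sInf (seq i).1 = s.min' hne from hix]
          exact Finset.insert_erase (s.min'_mem hne)
        rw [← hins, hmono]
        have : col i = c0 := hiI
        exact this

/-- For each `(n, m)`-multiplicative type `τ`, any finite coloring of the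
embeddings `n ↪ ω·m` of type `τ` is constant on the embeddings of type `τ`
into `U·m` for some infinite `U ⊆ ω`. -/
theorem stmt9 (n m : ℕ) (hn : 1 ≤ n) (hm : 1 ≤ m)
    (τ : (Fin n → Fin m) × (Fin n → Fin n → Bool))
    (hτ : ∃ f : Fin n ↪o (Fin m ×ₗ ℕ), mulTp f = τ)
    (k : ℕ) (hk : 2 ≤ k)
    (χ : {f : Fin n ↪o (Fin m ×ₗ ℕ) // mulTp f = τ} → Fin k) :
    ∃ U : Set ℕ, U.Infinite ∧
      (χ '' {f | ∀ i : Fin n, vals f.1 i ∈ U}).ncard ≤ 1 := by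
  classical
  obtain ⟨f₀, hf₀⟩ := hτ
  -- basic facts from the type
  have hle : ∀ (f : Fin n ↪o (Fin m ×ₗ ℕ)), mulTp f = τ →
      ∀ i j, (vals f i ≤ vals f j ↔ τ.2 i j = true) := by
    intro f hf i j
    have := congr_fun (congr_fun (congr_arg Prod.snd hf) i) j
    simp only [mulTp] at this
    rw [← this, decide_eq_true_iff]
  have hH : ∀ (f g : Fin n ↪o (Fin m ×ₗ ℕ)), mulTp f = τ → mulTp g = τ →
      ∀ i j, (vals f i ≤ vals f j ↔ vals g i ≤ vals g j) := by
    intro f g hf hg i j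
    rw [hle f hf i j, hle g hg i j]
  set r := (Finset.univ.image (vals f₀)).card with hr
  have cardV : ∀ f : Fin n ↪o (Fin m ×ₗ ℕ), mulTp f = τ →
      (Finset.univ.image (vals f)).card = r := by
    intro f hf
    refine cardImageEq _ _ _ (fun i _ j _ => ?_)
    constructor
    · intro h
      exact le_antisymm ((hH f f₀ hf hf₀ i j).mp h.le) ((hH f f₀ hf hf₀ j i).mp h.ge)
    · intro h
      exact le_antisymm ((hH f f₀ hf hf₀ i j).mpr h.le) ((hH f f₀ hf hf₀ j i).mpr h.ge)
  have inj : ∀ f g : Fin n ↪o (Fin m ×ₗ ℕ), mulTp f = τ → mulTp g = τ →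
      Finset.univ.image (vals f) = Finset.univ.image (vals g) → f = g := by
    intro f g hf hg himg
    have hv : vals f = vals g := valsEq _ _ (hH f g hf hg) himg
    have hl : lvls f = lvls g := by
      have h1 := congr_arg Prod.fst hf
      have h2 := congr_arg Prod.fst hg
      simp only [mulTp] at h1 h2
      rw [h1, h2]
    ext i
    show f i = g i
    have e1 : ofLex (f i) = ofLex (g i) :=
      Prod.ext (congr_fun hl i) (congr_fun hv i)
    exact e1
  let D : Finset ℕ → Fin k := fun s =>
    if h : ∃ f : {f : Fin n ↪o (Fin m ×ₗ ℕ) // mulTp f = τ},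
        Finset.univ.image (vals f.1) = s then χ h.choose else χ ⟨f₀, hf₀⟩
  obtain ⟨U, hUS, hUinf, c, hcons⟩ := ramseyNat k r Set.univ Set.infinite_univ D
  refine ⟨U, hUinf, ?_⟩
  have hsub : χ '' {f | ∀ i : Fin n, vals f.1 i ∈ U} ⊆ {c} := by
    rintro _ ⟨f, hf, rfl⟩
    have h1 : ↑(Finset.univ.image (vals f.1)) ⊆ U := by
      intro y hy
      simp only [Finset.coe_image, Set.mem_image, Finset.mem_coe] at hy
      obtain ⟨i, _, rfl⟩ := hy
      exact hf i
    have h2 := hcons _ h1 (cardV f.1 f.2)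
    have hex : ∃ g : {g : Fin n ↪o (Fin m ×ₗ ℕ) // mulTp g = τ},
        Finset.univ.image (vals g.1) = Finset.univ.image (vals f.1) := ⟨f, rfl⟩
    have hD : D (Finset.univ.image (vals f.1)) = χ f := by
      simp only [D]
      rw [dif_pos hex]
      congr 1
      exact Subtype.ext (inj hex.choose.1 f.1 hex.choose.2 f.2 hex.choose_spec)
    rw [Set.mem_singleton_iff, ← h2, hD]
  calc (χ '' {f | ∀ i : Fin n, vals f.1 i ∈ U}).ncard
      ≤ ({c} : Set (Fin k)).ncard := Set.ncard_le_ncard hsub (Set.finite_singleton c)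
    _ = 1 := Set.ncard_singleton c
end

section
/- For all integers n ≥ 1 and m ≥ 1, the big Ramsey degree of the n-element chain in ω·m equals m^n, i.e., T(n, ω·m) = m^n. -/
open Set

section Aux

theorem myRamsey {κ : Type} [Finite κ] :
    ∀ (n : ℕ) (c : (Fin n → ℕ) → κ),
      ∃ M : ℕ → ℕ, StrictMono M ∧ ∃ d : κ, ∀ f : Fin n → ℕ, StrictMono f → c (M ∘ f) = d := by
  intro n
  induction n with
  | zero =>
    intro c
    refine ⟨id, strictMono_id, c (fun i => i.elim0), fun f hf => ?_⟩
    congr 1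
    funext i; exact i.elim0
  | succ n ih =>
    intro c
    classical
    have key : ∀ e : {e : ℕ → ℕ // StrictMono e},
        ∃ M : ℕ → ℕ, StrictMono M ∧ ∃ d : κ,
          ∀ t : Fin n → ℕ, StrictMono t →
            c (Fin.cons (e.1 0) (fun j => e.1 (M (t j) + 1))) = d := by
      intro e
      obtain ⟨M, hM, d, hd⟩ := ih (fun t => c (Fin.cons (e.1 0) (fun j => e.1 (t j + 1))))
      exact ⟨M, hM, d, fun t ht => hd t ht⟩
    let Mf : {e : ℕ → ℕ // StrictMono e} → (ℕ → ℕ) := fun e => (key e).choose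
    have hMf : ∀ e, StrictMono (Mf e) := fun e => (key e).choose_spec.1
    let Df : {e : ℕ → ℕ // StrictMono e} → κ := fun e => (key e).choose_spec.2.choose
    have hDf : ∀ e (t : Fin n → ℕ), StrictMono t →
        c (Fin.cons (e.1 0) (fun j => e.1 (Mf e (t j) + 1))) = Df e :=
      fun e => (key e).choose_spec.2.choose_spec
    let stepf : {e : ℕ → ℕ // StrictMono e} → {e : ℕ → ℕ // StrictMono e} :=
      fun e => ⟨fun x => e.1 (Mf e x + 1), fun x y hxy => e.2 (Nat.succ_lt_succ (hMf e hxy))⟩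
    let E : ℕ → {e : ℕ → ℕ // StrictMono e} := fun i => stepf^[i] ⟨id, strictMono_id⟩
    have hE : ∀ i, E (i + 1) = stepf (E i) := fun i => Function.iterate_succ_apply' _ _ _
    let a : ℕ → ℕ := fun i => (E i).1 0
    have ha : StrictMono a := by
      apply strictMono_nat_of_lt_succ
      intro i
      have h1 : a (i + 1) = (E i).1 (Mf (E i) 0 + 1) := by
        show (E (i + 1)).1 0 = _
        rw [hE i]
      rw [h1]
      exact (E i).2 (Nat.succ_pos _)
    have hrange : ∀ i j, i < j → ∃ t, a j = (E (i + 1)).1 t := by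
      intro i j hij
      have gen : ∀ j y, i + 1 ≤ j → ∃ t, (E j).1 y = (E (i + 1)).1 t := by
        intro j
        induction j with
        | zero => intro y h; omega
        | succ j ihj =>
          intro y h
          rcases Nat.lt_or_ge i j with h' | h'
          · obtain ⟨t, ht⟩ := ihj (Mf (E j) y + 1) (by omega)
            refine ⟨t, ?_⟩
            rw [hE j]
            exact ht
          · have hij2 : i = j := by omega
            subst hij2
            exact ⟨y, rfl⟩
      exact gen j 0 hij
    have hom : ∀ i (g : Fin n → ℕ), StrictMono g → (∀ r, i < g r) →
        c (Fin.cons (a i) (fun r => a (g r))) = Df (E i) := by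
      intro i g hg hgt
      choose t ht using fun r => hrange i (g r) (hgt r)
      have htmono : StrictMono t := by
        intro r r' hrr'
        have h2 : (E (i + 1)).1 (t r) < (E (i + 1)).1 (t r') := by
          rw [← ht r, ← ht r']
          exact ha (hg hrr')
        exact (E (i + 1)).2.lt_iff_lt.mp h2
      have harg : (Fin.cons (a i) (fun r => a (g r)) : Fin (n + 1) → ℕ)
          = Fin.cons ((E i).1 0) (fun j => (E i).1 (Mf (E i) (t j) + 1)) := by
        funext j
        refine Fin.cases rfl (fun r => ?_) j
        rw [Fin.cons_succ, Fin.cons_succ, ht r, hE i]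
      rw [harg]
      exact hDf (E i) t htmono
    obtain ⟨d, hd⟩ := Finite.exists_infinite_fiber (fun i => Df (E i))
    set p : ℕ → Prop := fun i => Df (E i) = d with hp_def
    have hp : (setOf p).Infinite := by
      rw [← Set.infinite_coe_iff]
      have heq : ((fun i => Df (E i)) ⁻¹' {d}) = setOf p := by
        ext i; simp [hp_def]; exact Iff.rfl
      rw [← heq]
      exact hd
    have hφmono : StrictMono (Nat.nth p) := Nat.nth_strictMono hp
    have hφmem : ∀ x, Df (E (Nat.nth p x)) = d := fun x => Nat.nth_mem_of_infinite hp x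
    refine ⟨a ∘ Nat.nth p, ha.comp hφmono, d, fun f hf => ?_⟩
    have hcons : (a ∘ Nat.nth p) ∘ f
        = Fin.cons (a (Nat.nth p (f 0))) (fun r => a (Nat.nth p (f r.succ))) := by
      funext j
      refine Fin.cases rfl (fun r => rfl) j
    rw [hcons]
    have hmono2 : StrictMono (fun r : Fin n => Nat.nth p (f r.succ)) := by
      intro r r' hrr'
      exact hφmono (hf (Fin.succ_lt_succ_iff.mpr hrr'))
    have hgt2 : ∀ r : Fin n, Nat.nth p (f 0) < Nat.nth p (f r.succ) :=
      fun r => hφmono (hf (Fin.succ_pos r))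
    rw [hom (Nat.nth p (f 0)) _ hmono2 hgt2]
    exact hφmem (f 0)

theorem strictMono_fin_id {n : ℕ} {f : Fin n → Fin n} (hf : StrictMono f) : f = id := by
  have h : (Finset.univ : Finset (Fin n)).card = n := by simp
  have h1 := Finset.orderEmbOfFin_unique h (fun x => Finset.mem_univ (f x)) hf
  have h2 := Finset.orderEmbOfFin_unique h (fun x => Finset.mem_univ x) strictMono_id
  rw [h1, ← h2]
  rfl

theorem lex_lt_iff {m : ℕ} (x y : Fin m ×ₗ ℕ) :
    x < y ↔ (ofLex x).1 < (ofLex y).1 ∨ (ofLex x).1 = (ofLex y).1 ∧ (ofLex x).2 < (ofLex y).2 :=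
  Prod.Lex.lt_iff

theorem pts_inj {n m : ℕ} (τ : Fin n → Fin m) {v : Fin n → ℕ} (hv : Function.Injective v) :
    Function.Injective (fun i => toLex ((τ i, v i) : Fin m × ℕ)) :=
  fun i j h => hv (congrArg (fun x => (ofLex x).2) h)

noncomputable def embTV {n m : ℕ} (τ : Fin n → Fin m) (v : Fin n → ℕ)
    (hv : Function.Injective v) : Fin n ↪o (Fin m ×ₗ ℕ) :=
  (Finset.image (fun i => toLex ((τ i, v i) : Fin m × ℕ)) Finset.univ).orderEmbOfFin
    (by rw [Finset.card_image_of_injective _ (pts_inj τ hv)]; simp)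

theorem embTV_mem {n m : ℕ} (τ : Fin n → Fin m) (v : Fin n → ℕ) (hv : Function.Injective v)
    (j : Fin n) : ∃ i, embTV τ v hv j = toLex ((τ i, v i) : Fin m × ℕ) := by
  have h := Finset.orderEmbOfFin_mem _ (by
    rw [Finset.card_image_of_injective _ (pts_inj τ hv)]; simp :
    (Finset.image (fun i => toLex ((τ i, v i) : Fin m × ℕ)) Finset.univ).card = n) j
  obtain ⟨i, -, hi⟩ := Finset.mem_image.mp h
  exact ⟨i, hi.symm⟩

theorem embTV_unique {n m : ℕ} {τ : Fin n → Fin m} {v : Fin n → ℕ}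
    {hv : Function.Injective v} (f : Fin n ↪o (Fin m ×ₗ ℕ))
    (hf : ∀ x, f x ∈ Finset.image (fun i => toLex ((τ i, v i) : Fin m × ℕ)) Finset.univ) :
    f = embTV τ v hv :=
  Finset.orderEmbOfFin_unique' _ hf

noncomputable def stype {n m : ℕ} (f : Fin n ↪o (Fin m ×ₗ ℕ)) : Fin n → Fin m :=
  lvls f ∘ ⇑(Tuple.sort (vals f))

noncomputable def svals {n m : ℕ} (f : Fin n ↪o (Fin m ×ₗ ℕ)) : Fin n → ℕ :=
  vals f ∘ ⇑(Tuple.sort (vals f))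

theorem stype_svals_embTV {n m : ℕ} (τ : Fin n → Fin m) (v : Fin n → ℕ) (hv : StrictMono v) :
    stype (embTV τ v hv.injective) = τ ∧ svals (embTV τ v hv.injective) = v := by
  set f := embTV τ v hv.injective with hf_def
  choose π hπ using embTV_mem τ v hv.injective
  have hπv : ∀ j, vals f j = v (π j) := fun j => by
    show (ofLex (f j)).2 = v (π j)
    rw [hπ j]
    rfl
  have hπl : ∀ j, lvls f j = τ (π j) := fun j => by
    show (ofLex (f j)).1 = τ (π j)
    rw [hπ j]
    rfl
  set σ := Tuple.sort (vals f) with hσ_def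
  have hmono : Monotone (vals f ∘ ⇑σ) := Tuple.monotone_sort (vals f)
  have hvinj : Function.Injective (vals f) := by
    intro i j h
    rw [hπv i, hπv j] at h
    have h2 : π i = π j := hv.injective h
    apply f.injective
    rw [hπ i, hπ j, h2]
  have hsm : StrictMono (vals f ∘ ⇑σ) :=
    hmono.strictMono_of_injective (hvinj.comp σ.injective)
  have hπσ : StrictMono (fun r => π (σ r)) := by
    intro r r' hrr'
    have h2 : v (π (σ r)) < v (π (σ r')) := by
      rw [← hπv (σ r), ← hπv (σ r')]
      exact hsm hrr'
    exact hv.lt_iff_lt.mp h2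
  have hid : (fun r => π (σ r)) = id := strictMono_fin_id hπσ
  constructor
  · funext r
    show lvls f (σ r) = τ r
    rw [hπl (σ r), show π (σ r) = r from congrFun hid r]
  · funext r
    show vals f (σ r) = v r
    rw [hπv (σ r), show π (σ r) = r from congrFun hid r]

theorem embTV_self {n m : ℕ} (f : Fin n ↪o (Fin m ×ₗ ℕ))
    (hv : Function.Injective (svals f)) : embTV (stype f) (svals f) hv = f := by
  symm
  apply embTV_unique
  intro x
  have heq : (fun i => toLex ((stype f i, svals f i) : Fin m × ℕ))
      = f ∘ ⇑(Tuple.sort (vals f)) := by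
    funext i
    rfl
  rw [heq]
  refine Finset.mem_image.mpr ⟨(Tuple.sort (vals f)).symm x, Finset.mem_univ _, ?_⟩
  simp

theorem upper (n m : ℕ) (hm : 1 ≤ m) : brdLE (Fin m ×ₗ ℕ) n (m ^ n) := by
  intro k hk χ
  classical
  let c : (Fin n → ℕ) → ((Fin n → Fin m) → Fin k) := fun v τ =>
    if h : Function.Injective v then χ (embTV τ v h) else ⟨0, by omega⟩
  obtain ⟨M, hM, D, hD⟩ := myRamsey n c
  let Φ : (Fin m ×ₗ ℕ) → (Fin m ×ₗ ℕ) :=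
    fun x => toLex ((ofLex x).1, M ((ofLex x).2 * m + (ofLex x).1))
  have hΦ : StrictMono Φ := by
    intro x y hxy
    rw [lex_lt_iff] at hxy
    rw [show Φ x < Φ y ↔ _ from lex_lt_iff (Φ x) (Φ y)]
    rcases hxy with h | ⟨h1, h2⟩
    · exact Or.inl h
    · refine Or.inr ⟨h1, hM ?_⟩
      have h1' : ((ofLex x).1 : ℕ) = ((ofLex y).1 : ℕ) := congrArg _ h1
      have h3 : (ofLex x).2 * m < (ofLex y).2 * m :=
        (Nat.mul_lt_mul_right hm).mpr h2
      omega
  refine ⟨Set.range Φ, ⟨(StrictMono.orderIso Φ hΦ).symm⟩, ?_⟩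
  have hsub : χ '' {f | ∀ i, f i ∈ Set.range Φ} ⊆ Set.range D := by
    rintro y ⟨f, hf, rfl⟩
    choose g hg using fun i => hf i
    have hval : ∀ i, vals f i = M ((ofLex (g i)).2 * m + (ofLex (g i)).1) := fun i => by
      show (ofLex (f i)).2 = _
      rw [← hg i]
      rfl
    have hvinj : Function.Injective (vals f) := by
      intro i j h
      rw [hval i, hval j] at h
      have harg := hM.injective h
      have hli : ((ofLex (g i)).1 : ℕ) < m := (ofLex (g i)).1.isLt
      have hlj : ((ofLex (g j)).1 : ℕ) < m := (ofLex (g j)).1.isLt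
      have e1 : ((ofLex (g i)).2 * m + (ofLex (g i)).1) % m = ((ofLex (g i)).1 : ℕ) % m :=
        Nat.mul_add_mod' _ _ _
      have e2 : ((ofLex (g j)).2 * m + (ofLex (g j)).1) % m = ((ofLex (g j)).1 : ℕ) % m :=
        Nat.mul_add_mod' _ _ _
      have hmod : ((ofLex (g i)).1 : ℕ) = ((ofLex (g j)).1 : ℕ) := by
        rw [Nat.mod_eq_of_lt hli] at e1
        rw [Nat.mod_eq_of_lt hlj] at e2
        rw [← e1, ← e2, harg]
      have hL : (ofLex (g i)).1 = (ofLex (g j)).1 := Fin.ext hmod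
      have h2 : (ofLex (g i)).2 = (ofLex (g j)).2 := by
        have : (ofLex (g i)).2 * m = (ofLex (g j)).2 * m := by omega
        exact Nat.eq_of_mul_eq_mul_right hm this
      apply f.injective
      rw [← hg i, ← hg j]
      show toLex ((ofLex (g i)).1, M ((ofLex (g i)).2 * m + (ofLex (g i)).1))
        = toLex ((ofLex (g j)).1, M ((ofLex (g j)).2 * m + (ofLex (g j)).1))
      rw [hL, h2]
    have hsv_inj : Function.Injective (svals f) :=
      hvinj.comp (Tuple.sort (vals f)).injective
    have hsv_mono : StrictMono (svals f) :=
      (Tuple.monotone_sort (vals f)).strictMono_of_injective hsv_inj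
    let w : Fin n → ℕ := fun r =>
      (ofLex (g (Tuple.sort (vals f) r))).2 * m + (ofLex (g (Tuple.sort (vals f) r))).1
    have hw : ∀ r, svals f r = M (w r) := fun r => hval _
    have hwmono : StrictMono w := by
      intro r r' h
      apply hM.lt_iff_lt.mp
      rw [← hw r, ← hw r']
      exact hsv_mono h
    refine ⟨stype f, ?_⟩
    have h1 : χ f = χ (embTV (stype f) (svals f) hsv_inj) := by
      rw [embTV_self f hsv_inj]
    have h2 : χ (embTV (stype f) (svals f) hsv_inj) = c (svals f) (stype f) := by
      show _ = dite _ _ _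
      rw [dif_pos hsv_inj]
    have h3 : svals f = M ∘ w := funext hw
    rw [h1, h2, h3, hD w hwmono]
  calc (χ '' {f | ∀ i, f i ∈ Set.range Φ}).ncard
      ≤ (Set.range D).ncard := Set.ncard_le_ncard hsub (Set.toFinite _)
    _ ≤ m ^ n := by
        rw [← Set.image_univ]
        refine le_trans (Set.ncard_image_le (Set.toFinite _)) ?_
        rw [Set.ncard_univ]
        simp [Nat.card_eq_fintype_card]

theorem blocks {m : ℕ} {U : Set (Fin m ×ₗ ℕ)} (e : U ≃o (Fin m ×ₗ ℕ)) :
    ∃ ν : Fin m → ℕ → ℕ, (∀ ℓ, StrictMono (ν ℓ)) ∧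
      (∀ ℓ t, toLex ((ℓ, ν ℓ t) : Fin m × ℕ) ∈ U) := by
  classical
  let A : Fin m → ℕ → (Fin m ×ₗ ℕ) := fun ℓ i => ↑(e.symm (toLex (ℓ, i)))
  have hA_mem : ∀ ℓ i, A ℓ i ∈ U := fun ℓ i => (e.symm (toLex (ℓ, i))).2
  have hA_lt : ∀ {ℓ ℓ' : Fin m} {i i' : ℕ},
      toLex ((ℓ, i) : Fin m × ℕ) < toLex ((ℓ', i') : Fin m × ℕ) → A ℓ i < A ℓ' i' := by
    intro ℓ ℓ' i i' h
    exact Subtype.coe_lt_coe.mpr (e.symm.strictMono h)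
  -- stabilization of first coordinates
  have hblk : ∀ ℓ : Fin m, ∃ (L : Fin m) (ν : ℕ → ℕ) (i₀ : ℕ), StrictMono ν ∧
      ∀ t, A ℓ (i₀ + t) = toLex ((L, ν t) : Fin m × ℕ) := by
    intro ℓ
    set μ : ℕ → ℕ := fun i => ((ofLex (A ℓ i)).1 : ℕ) with hμ_def
    have hμ_mono : Monotone μ := by
      intro i j hij
      rcases eq_or_lt_of_le hij with rfl | hij
      · exact le_rfl
      · have h1 : A ℓ i < A ℓ j := hA_lt (by
          rw [lex_lt_iff]; exact Or.inr ⟨rfl, hij⟩)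
        exact Prod.Lex.monotone_fst _ _ h1.le
    have hbdd : BddAbove (Set.range μ) := by
      refine ⟨m, ?_⟩
      rintro x ⟨i, rfl⟩
      exact le_of_lt (ofLex (A ℓ i)).1.isLt
    obtain ⟨i₀, hi₀⟩ := Nat.sSup_mem (Set.range_nonempty μ) hbdd
    have hstab : ∀ t, μ (i₀ + t) = μ i₀ := by
      intro t
      refine le_antisymm ?_ (hμ_mono (Nat.le_add_right _ _))
      rw [hi₀]
      exact le_csSup hbdd ⟨i₀ + t, rfl⟩
    refine ⟨(ofLex (A ℓ i₀)).1, fun t => (ofLex (A ℓ (i₀ + t))).2, i₀, ?_, ?_⟩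
    · intro t t' htt'
      have h1 : A ℓ (i₀ + t) < A ℓ (i₀ + t') := hA_lt (by
        rw [lex_lt_iff]; exact Or.inr ⟨rfl, show i₀ + t < i₀ + t' by omega⟩)
      rw [lex_lt_iff] at h1
      rcases h1 with h | ⟨-, h⟩
      · exfalso
        have e1 : ((ofLex (A ℓ (i₀ + t))).1 : ℕ) = ((ofLex (A ℓ i₀)).1 : ℕ) := hstab t
        have e2 : ((ofLex (A ℓ (i₀ + t'))).1 : ℕ) = ((ofLex (A ℓ i₀)).1 : ℕ) := hstab t'
        have e3 : ((ofLex (A ℓ (i₀ + t))).1 : ℕ) < ((ofLex (A ℓ (i₀ + t'))).1 : ℕ) := h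
        omega
      · exact h
    · intro t
      have hfst : (ofLex (A ℓ (i₀ + t))).1 = (ofLex (A ℓ i₀)).1 := Fin.ext (hstab t)
      have : A ℓ (i₀ + t)
          = toLex (((ofLex (A ℓ (i₀ + t))).1, (ofLex (A ℓ (i₀ + t))).2) : Fin m × ℕ) := rfl
      rw [this, hfst]
  choose L ν i₀ hν hpt using hblk
  -- cross-block comparison forces L = id
  have hcross : ∀ {ℓ ℓ' : Fin m}, ℓ < ℓ' → ∀ t t',
      toLex ((L ℓ, ν ℓ t) : Fin m × ℕ) < toLex ((L ℓ', ν ℓ' t') : Fin m × ℕ) := by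
    intro ℓ ℓ' h t t'
    rw [← hpt ℓ t, ← hpt ℓ' t']
    exact hA_lt (by rw [lex_lt_iff]; exact Or.inl h)
  have hLmono : StrictMono L := by
    intro ℓ ℓ' h
    have h1 := hcross h (ν ℓ' 0 + 1) 0
    rw [lex_lt_iff] at h1
    rcases h1 with h1 | ⟨-, h1⟩
    · exact h1
    · exfalso
      have h1' : ν ℓ (ν ℓ' 0 + 1) < ν ℓ' 0 := h1
      have h2 : ν ℓ' 0 + 1 ≤ ν ℓ (ν ℓ' 0 + 1) := (hν ℓ).le_apply
      omega
  have hLid : L = id := strictMono_fin_id hLmono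
  refine ⟨ν, hν, fun ℓ t => ?_⟩
  have h4 : L ℓ = ℓ := congrFun hLid ℓ
  have h5 : toLex ((ℓ, ν ℓ t) : Fin m × ℕ) = A ℓ (i₀ ℓ + t) := by
    rw [hpt ℓ t, h4]
  rw [h5]
  exact hA_mem _ _

theorem lower (n m : ℕ) (hn : 1 ≤ n) (hm : 1 ≤ m) (s : ℕ)
    (hs : brdLE (Fin m ×ₗ ℕ) n s) : m ^ n ≤ s := by
  classical
  let encode : (Fin n → Fin m) → Fin (m ^ n + 2) := fun τ =>
    Fin.castLE (by omega) (finFunctionFinEquiv τ)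
  have hεinj : Function.Injective encode := fun a b h =>
    finFunctionFinEquiv.injective (Fin.castLE_injective _ h)
  obtain ⟨U, ⟨e⟩, hcard⟩ := hs (m ^ n + 2) (by omega) (fun f => encode (stype f))
  obtain ⟨ν, hν, hmem⟩ := blocks e
  have realized : ∀ τ : Fin n → Fin m,
      ∃ f : Fin n ↪o (Fin m ×ₗ ℕ), (∀ i, f i ∈ U) ∧ encode (stype f) = encode τ := by
    intro τ
    let τ' : ℕ → Fin m := fun j => τ ⟨j % n, Nat.mod_lt j hn⟩
    let u : ℕ → ℕ := fun t => Nat.rec (ν (τ' 0) 0) (fun t prev => ν (τ' (t + 1)) (prev + 1)) t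
    have hu_mem : ∀ t, ∃ s2, u t = ν (τ' t) s2 := by
      intro t
      cases t with
      | zero => exact ⟨0, rfl⟩
      | succ t => exact ⟨u t + 1, rfl⟩
    have hu_mono : StrictMono u := by
      apply strictMono_nat_of_lt_succ
      intro t
      have h1 : u (t + 1) = ν (τ' (t + 1)) (u t + 1) := rfl
      have h2 : u t + 1 ≤ ν (τ' (t + 1)) (u t + 1) := (hν _).le_apply
      omega
    let v : Fin n → ℕ := fun r => u r
    have hv : StrictMono v := fun r r' h => hu_mono h
    have hτ' : ∀ r : Fin n, τ' r = τ r := by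
      intro r
      show τ _ = τ r
      congr 1
      exact Fin.ext (Nat.mod_eq_of_lt r.isLt)
    have hvm : ∀ r : Fin n, toLex ((τ r, v r) : Fin m × ℕ) ∈ U := by
      intro r
      obtain ⟨s2, hs2⟩ := hu_mem r
      rw [show (v r : ℕ) = ν (τ' r) s2 from hs2, ← hτ' r]
      exact hmem _ _
    refine ⟨embTV τ v hv.injective, ?_, ?_⟩
    · intro j
      obtain ⟨i, hi⟩ := embTV_mem τ v hv.injective j
      rw [hi]
      exact hvm i
    · rw [(stype_svals_embTV τ v hv).1]
  have hsub : Set.range encode ⊆ (fun f => encode (stype f)) '' {f | ∀ i, f i ∈ U} := by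
    rintro y ⟨τ, rfl⟩
    obtain ⟨f, hf, hχ⟩ := realized τ
    exact ⟨f, hf, hχ⟩
  have h1 : (Set.range encode).ncard = m ^ n := by
    rw [← Set.image_univ, Set.ncard_image_of_injective _ hεinj, Set.ncard_univ]
    simp [Nat.card_eq_fintype_card]
  calc m ^ n = (Set.range encode).ncard := h1.symm
    _ ≤ ((fun f => encode (stype f)) '' {f | ∀ i, f i ∈ U}).ncard :=
        Set.ncard_le_ncard hsub (Set.toFinite _)
    _ ≤ s := hcard

end Aux

/-- `T(n, ω·m) = m ^ n` for all `n, m ≥ 1`. -/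
theorem stmt11 (n m : ℕ) (hn : 1 ≤ n) (hm : 1 ≤ m) :
    hasBRD (Fin m ×ₗ ℕ) n (m ^ n) :=
  ⟨upper n m hm, fun s hs => lower n m hn hm s hs⟩
end

section
/- Fix integers s ≥ 1 and n₀, …, n_{s−1} ≥ 1 and let N = n₀ + … + n_{s−1}. For every k ≥ 2 and every coloring χ of the product of the sets of nᵢ-element subsets of ω, there is an infinite U ⊆ ω such that χ attains at most Σ_{j=1}^{N} j!·S(N, j) colors on the product of nᵢ-element subsets of U, where S(N, j) is the Stirling number of the second kind. -/
open Set

/-- Stirling numbers of the second kind. -/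
def stirling2 : ℕ → ℕ → ℕ
  | 0, 0 => 1
  | 0, _ + 1 => 0
  | _ + 1, 0 => 0
  | n + 1, j + 1 => (j + 1) * stirling2 n (j + 1) + stirling2 n j



lemma aux_ramsey (k : ℕ) : ∀ (m : ℕ) (c : Finset ℕ → Fin k) (S : Set ℕ), S.Infinite →
    ∃ T, T ⊆ S ∧ T.Infinite ∧ ∃ d, ∀ t : Finset ℕ, ↑t ⊆ T → t.card = m → c t = d := by
  intro m
  induction m with
  | zero =>
    intro c S hS
    exact ⟨S, subset_rfl, hS, c ∅, fun t _ h0 => by rw [Finset.card_eq_zero.mp h0]⟩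
  | succ m IH =>
    intro c S hS
    have key : ∀ S' : Set ℕ, S'.Infinite →
        ∃ p : Set ℕ × Fin k, p.1 ⊆ S' \ {sInf S'} ∧ p.1.Infinite ∧
          ∀ t : Finset ℕ, ↑t ⊆ p.1 → t.card = m → c (insert (sInf S') t) = p.2 := by
      intro S' hS'
      obtain ⟨T, hTs, hTi, d, hd⟩ := IH (fun t => c (insert (sInf S') t))
        (S' \ {sInf S'}) (hS'.diff (Set.finite_singleton _))
      exact ⟨(T, d), hTs, hTi, hd⟩
    let step : {S : Set ℕ // S.Infinite} → {S : Set ℕ // S.Infinite} :=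
      fun x => ⟨(key x.1 x.2).choose.1, (key x.1 x.2).choose_spec.2.1⟩
    let chain : ℕ → {S : Set ℕ // S.Infinite} := fun n => step^[n] ⟨S, hS⟩
    let a : ℕ → ℕ := fun n => sInf (chain n).1
    let dd : ℕ → Fin k := fun n => (key (chain n).1 (chain n).2).choose.2
    have hchain_succ : ∀ n, chain (n + 1) = step (chain n) := by
      intro n; simp only [chain, Function.iterate_succ_apply']
    have h1 : ∀ n, (chain (n+1)).1 ⊆ (chain n).1 \ {a n} := by
      intro n; rw [hchain_succ n]
      exact (key (chain n).1 (chain n).2).choose_spec.1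
    have h2 : ∀ n, ∀ t : Finset ℕ, ↑t ⊆ (chain (n+1)).1 → t.card = m →
        c (insert (a n) t) = dd n := by
      intro n; rw [hchain_succ n]
      exact (key (chain n).1 (chain n).2).choose_spec.2.2
    have h3 : ∀ n, a n ∈ (chain n).1 := fun n => Nat.sInf_mem (chain n).2.nonempty
    have h4 : ∀ p q, p ≤ q → (chain q).1 ⊆ (chain p).1 := by
      intro p q hpq
      induction q with
      | zero => simp_all
      | succ q IH2 =>
        rcases Nat.eq_or_lt_of_le hpq with h | h
        · rw [h]
        · exact ((h1 q).trans (Set.diff_subset)).trans (IH2 (Nat.lt_succ_iff.mp h))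
    have h5 : StrictMono a := by
      apply strictMono_nat_of_lt_succ
      intro n
      have := h1 n (h3 (n+1))
      have hle : a n ≤ a (n+1) := Nat.sInf_le this.1
      have hne : a (n+1) ≠ a n := this.2
      omega
    obtain ⟨d₀, hfib⟩ := Finite.exists_infinite_fiber dd
    have hIinf : (dd ⁻¹' {d₀}).Infinite := Set.infinite_coe_iff.mp hfib
    refine ⟨a '' (dd ⁻¹' {d₀}), ?_, hIinf.image (h5.injective.injOn), d₀, ?_⟩
    · rintro x ⟨n, _, rfl⟩
      exact h4 0 n (Nat.zero_le n) (h3 n)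
    · intro t ht hcard
      have hne : t.Nonempty := Finset.card_pos.mp (by omega)
      set x := t.min' hne with hx
      have hxt : x ∈ t := t.min'_mem hne
      obtain ⟨i, hi, hxi⟩ := ht hxt
      have hsub : ↑(t.erase x) ⊆ (chain (i+1)).1 := by
        intro y hy
        have hyt : y ∈ t := Finset.mem_of_mem_erase hy
        have hyx : y ≠ x := Finset.ne_of_mem_erase hy
        obtain ⟨j, hj, hyj⟩ := ht hyt
        have hxy : x < y := lt_of_le_of_ne (t.min'_le y hyt) (Ne.symm hyx)
        have hij : i < j := by
          have : a i < a j := by rw [hxi, hyj]; exact hxy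
          exact h5.lt_iff_lt.mp this
        rw [← hyj]
        exact h4 (i+1) j hij (h3 j)
      have hcard' : (t.erase x).card = m := by
        rw [Finset.card_erase_of_mem hxt]; omega
      have := h2 i (t.erase x) hsub hcard'
      rw [hxi, Finset.insert_erase hxt] at this
      rw [this, hi]

lemma aux_ramsey_list (k : ℕ) (L : List ((Finset ℕ → Fin k) × ℕ)) :
    ∀ S : Set ℕ, S.Infinite →
    ∃ T, T ⊆ S ∧ T.Infinite ∧ ∀ p ∈ L, ∃ d, ∀ t : Finset ℕ, ↑t ⊆ T → t.card = p.2 → p.1 t = d := by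
  induction L with
  | nil => intro S hS; exact ⟨S, subset_rfl, hS, by simp⟩
  | cons p L IH =>
    intro S hS
    obtain ⟨T1, hT1s, hT1i, hT1⟩ := IH S hS
    obtain ⟨T, hTs, hTi, d, hd⟩ := aux_ramsey k p.2 p.1 T1 hT1i
    refine ⟨T, hTs.trans hT1s, hTi, ?_⟩
    intro q hq
    rcases List.mem_cons.mp hq with rfl | hq
    · exact ⟨d, hd⟩
    · obtain ⟨d', hd'⟩ := hT1 q hq
      exact ⟨d', fun t ht hc => hd' t (ht.trans hTs) hc⟩

lemma aux_surj_card : ∀ (n j : ℕ),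
    Nat.card {f : Fin n → Fin j // Function.Surjective f} = j.factorial * stirling2 n j := by
  intro n
  induction n with
  | zero =>
    intro j
    cases j with
    | zero =>
      have : Unique {f : Fin 0 → Fin 0 // Function.Surjective f} :=
        ⟨⟨⟨finZeroElim, fun b => b.elim0⟩⟩, fun f => Subtype.ext (funext fun x => x.elim0)⟩
      simp [Nat.card_unique, stirling2]
    | succ j =>
      have : IsEmpty {f : Fin 0 → Fin (j+1) // Function.Surjective f} := by
        constructor; rintro ⟨f, hf⟩
        obtain ⟨x, -⟩ := hf 0
        exact x.elim0
      simp [Nat.card_of_isEmpty, stirling2]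
  | succ n IH =>
    intro j
    cases j with
    | zero =>
      have : IsEmpty {f : Fin (n+1) → Fin 0 // Function.Surjective f} := by
        constructor; rintro ⟨f, -⟩
        exact (f 0).elim0
      simp [Nat.card_of_isEmpty, stirling2]
    | succ j =>
      classical
      have e1 : {f : Fin (n+1) → Fin (j+1) // Function.Surjective f} ≃
          Σ v : Fin (j+1), {g : Fin n → Fin (j+1) // Function.Surjective (Fin.snoc g v)} := by
        refine ⟨fun f => ⟨f.1 (Fin.last n), Fin.init f.1, ?_⟩,
                fun x => ⟨Fin.snoc x.2.1 x.1, x.2.2⟩, ?_, ?_⟩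
        · rw [Fin.snoc_init_self]; exact f.2
        · rintro ⟨f, hf⟩; exact Subtype.ext (Fin.snoc_init_self f)
        · rintro ⟨v, g, hg⟩
          refine Sigma.ext (by simp) ?_
          refine (Subtype.heq_iff_coe_eq ?_).mpr ?_
          · intro x
            simp
          · simp
      rw [Nat.card_congr e1, Nat.card_eq_fintype_card, Fintype.card_sigma]
      have key : ∀ v : Fin (j+1),
          Fintype.card {g : Fin n → Fin (j+1) // Function.Surjective (Fin.snoc g v)} =
            (j+1).factorial * stirling2 n (j+1) + j.factorial * stirling2 n j := by
        intro v
        have hiff : ∀ g : Fin n → Fin (j+1), Function.Surjective (Fin.snoc g v) ↔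
            (Function.Surjective g ∨ (v ∉ Set.range g ∧ ∀ w, w ≠ v → w ∈ Set.range g)) := by
          intro g
          constructor
          · intro hs
            by_cases hv : v ∈ Set.range g
            · left
              intro w
              by_cases hw : w = v
              · subst hw; exact hv
              · obtain ⟨x, hx⟩ := hs w
                refine Fin.lastCases ?_ (fun y hy => ⟨y, ?_⟩) x hx
                · intro h; rw [Fin.snoc_last] at h; exact absurd h.symm hw
                · rwa [Fin.snoc_castSucc] at hy
            · right
              refine ⟨hv, fun w hw => ?_⟩
              obtain ⟨x, hx⟩ := hs w
              refine Fin.lastCases ?_ (fun y hy => ⟨y, ?_⟩) x hx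
              · intro h; rw [Fin.snoc_last] at h; exact absurd h.symm hw
              · rwa [Fin.snoc_castSucc] at hy
          · rintro (hs | ⟨-, hs⟩) <;> intro w
            · obtain ⟨y, hy⟩ := hs w
              exact ⟨Fin.castSucc y, by rwa [Fin.snoc_castSucc]⟩
            · by_cases hw : w = v
              · exact ⟨Fin.last n, by rw [Fin.snoc_last, hw]⟩
              · obtain ⟨y, hy⟩ := hs w hw
                exact ⟨Fin.castSucc y, by rwa [Fin.snoc_castSucc]⟩
          
        rw [Fintype.card_congr (Equiv.subtypeEquivRight hiff)]
        rw [Fintype.card_subtype_or_disjoint]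
        · congr 1
          · rw [← Nat.card_eq_fintype_card, IH (j+1)]
          · -- card {g // v ∉ range g ∧ ∀ w ≠ v, w ∈ range g} = card surjections onto Fin j
            rw [← Nat.card_eq_fintype_card, ← IH j]
            symm
            apply Nat.card_eq_of_bijective
              (f := fun h : {h : Fin n → Fin j // Function.Surjective h} =>
                (⟨v.succAbove ∘ h.1, ?_, ?_⟩ :
                  {g : Fin n → Fin (j+1) // v ∉ Set.range g ∧ ∀ w, w ≠ v → w ∈ Set.range g}))
            · constructor
              · intro h1 h2 hh
                apply Subtype.ext
                have := congrArg Subtype.val hh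
                exact funext fun x => Fin.succAbove_right_injective (congrFun this x)
              · rintro ⟨g, hg1, hg2⟩
                have hgx : ∀ x, g x ≠ v := fun x hx => hg1 ⟨x, hx⟩
                choose h hh using fun x => Fin.exists_succAbove_eq (hgx x)
                refine ⟨⟨h, ?_⟩, Subtype.ext (funext fun x => (hh x))⟩
                intro z
                obtain ⟨y, hy⟩ := hg2 (v.succAbove z) (Fin.succAbove_ne v z)
                exact ⟨y, Fin.succAbove_right_injective (by rw [hh y, hy])⟩
            · rintro ⟨x, hx⟩; exact Fin.succAbove_ne v (h.1 x) hx
            · intro w hw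
              obtain ⟨z, hz⟩ := Fin.exists_succAbove_eq hw
              obtain ⟨y, hy⟩ := h.2 z
              exact ⟨y, by simp [Function.comp, hy, hz]⟩
        · intro r hrp hrq g hg
          exact (hrq g hg).1 ((hrp g hg) v)
      rw [Finset.sum_congr rfl (fun v _ => key v)]
      rw [Finset.sum_const, Finset.card_univ, Fintype.card_fin, smul_eq_mul]
      show (j+1) * _ = (j+1).factorial * stirling2 (n+1) (j+1)
      rw [stirling2, Nat.factorial_succ]
      ring

open Classical in
noncomputable def auxColor {s : ℕ} (nn : Fin s → ℕ) {k : ℕ}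
    (χ : (∀ i : Fin s, Fin (nn i) ↪o ℕ) → Fin k) (d0 : Fin k)
    (j : ℕ) (g : ((i : Fin s) × Fin (nn i)) → Fin j) (B : Finset ℕ) : Fin k :=
  if h : B.card = j ∧ ∀ i, StrictMono (fun j' : Fin (nn i) => g ⟨i, j'⟩) then
    χ (fun i => OrderEmbedding.ofStrictMono
      (fun j' => ((B.orderIsoOfFin h.1) (g ⟨i, j'⟩) : ℕ))
      (fun a b hab =>
        Subtype.coe_lt_coe.mpr ((OrderIso.lt_iff_lt _).mpr (h.2 i hab))))
  else d0


/-- Infinite product Ramsey theorem: for every finite coloring of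
`[ω]^{n₀} × … × [ω]^{n_{s-1}}` there is an infinite `U ⊆ ω` on which at most
`∑_{j=1}^N j!·S(N,j)` colors occur, where `N = n₀ + … + n_{s-1}`. -/
theorem stmt12 (s : ℕ) (hs : 1 ≤ s) (nn : Fin s → ℕ) (hnn : ∀ i, 1 ≤ nn i)
    (k : ℕ) (hk : 2 ≤ k)
    (χ : (∀ i : Fin s, Fin (nn i) ↪o ℕ) → Fin k) :
    ∃ U : Set ℕ, U.Infinite ∧
      (χ '' {F | ∀ (i : Fin s) (j : Fin (nn i)), F i j ∈ U}).ncard ≤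
        ∑ j ∈ Finset.Icc 1 (∑ i, nn i), (Nat.factorial j) * stirling2 (∑ i, nn i) j := by
  classical
  set N := ∑ i, nn i with hN
  set P := (i : Fin s) × Fin (nn i) with hP
  have hPcard : Fintype.card P = N := by
    simp [hP, hN]
  have hp0 : Nonempty P := ⟨⟨⟨0, hs⟩, ⟨0, hnn _⟩⟩⟩
  set d0 : Fin k := ⟨0, by omega⟩ with hd0
  -- homogenize over all (j, g)
  set Idx := (j : Fin (N+1)) × (P → Fin (j : ℕ)) with hIdx
  set L : List ((Finset ℕ → Fin k) × ℕ) :=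
    (Finset.univ : Finset Idx).toList.map
      (fun x => (auxColor nn χ d0 (x.1 : ℕ) x.2, (x.1 : ℕ))) with hL
  obtain ⟨U, -, hUi, hhom⟩ := aux_ramsey_list k L Set.univ Set.infinite_univ
  have hd : ∀ x : Idx, ∃ d, ∀ t : Finset ℕ, ↑t ⊆ U → t.card = (x.1 : ℕ) →
      auxColor nn χ d0 (x.1 : ℕ) x.2 t = d := by
    intro x
    exact hhom _ (List.mem_map.mpr ⟨x, Finset.mem_toList.mpr (Finset.mem_univ x), rfl⟩)
  choose D hD using hd
  set V : Set Idx := {x : Idx | 1 ≤ (x.1 : ℕ) ∧ Function.Surjective x.2} with hV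
  refine ⟨U, hUi, ?_⟩
  have hsub : χ '' {F | ∀ (i : Fin s) (j : Fin (nn i)), F i j ∈ U} ⊆ D '' V := by
    rintro _ ⟨F, hF, rfl⟩
    set A : Finset ℕ := Finset.image (fun p : P => F p.1 p.2) Finset.univ with hA
    have hmem : ∀ p : P, F p.1 p.2 ∈ A := fun p =>
      Finset.mem_image_of_mem _ (Finset.mem_univ p)
    have hA1 : 1 ≤ A.card := Finset.card_pos.mpr ⟨F hp0.some.1 hp0.some.2, hmem hp0.some⟩
    have hAle : A.card ≤ N := by
      calc A.card ≤ (Finset.univ : Finset P).card := Finset.card_image_le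
        _ = N := by rw [Finset.card_univ, hPcard]
    have hAU : ↑A ⊆ U := by
      intro y hy
      simp only [hA, Finset.coe_image, Set.mem_image] at hy
      obtain ⟨p, -, rfl⟩ := hy
      exact hF p.1 p.2
    set m := A.card with hm
    set iso := A.orderIsoOfFin rfl with hiso
    set g : P → Fin m := fun p => iso.symm ⟨F p.1 p.2, hmem p⟩ with hg
    have hgs : Function.Surjective g := by
      intro b
      have : ((iso b : ℕ)) ∈ A := (iso b).2
      obtain ⟨p, -, hp⟩ := Finset.mem_image.mp this
      refine ⟨p, ?_⟩
      have h' : (⟨F p.1 p.2, hmem p⟩ : {y // y ∈ A}) = iso b := Subtype.ext hp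
      show iso.symm ⟨F p.1 p.2, hmem p⟩ = b
      rw [h', OrderIso.symm_apply_apply]
    have hmono : ∀ i, StrictMono (fun j' : Fin (nn i) => g ⟨i, j'⟩) := by
      intro i a b hab
      exact (OrderIso.lt_iff_lt _).mpr (Subtype.mk_lt_mk.mpr ((F i).lt_iff_lt.mpr hab))
    have hcond : A.card = m ∧ ∀ i, StrictMono (fun j' : Fin (nn i) => g ⟨i, j'⟩) :=
      ⟨rfl, hmono⟩
    have hmlt : m < N + 1 := by omega
    set x : Idx := ⟨⟨m, hmlt⟩, g⟩ with hx
    have hχ : auxColor nn χ d0 m g A = χ F := by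
      rw [auxColor, dif_pos hcond]
      congr 1
      funext i
      ext j'
      show ((iso (g ⟨i, j'⟩)) : ℕ) = F i j'
      show ((iso (iso.symm ⟨F i j', hmem ⟨i, j'⟩⟩)) : ℕ) = F i j'
      rw [OrderIso.apply_symm_apply]
    refine ⟨x, ⟨hA1, hgs⟩, ?_⟩
    rw [← hD x A hAU rfl]
    exact hχ
  have h1 : (χ '' {F | ∀ (i : Fin s) (j : Fin (nn i)), F i j ∈ U}).ncard ≤ (D '' V).ncard :=
    Set.ncard_le_ncard hsub (Set.toFinite _)
  have h2 : (D '' V).ncard ≤ V.ncard := Set.ncard_image_le (Set.toFinite _)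
  have h3 : V.ncard = ∑ j ∈ Finset.Icc 1 N, (Nat.factorial j) * stirling2 N j := by
    rw [← Nat.card_coe_set_eq]
    have e : ↥V ≃ Σ j : Fin (N+1), {g : P → Fin (j : ℕ) // 1 ≤ (j : ℕ) ∧ Function.Surjective g} :=
      ⟨fun x => ⟨x.1.1, x.1.2, x.2⟩, fun y => ⟨⟨y.1, y.2.1⟩, y.2.2⟩,
        fun _ => rfl, fun _ => rfl⟩
    rw [Nat.card_congr e, Nat.card_eq_fintype_card, Fintype.card_sigma]
    have hterm : ∀ j : Fin (N+1),
        Fintype.card {g : P → Fin (j : ℕ) // 1 ≤ (j : ℕ) ∧ Function.Surjective g} =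
          if 1 ≤ (j : ℕ) then (j : ℕ).factorial * stirling2 N (j : ℕ) else 0 := by
      intro j
      by_cases hj : 1 ≤ (j : ℕ)
      · rw [if_pos hj, ← Nat.card_eq_fintype_card]
        have e1 : {g : P → Fin (j : ℕ) // 1 ≤ (j : ℕ) ∧ Function.Surjective g} ≃
            {g : P → Fin (j : ℕ) // Function.Surjective g} :=
          Equiv.subtypeEquivRight (fun g => ⟨fun h => h.2, fun h => ⟨hj, h⟩⟩)
        have eP : P ≃ Fin N := Fintype.equivFinOfCardEq hPcard
        have e2 : {g : P → Fin (j : ℕ) // Function.Surjective g} ≃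
            {f : Fin N → Fin (j : ℕ) // Function.Surjective f} := by
          refine Equiv.subtypeEquiv (Equiv.arrowCongr eP (Equiv.refl _)) (fun g => ?_)
          constructor
          · intro h x
            obtain ⟨p, hp⟩ := h x
            exact ⟨eP p, by simp [Equiv.arrowCongr_apply, Function.comp, hp]⟩
          · intro h x
            obtain ⟨y, hy⟩ := h x
            exact ⟨eP.symm y, by simpa [Equiv.arrowCongr_apply, Function.comp] using hy⟩
        rw [Nat.card_congr (e1.trans e2), aux_surj_card]
      · rw [if_neg hj]
        have : IsEmpty {g : P → Fin (j : ℕ) // 1 ≤ (j : ℕ) ∧ Function.Surjective g} :=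
          ⟨fun x => hj x.2.1⟩
        exact Fintype.card_eq_zero
    calc (∑ j : Fin (N+1),
            Fintype.card {g : P → Fin (j : ℕ) // 1 ≤ (j : ℕ) ∧ Function.Surjective g})
        = ∑ j : Fin (N+1), (if 1 ≤ (j : ℕ) then (j : ℕ).factorial * stirling2 N (j : ℕ) else 0) :=
          Finset.sum_congr rfl (fun j _ => hterm j)
      _ = ∑ j ∈ Finset.range (N+1), (if 1 ≤ j then j.factorial * stirling2 N j else 0) :=
          Fin.sum_univ_eq_sum_range (fun j => if 1 ≤ j then j.factorial * stirling2 N j else 0) (N+1)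
      _ = ∑ j ∈ (Finset.range (N+1)).filter (fun j => 1 ≤ j), j.factorial * stirling2 N j :=
          (Finset.sum_filter _ _).symm
      _ = ∑ j ∈ Finset.Icc 1 N, j.factorial * stirling2 N j := by
          have hfe : (Finset.range (N+1)).filter (fun j => 1 ≤ j) = Finset.Icc 1 N := by
            ext j
            simp [Finset.mem_filter, Finset.mem_range, Finset.mem_Icc, Nat.lt_succ_iff,
              and_comm]
          rw [hfe]
  exact h1.trans (h2.trans h3.le)
end

section
/- Let α be a countable ordinal with finite big Ramsey degrees. Then α^m has finite big Ramsey degrees for every integer m ≥ 1. -/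
open Set

/-! ### Auxiliary material -/

section Aux

open Set

/-- A well-founded-`<` instance for `Fin m`, registered to help instance search. -/
instance auxFinWFLT (m : ℕ) : WellFoundedLT (Fin m) := inferInstance

/-- Build an order isomorphism between linear orders from an equivalence that
reflects the strict order. -/
def orderIsoOfLtIff {X Y : Type*} [LinearOrder X] [LinearOrder Y] (e : X ≃ Y)
    (h : ∀ a b : X, e a < e b ↔ a < b) : X ≃o Y :=
  { e with
    map_rel_iff' := by
      intro a b
      rw [← not_lt, ← not_lt]
      exact not_congr (h b a) }

lemma pilex_lt_def {m : ℕ} {C : Type*} [LinearOrder C] (x y : Lex (Fin m → C)) :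
    x < y ↔ ∃ i, (∀ j, j < i → ofLex x j = ofLex y j) ∧ ofLex x i < ofLex y i := Iff.rfl

/-- Coordinatewise congruence for lexicographic powers. -/
noncomputable def lexPiCongr {m : ℕ} {X Y : Type*} [LinearOrder X] [LinearOrder Y] (φ : X ≃o Y) :
    Lex (Fin m → X) ≃o Lex (Fin m → Y) :=
  orderIsoOfLtIff (X := Lex (Fin m → X)) (Y := Lex (Fin m → Y))
    { toFun := fun x => toLex fun j => φ (ofLex x j)
      invFun := fun y => toLex fun j => φ.symm (ofLex y j)
      left_inv := fun x => by apply congrArg toLex; funext j; simp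
      right_inv := fun y => by apply congrArg toLex; funext j; simp }
    (by
      intro a b
      show (toLex fun j => φ (ofLex a j)) < (toLex fun j => φ (ofLex b j)) ↔ a < b
      constructor
      · intro h
        obtain ⟨i, h1, h2⟩ := (pilex_lt_def _ _).1 h
        simp only [ofLex_toLex] at h1 h2
        exact (pilex_lt_def a b).2 ⟨i, fun j hj => φ.injective (h1 j hj), φ.lt_iff_lt.1 h2⟩
      · intro h
        obtain ⟨i, h1, h2⟩ := (pilex_lt_def a b).1 h
        refine (pilex_lt_def _ _).2 ⟨i, fun j hj => ?_, ?_⟩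
        · simpa using congrArg φ (h1 j hj)
        · simpa using φ.lt_iff_lt.2 h2)

/-- The subset of a lexicographic power consisting of points all of whose coordinates
lie in `A`, as a lexicographic power of `A`. -/
noncomputable def lexSubIso {m : ℕ} {C : Type*} [LinearOrder C] (A : Set C) :
    ↥{x : Lex (Fin m → C) | ∀ j, ofLex x j ∈ A} ≃o Lex (Fin m → ↥A) :=
  orderIsoOfLtIff (X := ↥{x : Lex (Fin m → C) | ∀ j, ofLex x j ∈ A}) (Y := Lex (Fin m → ↥A))
    { toFun := fun x => toLex fun j => (⟨ofLex x.1 j, x.2 j⟩ : ↥A)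
      invFun := fun y => ⟨toLex fun j => (ofLex y j : C), fun j => (ofLex y j).2⟩
      left_inv := fun x => rfl
      right_inv := fun y => rfl }
    (by
      intro a b
      show (toLex fun j => (⟨ofLex a.1 j, a.2 j⟩ : ↥A)) < (toLex fun j => (⟨ofLex b.1 j, b.2 j⟩ : ↥A)) ↔ a < b
      constructor
      · intro h
        obtain ⟨i, h1, h2⟩ := (pilex_lt_def _ _).1 h
        simp only [ofLex_toLex] at h1 h2
        refine Subtype.coe_lt_coe.1 ((pilex_lt_def _ _).2 ⟨i, fun j hj => ?_, ?_⟩)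
        · exact congrArg Subtype.val (h1 j hj)
        · exact h2
      · intro h
        obtain ⟨i, h1, h2⟩ := (pilex_lt_def _ _).1 (Subtype.coe_lt_coe.2 h)
        refine (pilex_lt_def _ _).2 ⟨i, fun j hj => ?_, ?_⟩
        · simp only [ofLex_toLex]
          exact Subtype.ext (h1 j hj)
        · simp only [ofLex_toLex]
          exact h2)

/-- Splitting off the (most significant) head coordinate of a lexicographic power. -/
noncomputable def lexFinSuccIso {m : ℕ} {C : Type*} [LinearOrder C] :
    Lex (Fin (m + 1) → C) ≃o (C ×ₗ Lex (Fin m → C)) :=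
  orderIsoOfLtIff (X := Lex (Fin (m + 1) → C)) (Y := C ×ₗ Lex (Fin m → C))
    { toFun := fun x => toLex (ofLex x 0, toLex fun j => ofLex x j.succ)
      invFun := fun p => toLex (Fin.cons (ofLex p).1 (ofLex (ofLex p).2))
      left_inv := fun x => by
        apply congrArg toLex
        funext j
        refine Fin.cases ?_ ?_ j <;> simp
      right_inv := fun p => by
        apply congrArg toLex
        exact Prod.ext rfl rfl }
    (by
      intro a b
      show (toLex (ofLex a 0, toLex fun j : Fin m => ofLex a j.succ) : C ×ₗ Lex (Fin m → C)) < toLex (ofLex b 0, toLex fun j : Fin m => ofLex b j.succ) ↔ a < b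
      constructor
      · intro h
        rcases Prod.Lex.lt_iff.1 h with h' | ⟨heq, h'⟩
        · simp only [ofLex_toLex] at h'
          exact (pilex_lt_def a b).2 ⟨0, fun j hj => absurd hj (by simp [Fin.lt_def]), h'⟩
        · simp only [ofLex_toLex] at h' heq
          obtain ⟨i, h1, h2⟩ := (pilex_lt_def _ _).1 h'
          simp only [ofLex_toLex] at h1 h2
          refine (pilex_lt_def a b).2 ⟨i.succ, fun j hj => ?_, h2⟩
          rcases Fin.eq_zero_or_eq_succ j with rfl | ⟨j', rfl⟩
          · exact heq
          · exact h1 j' (by simpa [Fin.succ_lt_succ_iff] using hj)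
      · intro h
        obtain ⟨i, h1, h2⟩ := (pilex_lt_def a b).1 h
        refine Prod.Lex.lt_iff.2 ?_
        simp only [ofLex_toLex]
        rcases Fin.eq_zero_or_eq_succ i with rfl | ⟨i', rfl⟩
        · exact Or.inl h2
        · refine Or.inr ⟨h1 0 (Fin.succ_pos i'), (pilex_lt_def _ _).2 ⟨i', fun j hj => ?_, ?_⟩⟩
          · simp only [ofLex_toLex]
            exact h1 j.succ (by simpa [Fin.succ_lt_succ_iff] using hj)
          · simp only [ofLex_toLex]
            exact h2)

/-- A chain is isomorphic to its one-fold lexicographic power. -/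
noncomputable def lexOneIso {C : Type*} [LinearOrder C] : C ≃o Lex (Fin 1 → C) :=
  orderIsoOfLtIff (X := C) (Y := Lex (Fin 1 → C))
    { toFun := fun c => toLex fun _ => c
      invFun := fun x => ofLex x 0
      left_inv := fun c => rfl
      right_inv := fun x => by
        apply congrArg toLex
        funext j
        rw [Subsingleton.elim j 0]
        rfl }
    (by
      intro a b
      constructor
      · intro h
        obtain ⟨i, _, h2⟩ := (pilex_lt_def _ _).1 h
        simpa using h2
      · intro h
        exact (pilex_lt_def _ _).2 ⟨0, fun j hj => absurd hj (by simp [Fin.lt_def]), by simpa using h⟩)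

lemma lex_lt_def {X Y : Type*} [LT X] [LT Y] (p q : X ×ₗ Y) :
    p < q ↔ (ofLex p).1 < (ofLex q).1 ∨ (ofLex p).1 = (ofLex q).1 ∧ (ofLex p).2 < (ofLex q).2 :=
  Prod.Lex.lt_iff

/-- Congruence for binary lexicographic products. -/
def prodLexCongr {X X' Y Y' : Type*} [LinearOrder X] [LinearOrder X'] [LinearOrder Y]
    [LinearOrder Y'] (φ : X ≃o X') (ψ : Y ≃o Y') : (X ×ₗ Y) ≃o (X' ×ₗ Y') :=
  orderIsoOfLtIff (X := X ×ₗ Y) (Y := X' ×ₗ Y')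
    { toFun := fun p => toLex (φ (ofLex p).1, ψ (ofLex p).2)
      invFun := fun p => toLex (φ.symm (ofLex p).1, ψ.symm (ofLex p).2)
      left_inv := fun p => by simp
      right_inv := fun p => by simp }
    (by
      intro a b
      simp only [Equiv.coe_fn_mk]
      constructor
      · intro h
        rcases (lex_lt_def _ _).1 h with h' | ⟨h1, h2⟩
        · simp only [ofLex_toLex] at h'
          exact (lex_lt_def a b).2 (Or.inl (φ.lt_iff_lt.1 h'))
        · simp only [ofLex_toLex] at h1 h2
          exact (lex_lt_def a b).2 (Or.inr ⟨φ.injective h1, ψ.lt_iff_lt.1 h2⟩)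
      · intro h
        rcases (lex_lt_def a b).1 h with h' | ⟨h1, h2⟩
        · refine (lex_lt_def _ _).2 (Or.inl ?_)
          simp only [ofLex_toLex]
          exact φ.lt_iff_lt.2 h'
        · refine (lex_lt_def _ _).2 (Or.inr ⟨?_, ?_⟩)
          · simp only [ofLex_toLex]
            exact congrArg φ h1
          · simp only [ofLex_toLex]
            exact ψ.lt_iff_lt.2 h2)

/-- `Iio (a * b)` is the lexicographic product of `Iio b` (significant) and `Iio a`. -/
noncomputable def iioMulIso (a b : Ordinal.{u}) :
    ↥(Iio (a * b)) ≃o (↥(Iio b) ×ₗ ↥(Iio a)) := by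
  letI i1 : IsWellOrder (a*b).ToType (· < ·) := isWellOrder_lt
  letI i2 : IsWellOrder a.ToType (· < ·) := isWellOrder_lt
  letI i3 : IsWellOrder b.ToType (· < ·) := isWellOrder_lt
  letI i4 : IsWellOrder (b.ToType × a.ToType) (Prod.Lex (· < ·) (· < ·)) := inferInstance
  have h : @Ordinal.type _ ((· < ·) : (a*b).ToType → _ → Prop) i1
      = @Ordinal.type _ (Prod.Lex ((· < ·) : b.ToType → _ → Prop)
          ((· < ·) : a.ToType → _ → Prop)) i4 := by
    rw [Ordinal.type_prod_lex]
    rw [Ordinal.type_toType, Ordinal.type_toType, Ordinal.type_toType]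
  let f := Classical.choice (Ordinal.type_eq.1 h)
  have g : (a * b).ToType ≃o (b.ToType ×ₗ a.ToType) :=
    OrderIso.ofRelIsoLT (f.trans (RelIso.mk (toLex : (b.ToType × a.ToType) ≃ _)
      (fun {p q} => Iff.rfl)))
  exact ((Ordinal.ToType.mk (o := a*b)).trans g).trans
    (prodLexCongr (Ordinal.ToType.mk (o := b)).symm (Ordinal.ToType.mk (o := a)).symm)

/-- `Iio (α ^ (m+1))` is order isomorphic to the lexicographic power of `Iio α`. -/
noncomputable def iioPowIso (α : Ordinal.{u}) : (m : ℕ) →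
    ↥(Iio (α ^ (m + 1))) ≃o Lex (Fin (m + 1) → ↥(Iio α))
  | 0 =>
    (OrderIso.setCongr (Iio (α ^ (0 + 1))) (Iio α) (by rw [zero_add, pow_one])).trans lexOneIso
  | (m + 1) =>
    ((OrderIso.setCongr (Iio (α ^ (m + 1 + 1))) (Iio (α ^ (m + 1) * α)) (by rw [pow_succ])).trans
      ((iioMulIso (α ^ (m + 1)) α).trans
        (prodLexCongr (OrderIso.refl _) (iioPowIso α m)))).trans lexFinSuccIso.symm

/-- Finite chains have all big Ramsey degrees bounded by the number of embeddings. -/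
lemma brdLE_of_finite (C : Type*) [LinearOrder C] [Finite C] (n : ℕ) :
    brdLE C n (Nat.card (Fin n ↪o C)) := by
  intro k hk χ
  refine ⟨Set.univ, ⟨OrderIso.Set.univ⟩, ?_⟩
  haveI : Finite (Fin n ↪o C) :=
    Finite.of_injective (fun f => (f : Fin n → C)) DFunLike.coe_injective
  calc (χ '' {f : Fin n ↪o C | ∀ i, f i ∈ Set.univ}).ncard
      ≤ ({f : Fin n ↪o C | ∀ i, f i ∈ Set.univ}).ncard := Set.ncard_image_le (Set.toFinite _)
    _ ≤ (Set.univ : Set (Fin n ↪o C)).ncard :=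
        Set.ncard_le_ncard (Set.subset_univ _) (Set.toFinite _)
    _ = Nat.card (Fin n ↪o C) := Set.ncard_univ _

/-- Big Ramsey degree bounds transfer along order isomorphisms. -/
lemma brdLE_congr {C D : Type*} [LinearOrder C] [LinearOrder D] (ψ : C ≃o D) {n t : ℕ}
    (h : brdLE C n t) : brdLE D n t := by
  intro k hk χ
  obtain ⟨U, ⟨θ⟩, hU⟩ := h k hk (fun e => χ (e.trans ψ.toOrderEmbedding))
  have imgIso : ↥U ≃o ↥(ψ '' U) :=
    { toFun := fun x => ⟨ψ x, ⟨(x : C), x.2, rfl⟩⟩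
      invFun := fun y => ⟨ψ.symm y, by
        obtain ⟨x, hx, hxy⟩ := y.2
        rw [← hxy]
        simpa using hx⟩
      left_inv := fun x => by
        apply Subtype.ext
        simp
      right_inv := fun y => by
        apply Subtype.ext
        simp
      map_rel_iff' := by
        intro x y
        exact ψ.le_iff_le }
  refine ⟨ψ '' U, ⟨(imgIso.symm.trans θ).trans ψ⟩, ?_⟩
  refine le_trans (Set.ncard_le_ncard ?_ (Set.toFinite _)) hU
  rintro c ⟨f, hf, rfl⟩
  refine ⟨f.trans ψ.symm.toOrderEmbedding, fun i => ?_, ?_⟩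
  · obtain ⟨x, hx, hxy⟩ := hf i
    have : (f.trans ψ.symm.toOrderEmbedding) i = ψ.symm (f i) := rfl
    rw [this, ← hxy]
    simpa using hx
  · show χ ((f.trans ψ.symm.toOrderEmbedding).trans ψ.toOrderEmbedding) = χ f
    have h5 : (f.trans ψ.symm.toOrderEmbedding).trans ψ.toOrderEmbedding = f :=
      DFunLike.ext _ _ fun x => by
        show ψ (ψ.symm (f x)) = f x
        simp
    rw [h5]

/-- The key combinatorial lemma: lexicographic powers preserve finiteness of
big Ramsey degrees. -/
lemma finiteBRD_lexPow {C : Type*} [LinearOrder C] (hfin : finiteBRD C) (m : ℕ) :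
    finiteBRD (Lex (Fin m → C)) := by
  classical
  intro n hn
  rcases eq_or_ne m 0 with rfl | hm0
  · haveI : Finite (Lex (Fin 0 → C)) := Finite.of_equiv (Fin 0 → C) toLex
    exact ⟨_, brdLE_of_finite _ n⟩
  by_cases hC : Finite C
  · haveI : Finite (Fin m → C) := inferInstance
    haveI : Finite (Lex (Fin m → C)) := Finite.of_equiv (Fin m → C) toLex
    exact ⟨_, brdLE_of_finite _ n⟩
  haveI : Infinite C := not_finite_iff_infinite.mp hC
  have hm : 1 ≤ m := Nat.one_le_iff_ne_zero.2 hm0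
  set N := n * m with hNdef
  have hN1 : 1 ≤ N := Nat.mul_pos hn hm
  obtain ⟨tN, htN⟩ := hfin N hN1
  refine ⟨tN * Fintype.card (Fin n → Fin m → Fin N), ?_⟩
  intro k hk χ
  haveI : NeZero N := ⟨by omega⟩
  let recon : (Fin n → Fin m → Fin N) → (Fin N ↪o C) → Fin n → Lex (Fin m → C) :=
    fun p e i => toLex fun j => e (p i j)
  let χs : (Fin N ↪o C) → (Fin n → Fin m → Fin N) → Fin k := fun e p =>
    if h : StrictMono (recon p e) then χ (OrderEmbedding.ofStrictMono _ h) else ⟨0, by omega⟩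
  let enc : ((Fin n → Fin m → Fin N) → Fin k) ≃
      Fin (k ^ Fintype.card (Fin n → Fin m → Fin N)) :=
    Fintype.equivFinOfCardEq (by simp [Fintype.card_fun])
  have hk2 : 2 ≤ k ^ Fintype.card (Fin n → Fin m → Fin N) :=
    le_trans hk (Nat.le_self_pow Fintype.card_ne_zero k)
  obtain ⟨A, ⟨φA⟩, hA⟩ := htN _ hk2 (fun e => enc (χs e))
  refine ⟨{x : Lex (Fin m → C) | ∀ j, ofLex x j ∈ A},
    ⟨by exact (lexSubIso A).trans (lexPiCongr φA)⟩, ?_⟩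
  haveI : Infinite ↥A := φA.toEquiv.infinite_iff.2 inferInstance
  have hAinf : A.Infinite := Set.infinite_coe_iff.1 inferInstance
  set T : Set ((Fin n → Fin m → Fin N) → Fin k) :=
    χs '' {e : Fin N ↪o C | ∀ i, e i ∈ A} with hTdef
  have hTcard : T.ncard ≤ tN := by
    have himg : T = enc.symm '' ((fun e => enc (χs e)) '' {e : Fin N ↪o C | ∀ i, e i ∈ A}) := by
      rw [← Set.image_comp]
      simp [Function.comp, hTdef]
    rw [himg, Set.ncard_image_of_injective _ enc.symm.injective]
    exact hA
  have hsub : χ '' {f : Fin n ↪o Lex (Fin m → C) |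
      ∀ i, f i ∈ {x : Lex (Fin m → C) | ∀ j, ofLex x j ∈ A}}
      ⊆ (fun q : (((Fin n → Fin m → Fin N) → Fin k) × (Fin n → Fin m → Fin N)) => q.1 q.2) ''
        (T ×ˢ (Set.univ : Set (Fin n → Fin m → Fin N))) := by
    rintro c ⟨g, hg, rfl⟩
    have hSsub : (fun q : Fin n × Fin m => ofLex (g q.1) q.2) '' Set.univ ⊆ A := by
      rintro x ⟨⟨i, j⟩, -, rfl⟩
      exact hg i j
    have hSfin : ((fun q : Fin n × Fin m => ofLex (g q.1) q.2) '' Set.univ).Finite :=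
      Set.finite_univ.image _
    have hScard : ((fun q : Fin n × Fin m => ofLex (g q.1) q.2) '' Set.univ).ncard ≤ N := by
      refine le_trans (Set.ncard_image_le Set.finite_univ) ?_
      rw [Set.ncard_univ]
      simp [Nat.card_eq_fintype_card, hNdef]
    obtain ⟨S', hSS', hS'A, hS'card⟩ := hAinf.exists_superset_ncard_eq hSsub hSfin hScard
    have hS'fin : S'.Finite := Set.finite_of_ncard_ne_zero (by omega)
    have hFcard : hS'fin.toFinset.card = N := by
      rw [← Set.ncard_eq_toFinset_card _ hS'fin]
      exact hS'card
    set ι := hS'fin.toFinset.orderIsoOfFin hFcard with hιdef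
    let e : Fin N ↪o C := ι.toOrderEmbedding.trans (OrderEmbedding.subtype _)
    have heA : ∀ i, e i ∈ A := by
      intro i
      apply hS'A
      exact hS'fin.mem_toFinset.1 (ι i).2
    have hgF : ∀ i j, ofLex (g i) j ∈ hS'fin.toFinset := by
      intro i j
      rw [Set.Finite.mem_toFinset]
      exact hSS' ⟨(i, j), Set.mem_univ _, rfl⟩
    let p : Fin n → Fin m → Fin N := fun i j => ι.symm ⟨ofLex (g i) j, hgF i j⟩
    have hep : ∀ i j, e (p i j) = ofLex (g i) j := by
      intro i j
      show ((ι (ι.symm ⟨ofLex (g i) j, hgF i j⟩)) : C) = _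
      rw [OrderIso.apply_symm_apply]
    have hrecon : recon p e = fun i => g i := by
      funext i
      show toLex (fun j => e (p i j)) = g i
      have h3 : (fun j => e (p i j)) = ofLex (g i) := funext fun j => hep i j
      rw [h3]
      rfl
    have hsm : StrictMono (recon p e) := by
      rw [hrecon]
      exact fun x y hxy => g.strictMono hxy
    refine ⟨(χs e, p), ⟨⟨e, heA, rfl⟩, Set.mem_univ _⟩, ?_⟩
    show χs e p = χ g
    have h4 : χs e p = χ (OrderEmbedding.ofStrictMono _ hsm) := dif_pos hsm
    rw [h4]
    congr 1
    refine DFunLike.ext _ _ fun i => ?_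
    show recon p e i = g i
    rw [hrecon]
  refine le_trans (Set.ncard_le_ncard hsub (Set.toFinite _)) ?_
  refine le_trans (Set.ncard_image_le (Set.toFinite _)) ?_
  have hprod : (T ×ˢ (Set.univ : Set (Fin n → Fin m → Fin N))).ncard
      = T.ncard * Fintype.card (Fin n → Fin m → Fin N) := by
    rw [← Nat.card_coe_set_eq, Nat.card_congr (Equiv.Set.prod _ _), Nat.card_prod,
      Nat.card_coe_set_eq, Nat.card_coe_set_eq, Set.ncard_univ, Nat.card_eq_fintype_card]
  rw [hprod]
  exact Nat.mul_le_mul_right _ hTcard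

end Aux

/-- If a countable ordinal `α` has finite big Ramsey degrees then so does `α ^ m`
for every integer `m ≥ 1`. -/
theorem stmt14 (α : Ordinal) (hcnt : α.card ≤ Cardinal.aleph0)
    (hfin : finiteBRD ↥(Set.Iio α)) (m : ℕ) (hm : 1 ≤ m) :
    finiteBRD ↥(Set.Iio (α ^ m)) := by
  obtain ⟨m', rfl⟩ : ∃ m', m = m' + 1 := ⟨m - 1, by omega⟩
  have main : finiteBRD (Lex (Fin (m' + 1) → ↥(Set.Iio α))) := finiteBRD_lexPow hfin (m' + 1)
  intro n hn
  obtain ⟨t, ht⟩ := main n hn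
  exact ⟨t, brdLE_congr (iioPowIso α m').symm ht⟩
end

section
/- Let α₀ ≥ α₁ ≥ … ≥ α_{n−1} be ordinals such that for each i < n − 1, every remainder of αᵢ is order-isomorphic to αᵢ. Then every order-embedding of α₀ + α₁ + … + α_{n−1} into itself is the sum of order-embeddings fᵢ : αᵢ ↪ αᵢ; that is, Emb(Σᵢ αᵢ, Σᵢ αᵢ) = Σᵢ Emb(αᵢ, αᵢ). -/
open Ordinal Set

universe v

private instance sigmaLexWFLT {n : ℕ} {β : Fin n → Type*} [∀ i, LT (β i)]
    [∀ i, WellFoundedLT (β i)] : WellFoundedLT (Σₗ i, β i) := by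
  constructor
  have h : WellFounded (PSigma.Lex ((· < ·) : Fin n → Fin n → Prop)
      (fun i => ((· < ·) : β i → β i → Prop))) :=
    WellFounded.psigma_lex wellFounded_lt (fun _ => IsWellFounded.wf)
  refine Subrelation.wf ?_ (InvImage.wf
    (fun p : Σₗ i, β i => (⟨(ofLex p).1, (ofLex p).2⟩ : Σ' i, β i)) h)
  rintro ⟨ia, xa⟩ ⟨ib, xb⟩ hab
  rcases hab with ⟨_, _, hij⟩ | ⟨_, _, hxy⟩
  · exact PSigma.Lex.left _ _ hij
  · exact PSigma.Lex.right _ hxy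

set_option linter.deprecated false in
private theorem typeIio (o : Ordinal.{v}) :
    Ordinal.type ((· < ·) : ↥(Set.Iio o) → ↥(Set.Iio o) → Prop) = Ordinal.lift.{v+1} o :=
  Ordinal.type_lt_Iio o

private theorem ordArith {A t : Ordinal} {n : ℕ} (hA : 0 < A) (h1 : A + t ≤ t)
    (h3 : t ≤ A * n) : False := by
  have h1' : A + t = t := le_antisymm h1 le_add_self
  have ht : ∀ k : ℕ, A * k + t = t := by
    intro k
    induction k with
    | zero => simp
    | succ k ih =>
      have hc : (((k + 1 : ℕ) : Ordinal)) = (k : Ordinal) + 1 := Nat.cast_succ k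
      rw [hc, mul_add, mul_one, add_assoc, h1', ih]
  have hle : A * ((n + 1 : ℕ) : Ordinal) ≤ A * n := by
    calc A * ((n + 1 : ℕ) : Ordinal) ≤ A * ((n + 1 : ℕ) : Ordinal) + t :=
          le_self_add
      _ = t := ht (n + 1)
      _ ≤ A * n := h3
  have hlt : A * (n : Ordinal) < A * ((n + 1 : ℕ) : Ordinal) := by
    rw [mul_lt_mul_iff_right₀ hA]
    exact_mod_cast Nat.lt_succ_self n
  exact absurd hle hlt.not_ge

private theorem val_lt_of_rec_lt {n : ℕ} {α : Fin n → Ordinal} {s s' : Σ i : Fin n, ↥(Set.Iio (α i))}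
    (h : s.1 = s'.1) (h2 : h.rec s.2 < s'.2) : ((s.2 : Ordinal)) < ((s'.2 : Ordinal)) := by
  obtain ⟨k, z⟩ := s
  obtain ⟨k', z'⟩ := s'
  dsimp only at h h2 ⊢
  subst h
  exact_mod_cast h2

/-- Emb(Σᵢ αᵢ, Σᵢ αᵢ) = Σᵢ Emb(αᵢ, αᵢ): if `α₀ ≥ α₁ ≥ … ≥ α_{n-1}` are ordinals such that
for each `i < n - 1` every remainder of `αᵢ` is order-isomorphic to `αᵢ`, then every
order-embedding of the lexicographic sum `Σᵢ αᵢ` into itself preserves the summands,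
i.e. it is a sum of self-embeddings `gᵢ : αᵢ ↪o αᵢ`. -/
theorem stmt15 (n : ℕ) (α : Fin n → Ordinal)
    (hmono : ∀ i j : Fin n, i ≤ j → α j ≤ α i)
    (hrem : ∀ i : Fin n, (i : ℕ) < n - 1 → ∀ ξ : Ordinal, ξ < α i → α i - ξ = α i)
    (w : (Σₗ i : Fin n, ↥(Set.Iio (α i))) ↪o (Σₗ i : Fin n, ↥(Set.Iio (α i)))) :
    ∃ g : ∀ i : Fin n, ↥(Set.Iio (α i)) ↪o ↥(Set.Iio (α i)),
      ∀ (i : Fin n) (x : ↥(Set.Iio (α i))), w (toLex ⟨i, x⟩) = toLex ⟨i, g i x⟩ := by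
  classical
  have fst_le : ∀ s s' : (Σₗ i : Fin n, ↥(Set.Iio (α i))), s ≤ s' → s.1 ≤ s'.1 := by
    intro s s' hss
    rw [Sigma.Lex.le_def] at hss
    rcases hss with h | ⟨h, -⟩
    · exact h.le
    · exact h.le
  -- key claim: w preserves the first coordinate
  have key : ∀ (i : Fin n) (x : ↥(Set.Iio (α i))), (w (toLex ⟨i, x⟩)).1 = i := by
    intro i x
    have hle : toLex ⟨i, x⟩ ≤ w (toLex ⟨i, x⟩) := w.strictMono.le_apply
    rw [Sigma.Lex.le_def] at hle
    rcases hle with hlt | ⟨h, _⟩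
    swap
    · exact h.symm
    exfalso
    set q : Σₗ i : Fin n, ↥(Set.Iio (α i)) := w (toLex ⟨i, x⟩) with hq
    have hij : i < q.1 := hlt
    have hin : (i : ℕ) < n - 1 := by
      have h1 : (i : ℕ) < (q.1 : ℕ) := hij
      have h2 : (q.1 : ℕ) < n := q.1.isLt
      omega
    have ha0 : 0 < α i := lt_of_le_of_lt zero_le x.2
    have hx : ∀ ξ : Ordinal, ξ < α i → (x : Ordinal) + ξ < α i := fun ξ hξ =>
      Ordinal.lt_sub.1 (by rw [hrem i hin (x : Ordinal) x.2]; exact hξ)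
    -- any element of the i-th block is below q
    have hltq : ∀ z : ↥(Set.Iio (α i)), toLex ⟨i, z⟩ < q := fun z => by
      rw [Sigma.Lex.lt_def]; exact Or.inl hij
    -- E1 : final segment at ⟨i,x⟩ embeds into final segment at q, via w
    let E1 : ↥(Set.Ici (toLex (⟨i, x⟩ : Σ i : Fin n, ↥(Set.Iio (α i))))) ↪o ↥(Set.Ici q) :=
      OrderEmbedding.ofStrictMono
        (fun p => ⟨w p.1, w.monotone p.2⟩)
        (fun p p' hpp => Subtype.mk_lt_mk.2 (w.strictMono hpp))
    -- E2 : (Iio (α i)) ⊕ (final segment at q) embeds into final segment at ⟨i,x⟩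
    let f2 : ↥(Set.Iio (α i)) ⊕ ↥(Set.Ici q) →
        ↥(Set.Ici (toLex (⟨i, x⟩ : Σ i : Fin n, ↥(Set.Iio (α i))))) :=
      Sum.elim
        (fun ξ => ⟨toLex ⟨i, ⟨(x : Ordinal) + (ξ : Ordinal), hx _ ξ.2⟩⟩, by
          rw [Set.mem_Ici, Sigma.Lex.le_def]
          exact Or.inr ⟨rfl, Subtype.coe_le_coe.1 (le_self_add)⟩⟩)
        (fun p => ⟨p.1, le_trans (hltq x).le p.2⟩)
    have hf2 : ∀ u u', Sum.Lex ((· < ·) : ↥(Set.Iio (α i)) → _ → Prop)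
        ((· < ·) : ↥(Set.Ici q) → _ → Prop) u u' → f2 u < f2 u' := by
      rintro (ξ | p) (ξ' | p') h
      · have hξ : ξ < ξ' := Sum.lex_inl_inl.1 h
        refine Subtype.mk_lt_mk.2 ?_
        rw [Sigma.Lex.lt_def]
        refine Or.inr ⟨rfl, Subtype.coe_lt_coe.1 ?_⟩
        exact add_lt_add_right (show (ξ : Ordinal) < (ξ' : Ordinal) from hξ) _
      · exact Subtype.mk_lt_mk.2 ((hltq _).trans_le p'.2)
      · exact absurd h (Sum.lex_inr_inl)
      · have hp : p < p' := Sum.lex_inr_inr.1 h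
        exact Subtype.mk_lt_mk.2 hp
    let E2 := RelEmbedding.ofMonotone f2 hf2
    -- E3 : final segment at q embeds into Iio (α i * n)
    have hblk : ∀ p : ↥(Set.Ici q), i ≤ (p.1.1 : Fin n) :=
      fun p => (hij.trans_le (fst_le q p.1 p.2)).le
    have hE3mem : ∀ p : ↥(Set.Ici q),
        α i * ((p.1.1 : ℕ) : Ordinal) + ((p.1.2 : Ordinal)) < α i * (n : Ordinal) := by
      intro p
      have hk : ((p.1.1 : ℕ) : Ordinal) + 1 ≤ (n : Ordinal) := by
        exact_mod_cast Nat.succ_le_of_lt p.1.1.isLt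
      have hz : ((p.1.2 : Ordinal)) < α i := lt_of_lt_of_le p.1.2.2 (hmono i p.1.1 (hblk p))
      calc α i * ((p.1.1 : ℕ) : Ordinal) + ((p.1.2 : Ordinal))
          < α i * ((p.1.1 : ℕ) : Ordinal) + α i := add_lt_add_right hz _
        _ = α i * (((p.1.1 : ℕ) : Ordinal) + 1) := by rw [mul_add, mul_one]
        _ ≤ α i * (n : Ordinal) := mul_le_mul_right hk _
    let E3 : ↥(Set.Ici q) ↪o ↥(Set.Iio (α i * (n : Ordinal))) :=
      OrderEmbedding.ofStrictMono
        (fun p => ⟨α i * ((p.1.1 : ℕ) : Ordinal) + ((p.1.2 : Ordinal)), hE3mem p⟩)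
        (by
          intro p p' hlt'
          have hlt2 : (p.1 : Σₗ i : Fin n, ↥(Set.Iio (α i))) < p'.1 := hlt'
          rw [Sigma.Lex.lt_def] at hlt2
          refine Subtype.mk_lt_mk.2 ?_
          rcases hlt2 with hkk | ⟨hkk, hzz⟩
          · have hz : ((p.1.2 : Ordinal)) < α i :=
              lt_of_lt_of_le p.1.2.2 (hmono i p.1.1 (hblk p))
            have h1 : α i * ((p.1.1 : ℕ) : Ordinal) + (p.1.2 : Ordinal)
                < α i * (((p.1.1 : ℕ) : Ordinal) + 1) := by
              rw [mul_add, mul_one]; exact add_lt_add_right hz _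
            have h2 : α i * (((p.1.1 : ℕ) : Ordinal) + 1) ≤ α i * ((p'.1.1 : ℕ) : Ordinal) :=
              mul_le_mul_right (by exact_mod_cast Nat.succ_le_of_lt hkk) _
            exact lt_of_lt_of_le h1 (h2.trans (le_self_add))
          · have hkk' : ((p.1.1 : ℕ) : Ordinal) = ((p'.1.1 : ℕ) : Ordinal) := by
              exact_mod_cast congrArg Fin.val hkk
            rw [hkk']
            exact add_lt_add_right (val_lt_of_rec_lt hkk hzz) _)
    -- now take ordinal types
    have h2 : Ordinal.type
        ((· < ·) : ↥(Set.Ici (toLex (⟨i, x⟩ : Σ i : Fin n, ↥(Set.Iio (α i))))) → _ → Prop)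
        ≤ Ordinal.type ((· < ·) : ↥(Set.Ici q) → _ → Prop) :=
      Ordinal.type_le_iff'.2 ⟨E1.ltEmbedding⟩
    have h1 : Ordinal.type ((· < ·) : ↥(Set.Iio (α i)) → _ → Prop)
        + Ordinal.type ((· < ·) : ↥(Set.Ici q) → _ → Prop)
        ≤ Ordinal.type
          ((· < ·) : ↥(Set.Ici (toLex (⟨i, x⟩ : Σ i : Fin n, ↥(Set.Iio (α i))))) → _ → Prop) := by
      rw [← Ordinal.type_sum_lex]
      exact Ordinal.type_le_iff'.2 ⟨E2⟩
    have h3 : Ordinal.type ((· < ·) : ↥(Set.Ici q) → _ → Prop)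
        ≤ Ordinal.type ((· < ·) : ↥(Set.Iio (α i)) → _ → Prop) * (n : Ordinal) := by
      have h4 := Ordinal.type_le_iff'.2 ⟨E3.ltEmbedding⟩
      rw [typeIio, Ordinal.lift_mul, Ordinal.lift_natCast, ← typeIio] at h4
      exact h4
    have hApos : 0 < Ordinal.type ((· < ·) : ↥(Set.Iio (α i)) → _ → Prop) := by
      rw [typeIio]
      simpa using Ordinal.lift_lt.2 ha0
    exact ordArith hApos (h1.trans h2) h3
  -- construct g
  have hmem : ∀ (i : Fin n) (x : ↥(Set.Iio (α i))),
      ((w (toLex ⟨i, x⟩)).2 : Ordinal) < α i := by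
    intro i x
    calc ((w (toLex ⟨i, x⟩)).2 : Ordinal) < α ((w (toLex ⟨i, x⟩)).1) := (w (toLex ⟨i, x⟩)).2.2
      _ = α i := by rw [key i x]
  have heq : ∀ (i : Fin n) (x : ↥(Set.Iio (α i))),
      w (toLex ⟨i, x⟩) = toLex ⟨i, ⟨((w (toLex ⟨i, x⟩)).2 : Ordinal), hmem i x⟩⟩ := by
    intro i x
    have hsig : ∀ (p : Σ i : Fin n, ↥(Set.Iio (α i))) (h : p.1 = i),
        p = ⟨i, ⟨(p.2 : Ordinal), h ▸ p.2.2⟩⟩ := by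
      rintro ⟨j, b⟩ h
      dsimp only at h ⊢
      subst h
      rfl
    exact hsig (w (toLex ⟨i, x⟩)) (key i x)
  refine ⟨fun i => OrderEmbedding.ofStrictMono
      (fun x => ⟨((w (toLex ⟨i, x⟩)).2 : Ordinal), hmem i x⟩) ?_, fun i x => heq i x⟩
  intro x x' hxx
  have hwlt : w (toLex ⟨i, x⟩) < w (toLex ⟨i, x'⟩) := by
    apply w.strictMono
    rw [Sigma.Lex.lt_def]
    exact Or.inr ⟨rfl, hxx⟩
  rw [heq i x, heq i x', Sigma.Lex.lt_def] at hwlt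
  rcases hwlt with h | ⟨h2, h⟩
  · exact absurd h (lt_irrefl i)
  · exact h
end
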